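/- arXiv:0809.4633 — 3 statements merged into one kernel-verified Lean document; each statement's English description precedes it below -/
import Mathlib

section
/- (Lemma 1: Strichartz norm controlled by the near-degeneracy factor.) There exists a constant C, depending only on d, such that for every integer N ≥ 1 and every finitely supported c : ℤ^d → ℂ with c_n = 0 whenever |n_j| > N for some j, one has ∫₀¹ ∫_{[0,1]^d} |u(t,x)|⁴ dx dt ≤ C · (sup_{ℓ∈ℝ} #A_ℓ) · (Σ_{n∈ℤ^d} |c_n|²)². -/
open MeasureTheory Complex Real

namespace StrichartzAux

variable {d : ℕ}

/-- real linear phase -/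
noncomputable def rs (n : Fin d → ℤ) (x : Fin d → ℝ) : ℝ := ∑ j, (n j : ℝ) * x j

/-- spatial character -/
noncomputable def ex (n : Fin d → ℤ) (x : Fin d → ℝ) : ℂ :=
  Complex.exp (2 * Real.pi * Complex.I * (rs n x : ℂ))

lemma ex_eq (n : Fin d → ℤ) (x : Fin d → ℝ) :
    ex n x = Complex.exp (2 * Real.pi * Complex.I * ∑ j, (n j : ℂ) * (x j : ℂ)) := by
  unfold ex rs
  congr 1
  push_cast
  ring

lemma ex_mul (n m : Fin d → ℤ) (x : Fin d → ℝ) : ex n x * ex m x = ex (n + m) x := by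
  unfold ex rs
  rw [← Complex.exp_add]
  congr 1
  have : (∑ j, ((n + m) j : ℝ) * x j) = (∑ j, (n j : ℝ) * x j) + ∑ j, (m j : ℝ) * x j := by
    rw [← Finset.sum_add_distrib]
    congr 1; funext j
    push_cast [Pi.add_apply]
    ring
  rw [this]
  push_cast
  ring

lemma ex_conj (n : Fin d → ℤ) (x : Fin d → ℝ) :
    (starRingEnd ℂ) (ex n x) = ex (-n) x := by
  unfold ex rs
  rw [← Complex.exp_conj]
  congr 1
  have : (∑ j, ((-n) j : ℝ) * x j) = -∑ j, (n j : ℝ) * x j := by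
    rw [← Finset.sum_neg_distrib]
    congr 1; funext j
    push_cast [Pi.neg_apply]
    ring
  rw [this]
  simp only [map_mul, Complex.conj_I, Complex.conj_ofReal, map_ofNat]
  push_cast
  ring

lemma integral_exp_Icc (k : ℤ) :
    (∫ s in Set.Icc (0:ℝ) 1, Complex.exp (2 * Real.pi * Complex.I * (((k:ℝ) * s : ℝ) : ℂ)))
      = if k = 0 then 1 else 0 := by
  rw [MeasureTheory.integral_Icc_eq_integral_Ioc,
    ← intervalIntegral.integral_of_le (zero_le_one)]
  by_cases hk : k = 0
  · simp [hk]
  · have hc : (2 * Real.pi * Complex.I * (k : ℂ)) ≠ 0 := by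
      apply mul_ne_zero
      apply mul_ne_zero
      · norm_num [Real.pi_ne_zero]
      · exact Complex.I_ne_zero
      · exact_mod_cast hk
    have : ∀ s : ℝ, Complex.exp (2 * Real.pi * Complex.I * (((k:ℝ) * s : ℝ) : ℂ))
        = Complex.exp ((2 * Real.pi * Complex.I * (k : ℂ)) * (s : ℂ)) := by
      intro s; congr 1; push_cast; ring
    simp_rw [this]
    rw [integral_exp_mul_complex hc]
    have h1 : (2 * Real.pi * Complex.I * (k:ℂ)) * ((1:ℝ):ℂ) = (k:ℂ) * (2 * Real.pi * Complex.I) := by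
      push_cast; ring
    have h0 : (2 * Real.pi * Complex.I * (k:ℂ)) * ((0:ℝ):ℂ) = 0 := by push_cast; ring
    rw [h1, h0, Complex.exp_int_mul_two_pi_mul_I, Complex.exp_zero]
    simp [hk]

lemma integral_ex (n : Fin d → ℤ) :
    (∫ x in Set.Icc (0 : Fin d → ℝ) 1, ex n x) = if n = 0 then 1 else 0 := by
  have hprod : ∀ x : Fin d → ℝ, ex n x
      = ∏ j, Complex.exp (2 * Real.pi * Complex.I * (((n j : ℝ) * x j : ℝ) : ℂ)) := by
    intro x
    unfold ex rs
    rw [← Complex.exp_sum]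
    congr 1
    push_cast
    rw [Finset.mul_sum]
  simp_rw [hprod]
  have hind : (∫ x in Set.Icc (0 : Fin d → ℝ) 1,
        ∏ j, Complex.exp (2 * Real.pi * Complex.I * (((n j : ℝ) * x j : ℝ) : ℂ)))
      = ∫ x : Fin d → ℝ, ∏ j, (Set.Icc (0:ℝ) 1).indicator
          (fun s => Complex.exp (2 * Real.pi * Complex.I * (((n j : ℝ) * s : ℝ) : ℂ))) (x j) := by
    rw [← MeasureTheory.integral_indicator measurableSet_Icc]
    congr 1
    funext x
    by_cases hx : x ∈ Set.Icc (0 : Fin d → ℝ) 1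
    · rw [Set.indicator_of_mem hx]
      have hxj : ∀ j, x j ∈ Set.Icc (0:ℝ) 1 := by
        intro j
        rcases hx with ⟨h0, h1⟩
        exact ⟨h0 j, h1 j⟩
      exact Finset.prod_congr rfl fun j _ => (Set.indicator_of_mem (hxj j)
        (fun s => Complex.exp (2 * Real.pi * Complex.I * (((n j : ℝ) * s : ℝ) : ℂ)))).symm
    · rw [Set.indicator_of_notMem hx]
      have : ∃ j, x j ∉ Set.Icc (0:ℝ) 1 := by
        by_contra h
        push_neg at h
        exact hx ⟨fun j => (h j).1, fun j => (h j).2⟩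
      rcases this with ⟨j, hj⟩
      exact (Finset.prod_eq_zero (Finset.mem_univ j) (Set.indicator_of_notMem hj _)).symm
  rw [hind, MeasureTheory.integral_fintype_prod_volume_eq_prod
    (f := fun j s => (Set.Icc (0:ℝ) 1).indicator
        (fun s => Complex.exp (2 * Real.pi * Complex.I * (((n j : ℝ) * s : ℝ) : ℂ))) s)]
  have : ∀ j, (∫ s : ℝ, (Set.Icc (0:ℝ) 1).indicator
      (fun s => Complex.exp (2 * Real.pi * Complex.I * (((n j : ℝ) * s : ℝ) : ℂ))) s)
      = if n j = 0 then 1 else 0 := by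
    intro j
    rw [MeasureTheory.integral_indicator measurableSet_Icc]
    exact integral_exp_Icc (n j)
  simp_rw [this]
  by_cases hn : n = 0
  · simp [hn]
  · have : ∃ j, n j ≠ 0 := by
      by_contra h
      push_neg at h
      exact hn (funext h)
    rcases this with ⟨j, hj⟩
    rw [if_neg hn]
    exact Finset.prod_eq_zero (Finset.mem_univ j) (by simp [hj])


lemma continuous_ex (n : Fin d → ℤ) : Continuous (ex n) := by
  apply Complex.continuous_exp.comp
  apply Continuous.mul continuous_const
  apply Continuous.comp Complex.continuous_ofReal
  unfold rs
  exact continuous_finset_sum _ fun j _ => continuous_const.mul (continuous_apply j)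

/-- the quadruple index set -/
def Q4 (D : Finset (Fin d → ℤ)) :
    Finset (((Fin d → ℤ) × (Fin d → ℤ)) × (Fin d → ℤ) × (Fin d → ℤ)) :=
  ((D ×ˢ D) ×ˢ (D ×ˢ D)).filter fun q => q.1.1 + q.1.2 = q.2.1 + q.2.2

lemma xquad (D : Finset (Fin d → ℤ)) (b : (Fin d → ℤ) → ℂ) :
    ((∫ x in Set.Icc (0 : Fin d → ℝ) 1, ‖∑ n ∈ D, b n * ex n x‖ ^ 4 : ℝ) : ℂ)
      = ∑ q ∈ Q4 D, b q.1.1 * b q.1.2 * (starRingEnd ℂ) (b q.2.1)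
          * (starRingEnd ℂ) (b q.2.2) := by
  set z : (Fin d → ℝ) → ℂ := fun x => ∑ n ∈ D, b n * ex n x with hz
  have hnorm : ∀ x : Fin d → ℝ, ((‖z x‖ ^ 4 : ℝ) : ℂ)
      = ∑ q ∈ (D ×ˢ D) ×ˢ (D ×ˢ D),
          b q.1.1 * b q.1.2 * (starRingEnd ℂ) (b q.2.1) * (starRingEnd ℂ) (b q.2.2)
            * ex (q.1.1 + q.1.2 - q.2.1 - q.2.2) x := by
    intro x
    have h1 : ((‖z x‖ ^ 4 : ℝ) : ℂ) = (z x * z x) * ((starRingEnd ℂ) (z x) * (starRingEnd ℂ) (z x)) := by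
      have : z x * (starRingEnd ℂ) (z x) = ((‖z x‖ ^ 2 : ℝ) : ℂ) := by
        rw [Complex.mul_conj, Complex.normSq_eq_norm_sq]
      have h2 : ((‖z x‖ ^ 4 : ℝ) : ℂ) = (z x * (starRingEnd ℂ) (z x)) ^ 2 := by
        rw [this]
        norm_cast
        ring
      rw [h2]; ring
    rw [h1]
    have hzz : z x * z x = ∑ p ∈ D ×ˢ D, b p.1 * b p.2 * ex (p.1 + p.2) x := by
      rw [hz, Finset.sum_mul_sum, ← Finset.sum_product']
      apply Finset.sum_congr rfl; intro p _
      rw [mul_mul_mul_comm, ex_mul]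
    have hcc : (starRingEnd ℂ) (z x) * (starRingEnd ℂ) (z x)
        = ∑ p ∈ D ×ˢ D, (starRingEnd ℂ) (b p.1) * (starRingEnd ℂ) (b p.2) * ex (-p.1 + -p.2) x := by
      rw [hz, map_sum, Finset.sum_mul_sum, ← Finset.sum_product']
      apply Finset.sum_congr rfl; intro p _
      rw [map_mul, map_mul, ex_conj, ex_conj, mul_mul_mul_comm, ex_mul]
    rw [hzz, hcc, Finset.sum_mul_sum, ← Finset.sum_product']
    apply Finset.sum_congr rfl; intro q _
    rw [mul_mul_mul_comm, ex_mul]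
    have : q.1.1 + q.1.2 + (-q.2.1 + -q.2.2) = q.1.1 + q.1.2 - q.2.1 - q.2.2 := by ring
    rw [this]
    ring
  calc ((∫ x in Set.Icc (0 : Fin d → ℝ) 1, ‖z x‖ ^ 4 : ℝ) : ℂ)
      = ∫ x in Set.Icc (0 : Fin d → ℝ) 1, ((‖z x‖ ^ 4 : ℝ) : ℂ) := by
        exact (integral_ofReal (𝕜 := ℂ)).symm
    _ = ∫ x in Set.Icc (0 : Fin d → ℝ) 1, ∑ q ∈ (D ×ˢ D) ×ˢ (D ×ˢ D),
          b q.1.1 * b q.1.2 * (starRingEnd ℂ) (b q.2.1) * (starRingEnd ℂ) (b q.2.2)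
            * ex (q.1.1 + q.1.2 - q.2.1 - q.2.2) x := by
        exact integral_congr_ae (Filter.Eventually.of_forall fun x => hnorm x)
    _ = ∑ q ∈ (D ×ˢ D) ×ˢ (D ×ˢ D),
          ∫ x in Set.Icc (0 : Fin d → ℝ) 1,
            b q.1.1 * b q.1.2 * (starRingEnd ℂ) (b q.2.1) * (starRingEnd ℂ) (b q.2.2)
              * ex (q.1.1 + q.1.2 - q.2.1 - q.2.2) x := by
        apply MeasureTheory.integral_finset_sum
        intro q _
        apply ContinuousOn.integrableOn_compact isCompact_Icc
        exact (continuous_const.mul (continuous_ex _)).continuousOn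
    _ = ∑ q ∈ (D ×ˢ D) ×ˢ (D ×ˢ D),
          b q.1.1 * b q.1.2 * (starRingEnd ℂ) (b q.2.1) * (starRingEnd ℂ) (b q.2.2)
            * (if q.1.1 + q.1.2 - q.2.1 - q.2.2 = 0 then (1:ℂ) else 0) := by
        apply Finset.sum_congr rfl; intro q _
        rw [MeasureTheory.integral_const_mul, integral_ex]
    _ = ∑ q ∈ Q4 D, b q.1.1 * b q.1.2 * (starRingEnd ℂ) (b q.2.1) * (starRingEnd ℂ) (b q.2.2) := by
        rw [Q4, Finset.sum_filter]
        apply Finset.sum_congr rfl; intro q _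
        by_cases h : q.1.1 + q.1.2 = q.2.1 + q.2.2
        · rw [if_pos h, if_pos (by rw [h]; ring), mul_one]
        · rw [if_neg h, if_neg (by intro hc; apply h; rwa [sub_sub, sub_eq_zero] at hc), mul_zero]


noncomputable def Tker (l : ℝ) : ℂ := ∫ t in (0:ℝ)..1, Complex.exp (-Complex.I * l * t)

lemma norm_exp_neg_I_mul (l t : ℝ) : ‖Complex.exp (-Complex.I * l * t)‖ = 1 := by
  rw [Complex.norm_exp]
  have : (-Complex.I * (l:ℂ) * (t:ℂ)).re = 0 := by
    simp [Complex.mul_re, Complex.mul_im]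
  rw [this, Real.exp_zero]

lemma norm_exp_neg_I_mul'' (l : ℝ) : ‖Complex.exp (-Complex.I * l)‖ = 1 := by
  rw [Complex.norm_exp]
  have : (-Complex.I * (l:ℂ)).re = 0 := by
    simp [Complex.mul_re, Complex.mul_im]
  rw [this, Real.exp_zero]

lemma Tker_norm_le_one (l : ℝ) : ‖Tker l‖ ≤ 1 := by
  calc ‖Tker l‖ ≤ 1 * |(1:ℝ) - 0| := intervalIntegral.norm_integral_le_of_norm_le_const
        (fun x _ => le_of_eq (norm_exp_neg_I_mul l x))
    _ = 1 := by norm_num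

lemma Tker_eq (l : ℝ) (hl : l ≠ 0) :
    Tker l = (Complex.exp (-Complex.I * l) - 1) / (-Complex.I * l) := by
  unfold Tker
  have hc : (-Complex.I * (l:ℂ)) ≠ 0 := by
    apply mul_ne_zero (neg_ne_zero.mpr Complex.I_ne_zero)
    exact_mod_cast hl
  rw [integral_exp_mul_complex hc]
  push_cast
  simp

lemma Tker_norm_le (l : ℝ) (hl : l ≠ 0) : ‖Tker l‖ ≤ 2 / |l| := by
  rw [Tker_eq l hl, norm_div]
  have hden : ‖-Complex.I * (l:ℂ)‖ = |l| := by simp [norm_mul]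
  rw [hden]
  apply (div_le_div_iff_of_pos_right (abs_pos.mpr hl)).mpr
  calc ‖Complex.exp (-Complex.I * l) - 1‖ ≤ ‖Complex.exp (-Complex.I * l)‖ + ‖(1:ℂ)‖ :=
        norm_sub_le _ _
    _ = 2 := by rw [norm_exp_neg_I_mul'']; norm_num


lemma sum_inv_sq_aux (M : ℕ) :
    ∑ r ∈ Finset.range (M+1), (1:ℝ)/(r+1)^2 ≤ 2 - 1/((M:ℝ)+1) := by
  induction M with
  | zero => norm_num
  | succ M ih =>
    rw [Finset.sum_range_succ]
    have hM : (0:ℝ) < (M:ℝ)+1 := by positivity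
    have hM2 : (0:ℝ) < (M:ℝ)+2 := by positivity
    have h1 : (1:ℝ)/(((M+1:ℕ):ℝ)+1)^2 ≤ 1/((M:ℝ)+1) - 1/((M:ℝ)+2) := by
      push_cast
      rw [div_sub_div _ _ (ne_of_gt hM) (ne_of_gt hM2), div_le_div_iff₀ (by positivity) (by positivity)]
      nlinarith
    have h2 : ((M:ℝ)+1)+1 = (M:ℝ)+2 := by ring
    push_cast at ih h1 ⊢
    rw [h2] at h1 ⊢
    linarith

lemma sum_inv_sq_le (M : ℕ) : ∑ r ∈ Finset.range M, (1:ℝ)/(r+1)^2 ≤ 2 := by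
  cases M with
  | zero => simp
  | succ M =>
    calc ∑ r ∈ Finset.range (M+1), (1:ℝ)/(r+1)^2 ≤ 2 - 1/((M:ℝ)+1) := sum_inv_sq_aux M
      _ ≤ 2 := by
          have : (0:ℝ) < (M:ℝ)+1 := by positivity
          have : 0 ≤ 1/((M:ℝ)+1) := by positivity
          linarith

/-- weight function for the Schur argument -/
noncomputable def wt (j k : ℤ) : ℝ := 1 / ((max 1 |j - k| : ℤ) : ℝ)^2

lemma wt_nonneg (j k : ℤ) : 0 ≤ wt j k := by
  unfold wt
  positivity

lemma wt_symm (j k : ℤ) : wt j k = wt k j := by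
  unfold wt
  rw [abs_sub_comm]

/-- sum of the weight over any finite set of integers is at most 6 -/
lemma sum_wt_le (V : Finset ℤ) (j : ℤ) : ∑ k ∈ V, wt j k ≤ 6 := by
  classical
  -- group by r = |j - k|
  have hfib : ∀ r ∈ V.image (fun k => (j - k).natAbs),
      ((V.filter (fun k => (j - k).natAbs = r)).card : ℝ) ≤ 2 := by
    intro r _
    have : V.filter (fun k => (j - k).natAbs = r) ⊆ {j - r, j + r} := by
      intro k hk
      rw [Finset.mem_filter] at hk
      have := hk.2
      have habs : j - k = r ∨ j - k = -r := by
        rcases Int.natAbs_eq (j - k) with h | h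
        · left; rw [h, this]
        · right; rw [← Int.natAbs_neg] at this
          omega
      rcases habs with h | h
      · apply Finset.mem_insert.mpr; left; omega
      · apply Finset.mem_insert.mpr; right; apply Finset.mem_singleton.mpr; omega
    calc ((V.filter (fun k => (j - k).natAbs = r)).card : ℝ)
        ≤ (({j - r, j + r} : Finset ℤ).card : ℝ) := by
          exact_mod_cast Finset.card_le_card this
      _ ≤ 2 := by
          have := Finset.card_insert_le (j - (r:ℤ)) ({j + r} : Finset ℤ)
          have h2 : (({j + (r:ℤ)} : Finset ℤ).card) = 1 := Finset.card_singleton _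
          exact_mod_cast le_trans this (by omega)
  -- wt depends only on natAbs
  have hwt : ∀ k : ℤ, wt j k = (1:ℝ) / ((max 1 (j - k).natAbs : ℕ) : ℝ)^2 := by
    intro k
    unfold wt
    have h : ((max 1 |j - k| : ℤ) : ℝ) = ((max 1 (j - k).natAbs : ℕ) : ℝ) := by
      rw [Int.abs_eq_natAbs]
      norm_cast
    rw [h]
  simp_rw [hwt]
  rw [Finset.sum_comp (fun r : ℕ => (1:ℝ) / ((max 1 r : ℕ) : ℝ)^2) (fun k => (j - k).natAbs)]
  set W := V.image (fun k => (j - k).natAbs) with hW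
  have hle : ∑ r ∈ W, ((V.filter (fun k => (j - k).natAbs = r)).card : ℝ) • ((1:ℝ) / ((max 1 r : ℕ) : ℝ)^2)
      ≤ ∑ r ∈ W, 2 * ((1:ℝ) / ((max 1 r : ℕ) : ℝ)^2) := by
    apply Finset.sum_le_sum
    intro r hr
    rw [smul_eq_mul]
    apply mul_le_mul_of_nonneg_right (hfib r hr) (by positivity)
  have hcast : ∀ r ∈ W, ((V.filter (fun k => (j - k).natAbs = r)).card : ℝ) • ((1:ℝ) / ((max 1 r : ℕ) : ℝ)^2)
      = (V.filter (fun k => (j - k).natAbs = r)).card • ((1:ℝ) / ((max 1 r : ℕ) : ℝ)^2) := by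
    intro r _
    rw [smul_eq_mul, nsmul_eq_mul]
  calc ∑ r ∈ W, (V.filter (fun k => (j - k).natAbs = r)).card • ((1:ℝ) / ((max 1 r : ℕ) : ℝ)^2)
      = ∑ r ∈ W, ((V.filter (fun k => (j - k).natAbs = r)).card : ℝ) • ((1:ℝ) / ((max 1 r : ℕ) : ℝ)^2) := by
        apply Finset.sum_congr rfl
        intro r hr
        rw [smul_eq_mul, nsmul_eq_mul]
    _ ≤ ∑ r ∈ W, 2 * ((1:ℝ) / ((max 1 r : ℕ) : ℝ)^2) := hle
    _ ≤ 2 * 3 := by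
        rw [← Finset.mul_sum]
        apply mul_le_mul_of_nonneg_left ?_ (by norm_num)
        -- bound sum over W of 1/max(1,r)^2 by 1 + sum over positives
        have hsub : W ⊆ Finset.range ((W.sup id) + 1) := by
          intro r hr
          rw [Finset.mem_range]
          exact Nat.lt_succ_of_le (Finset.le_sup (f := id) hr)
        calc ∑ r ∈ W, (1:ℝ) / ((max 1 r : ℕ) : ℝ)^2
            ≤ ∑ r ∈ Finset.range ((W.sup id) + 1), (1:ℝ) / ((max 1 r : ℕ) : ℝ)^2 := by
              apply Finset.sum_le_sum_of_subset_of_nonneg hsub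
              intro r _ _
              positivity
          _ ≤ 3 := by
              set M := W.sup id
              rw [Finset.sum_range_succ']
              have h0 : (1:ℝ) / ((max 1 0 : ℕ) : ℝ)^2 = 1 := by norm_num
              have hpos : ∀ r : ℕ, (1:ℝ) / ((max 1 (r+1) : ℕ) : ℝ)^2 = 1/((r:ℝ)+1)^2 := by
                intro r
                congr 2
                have : max 1 (r+1) = r+1 := by omega
                rw [this]
                push_cast; ring
              simp_rw [hpos, h0]
              have := sum_inv_sq_le M
              linarith
    _ = 6 := by norm_num


lemma floor_gap (x y : ℝ) : (|⌊x⌋ - ⌊y⌋| : ℝ) ≤ |x - y| + 2 := by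
  have h1 := Int.floor_le x
  have h2 := Int.lt_floor_add_one x
  have h3 := Int.floor_le y
  have h4 := Int.lt_floor_add_one y
  have ha : x - y ≤ |x - y| := le_abs_self _
  have hb : -|x - y| ≤ x - y := neg_abs_le _
  push_cast
  rw [abs_le]
  constructor <;> push_cast <;> linarith

lemma Tker_wt (x y : ℝ) : ‖Tker (x - y)‖^2 ≤ 36 * wt ⌊x⌋ ⌊y⌋ := by
  set k : ℤ := max 1 |⌊x⌋ - ⌊y⌋| with hk
  have hk1 : (1:ℤ) ≤ k := le_max_left _ _
  have hwt : wt ⌊x⌋ ⌊y⌋ = 1 / ((k:ℝ))^2 := rfl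
  rw [hwt]
  by_cases hcase : |⌊x⌋ - ⌊y⌋| ≤ 2
  · have hk2 : k ≤ 2 := max_le (by norm_num) hcase
    have hkR : (1:ℝ) ≤ (k:ℝ) := by exact_mod_cast hk1
    have hkR2 : (k:ℝ) ≤ 2 := by exact_mod_cast hk2
    have h1 : ‖Tker (x - y)‖^2 ≤ 1 := by
      have := Tker_norm_le_one (x - y)
      nlinarith [norm_nonneg (Tker (x - y))]
    have hkpos : (0:ℝ) < (k:ℝ)^2 := by positivity
    have h2 : (1:ℝ) ≤ 36 * (1 / (k:ℝ)^2) := by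
      rw [mul_one_div, le_div_iff₀ hkpos]
      nlinarith
    linarith
  · push_neg at hcase
    have hkabs : k = |⌊x⌋ - ⌊y⌋| := max_eq_right (by omega)
    have hk3 : (3:ℤ) ≤ k := by omega
    have hk3R : (3:ℝ) ≤ (k:ℝ) := by exact_mod_cast hk3
    have hgap : (k:ℝ) - 2 ≤ |x - y| := by
      have := floor_gap x y
      rw [hkabs]
      push_cast
      linarith
    have hxyne : x - y ≠ 0 := by
      intro hc
      rw [hc] at hgap
      simp at hgap
      linarith
    have hxypos : (1:ℝ) ≤ |x - y| := by linarith
    have hT := Tker_norm_le (x - y) hxyne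
    have hT6 : ‖Tker (x - y)‖ ≤ 6 / (k:ℝ) := by
      refine hT.trans ?_
      rw [div_le_div_iff₀ (by linarith) (by linarith)]
      nlinarith
    have hTnn := norm_nonneg (Tker (x - y))
    calc ‖Tker (x - y)‖^2 ≤ (6 / (k:ℝ))^2 := by nlinarith
      _ = 36 * (1 / (k:ℝ)^2) := by
          rw [div_pow, mul_one_div]
          norm_num


lemma Tker_shift (A : ℂ) (l t1 : ℝ) :
    (∫ t2 in (0:ℝ)..1, A * Complex.exp (-Complex.I * l * ((t1 + t2 - 1/2 : ℝ) : ℂ)))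
      = A * (Complex.exp (Complex.I * l * ((1:ℝ)/2 : ℝ)) * Complex.exp (-Complex.I * l * t1) * Tker l) := by
  have he : ∀ t2 : ℝ, Complex.exp (-Complex.I * l * ((t1 + t2 - 1/2 : ℝ) : ℂ))
      = Complex.exp (Complex.I * l * ((1:ℝ)/2 : ℝ)) * Complex.exp (-Complex.I * l * t1)
        * Complex.exp (-Complex.I * l * t2) := by
    intro t2
    rw [← Complex.exp_add, ← Complex.exp_add]
    congr 1
    push_cast
    ring
  have h : ∀ t2 : ℝ, A * Complex.exp (-Complex.I * l * ((t1 + t2 - 1/2 : ℝ) : ℂ))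
      = (A * (Complex.exp (Complex.I * l * ((1:ℝ)/2 : ℝ)) * Complex.exp (-Complex.I * l * t1)))
        * Complex.exp (-Complex.I * l * t2) := by
    intro t2
    rw [he t2]
    ring
  simp_rw [h]
  rw [intervalIntegral.integral_const_mul]
  unfold Tker
  ring

lemma Tker_outer (A : ℂ) (l : ℝ) :
    (∫ t1 in (0:ℝ)..1, A * (Complex.exp (Complex.I * l * ((1:ℝ)/2 : ℝ)) * Complex.exp (-Complex.I * l * t1) * Tker l))
      = A * (Complex.exp (Complex.I * l * ((1:ℝ)/2 : ℝ)) * (Tker l * Tker l)) := by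
  have h : ∀ t1 : ℝ, A * (Complex.exp (Complex.I * l * ((1:ℝ)/2 : ℝ)) * Complex.exp (-Complex.I * l * t1) * Tker l)
      = (A * Complex.exp (Complex.I * l * ((1:ℝ)/2 : ℝ)) * Tker l) * Complex.exp (-Complex.I * l * t1) := by
    intro t1
    ring
  simp_rw [h]
  rw [intervalIntegral.integral_const_mul]
  unfold Tker
  ring

lemma cont_exp_aff (l c e : ℝ) : Continuous fun t : ℝ => Complex.exp (-Complex.I * l * ((c + t - e : ℝ) : ℂ)) := by
  apply Complex.continuous_exp.comp
  apply Continuous.mul continuous_const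
  exact Complex.continuous_ofReal.comp (((continuous_const.add continuous_id).sub continuous_const))

lemma cont_exp_lin (l : ℝ) : Continuous fun t : ℝ => Complex.exp (-Complex.I * l * (t : ℂ)) := by
  apply Complex.continuous_exp.comp
  exact Continuous.mul continuous_const Complex.continuous_ofReal

/-- quadratic form -/
noncomputable def Fq (θ : Fin d → ℝ) (n : Fin d → ℤ) : ℝ := ∑ j, θ j * (n j : ℝ)^2

/-- the degeneracy factor -/
noncomputable def Ksup (θ : Fin d → ℝ) (N : ℕ) : ℝ :=
  ⨆ ℓ : ℝ, (Set.ncard {m : Fin d → ℤ |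
      (∀ j, |m j| ≤ (N : ℤ)) ∧ |(∑ j, θ j * (m j : ℝ) ^ 2) - ℓ| ≤ 1} : ℝ)

noncomputable def box (d N : ℕ) : Finset (Fin d → ℤ) := Fintype.piFinset fun _ => Finset.Icc (-(N:ℤ)) N

lemma Aset_subset (θ : Fin d → ℝ) (N : ℕ) (ℓ : ℝ) :
    {m : Fin d → ℤ | (∀ j, |m j| ≤ (N : ℤ)) ∧ |(∑ j, θ j * (m j : ℝ) ^ 2) - ℓ| ≤ 1}
      ⊆ ↑(box d N) := by
  intro m hm
  simp only [box, Finset.coe_sort_coe, Finset.mem_coe, Fintype.mem_piFinset, Finset.mem_Icc]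
  intro j
  have := abs_le.mp (hm.1 j)
  omega

lemma Aset_finite (θ : Fin d → ℝ) (N : ℕ) (ℓ : ℝ) :
    Set.Finite {m : Fin d → ℤ | (∀ j, |m j| ≤ (N : ℤ)) ∧ |(∑ j, θ j * (m j : ℝ) ^ 2) - ℓ| ≤ 1} :=
  Set.Finite.subset (Finset.finite_toSet (box d N)) (Aset_subset θ N ℓ)

lemma bddAbove_ncards (θ : Fin d → ℝ) (N : ℕ) :
    BddAbove (Set.range fun ℓ : ℝ => (Set.ncard {m : Fin d → ℤ |
      (∀ j, |m j| ≤ (N : ℤ)) ∧ |(∑ j, θ j * (m j : ℝ) ^ 2) - ℓ| ≤ 1} : ℝ)) := by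
  refine ⟨((box d N).card : ℝ), ?_⟩
  rintro x ⟨ℓ, rfl⟩
  have h1 : Set.ncard {m : Fin d → ℤ |
      (∀ j, |m j| ≤ (N : ℤ)) ∧ |(∑ j, θ j * (m j : ℝ) ^ 2) - ℓ| ≤ 1}
      ≤ Set.ncard (↑(box d N) : Set (Fin d → ℤ)) := by
    apply Set.ncard_le_ncard (Aset_subset θ N ℓ) (Finset.finite_toSet _)
  rw [Set.ncard_coe_finset] at h1
  dsimp only
  exact_mod_cast h1

lemma ncard_le_Ksup (θ : Fin d → ℝ) (N : ℕ) (ℓ : ℝ) :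
    (Set.ncard {m : Fin d → ℤ |
      (∀ j, |m j| ≤ (N : ℤ)) ∧ |(∑ j, θ j * (m j : ℝ) ^ 2) - ℓ| ≤ 1} : ℝ) ≤ Ksup θ N :=
  le_ciSup (bddAbove_ncards θ N) ℓ

lemma Ksup_nonneg (θ : Fin d → ℝ) (N : ℕ) : 0 ≤ Ksup θ N := by
  refine le_trans ?_ (ncard_le_Ksup θ N 0)
  positivity

/-- Counting lemma: in a band of the pair-form, levels inject into an annulus. -/
lemma counting (θ : Fin d → ℝ) (N : ℕ) (D : Finset (Fin d → ℤ))
    (HD : ∀ p ∈ D, ∀ q ∈ D, ∀ j, |p j - q j| ≤ (N : ℤ))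
    (h : Fin d → ℤ) (k : ℤ) :
    (((D.filter fun n => h - n ∈ D).filter
        fun n => ⌊Fq θ n + Fq θ (h - n)⌋ = k).card : ℝ) ≤ Ksup θ N := by
  classical
  set ℓ : ℝ := 2*(k:ℝ) + 1 - Fq θ h with hℓ
  set A : Set (Fin d → ℤ) := {m : Fin d → ℤ |
      (∀ j, |m j| ≤ (N : ℤ)) ∧ |(∑ j, θ j * (m j : ℝ) ^ 2) - ℓ| ≤ 1} with hA
  have hfin : A.Finite := Aset_finite θ N ℓ
  set T := (D.filter fun n => h - n ∈ D).filter fun n => ⌊Fq θ n + Fq θ (h - n)⌋ = k with hT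
  have hcard : T.card ≤ hfin.toFinset.card := by
    apply Finset.card_le_card_of_injOn (fun n => n - (h - n))
    · intro n hn
      rw [hT, Finset.mem_coe, Finset.mem_filter, Finset.mem_filter] at hn
      obtain ⟨⟨hnD, hnD'⟩, hfl⟩ := hn
      rw [Finset.mem_coe, Set.Finite.mem_toFinset, hA]
      constructor
      · intro j
        have := HD n hnD (h - n) hnD' j
        simpa using this
      · -- value identity
        have hid : (∑ j, θ j * (((n - (h - n)) j : ℝ)) ^ 2)
            = 2*(Fq θ n + Fq θ (h - n)) - Fq θ h := by
          unfold Fq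
          rw [← Finset.sum_add_distrib, Finset.mul_sum, ← Finset.sum_sub_distrib]
          apply Finset.sum_congr rfl
          intro j _
          simp only [Pi.sub_apply]
          push_cast
          ring
        rw [hid]
        have hk := hfl
        rw [Int.floor_eq_iff] at hk
        · rcases hk with ⟨hk1, hk2⟩
          rw [hℓ, abs_le]
          push_cast at hk1 hk2
          constructor <;> linarith
    · intro n hn m hm heq
      funext j
      have := congrFun heq j
      simp only [Pi.sub_apply] at this
      omega
  calc (T.card : ℝ) ≤ (hfin.toFinset.card : ℝ) := by exact_mod_cast hcard
    _ = (A.ncard : ℝ) := by rw [Set.ncard_eq_toFinset_card A hfin]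
    _ ≤ Ksup θ N := ncard_le_Ksup θ N ℓ


/-- Schur-type bound for a double sum over a band-decomposed index set. -/
lemma pair_schur {ι : Type*} [DecidableEq ι] (Γ : Finset ι) (s : ι → ℤ) (w : ι → ℝ)
    (hw : ∀ n, 0 ≤ w n) (K : ℝ) (hK : ∀ k : ℤ, (((Γ.filter fun n => s n = k).card : ℝ)) ≤ K) :
    ∑ n ∈ Γ, ∑ m ∈ Γ, w n * w m * wt (s n) (s m) ≤ 6 * K * ∑ n ∈ Γ, (w n)^2 := by
  classical
  have hK0 : 0 ≤ K := le_trans (by positivity) (hK 0)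
  -- inner sum bound
  have hinner : ∀ n ∈ Γ, ∑ m ∈ Γ, wt (s n) (s m) ≤ 6 * K := by
    intro n _
    rw [Finset.sum_comp (fun k => wt (s n) k) s]
    have h1 : ∑ k ∈ Γ.image s, (Γ.filter fun m => s m = k).card • wt (s n) k
        ≤ ∑ k ∈ Γ.image s, K * wt (s n) k := by
      apply Finset.sum_le_sum
      intro k _
      rw [nsmul_eq_mul]
      exact mul_le_mul_of_nonneg_right (hK k) (wt_nonneg _ _)
    refine h1.trans ?_
    rw [← Finset.mul_sum]
    calc K * ∑ k ∈ Γ.image s, wt (s n) k ≤ K * 6 :=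
          mul_le_mul_of_nonneg_left (sum_wt_le _ _) hK0
      _ = 6 * K := by ring
  have hAM : ∑ n ∈ Γ, ∑ m ∈ Γ, w n * w m * wt (s n) (s m)
      ≤ ∑ n ∈ Γ, ∑ m ∈ Γ, (w n)^2 * wt (s n) (s m) := by
    have hsym : ∑ n ∈ Γ, ∑ m ∈ Γ, (w m)^2 * wt (s n) (s m)
        = ∑ n ∈ Γ, ∑ m ∈ Γ, (w n)^2 * wt (s n) (s m) := by
      rw [Finset.sum_comm]
      apply Finset.sum_congr rfl; intro n _
      apply Finset.sum_congr rfl; intro m _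
      rw [wt_symm]
    have key : ∑ n ∈ Γ, ∑ m ∈ Γ, w n * w m * wt (s n) (s m)
        ≤ (∑ n ∈ Γ, ∑ m ∈ Γ, (w n)^2 * wt (s n) (s m)
           + ∑ n ∈ Γ, ∑ m ∈ Γ, (w m)^2 * wt (s n) (s m)) / 2 := by
      rw [← Finset.sum_add_distrib]
      rw [Finset.sum_div]
      apply Finset.sum_le_sum
      intro n _
      rw [← Finset.sum_add_distrib, Finset.sum_div]
      apply Finset.sum_le_sum
      intro m _
      have h2 := two_mul_le_add_sq (w n) (w m)
      have h3 := wt_nonneg (s n) (s m)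
      nlinarith [mul_le_mul_of_nonneg_right h2 h3]
    rw [hsym] at key
    calc ∑ n ∈ Γ, ∑ m ∈ Γ, w n * w m * wt (s n) (s m)
        ≤ (∑ n ∈ Γ, ∑ m ∈ Γ, (w n)^2 * wt (s n) (s m)
           + ∑ n ∈ Γ, ∑ m ∈ Γ, (w n)^2 * wt (s n) (s m)) / 2 := key
      _ = ∑ n ∈ Γ, ∑ m ∈ Γ, (w n)^2 * wt (s n) (s m) := by ring
  refine hAM.trans ?_
  calc ∑ n ∈ Γ, ∑ m ∈ Γ, (w n)^2 * wt (s n) (s m)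
      = ∑ n ∈ Γ, (w n)^2 * ∑ m ∈ Γ, wt (s n) (s m) := by
        apply Finset.sum_congr rfl; intro n _
        rw [Finset.mul_sum]
    _ ≤ ∑ n ∈ Γ, (w n)^2 * (6 * K) := by
        apply Finset.sum_le_sum
        intro n hn
        exact mul_le_mul_of_nonneg_left (hinner n hn) (by positivity)
    _ = 6 * K * ∑ n ∈ Γ, (w n)^2 := by
        rw [← Finset.sum_mul]
        ring

/-- Core combinatorial bound. -/
lemma core_count (θ : Fin d → ℝ) (N : ℕ) (D : Finset (Fin d → ℤ))
    (HD : ∀ p ∈ D, ∀ q ∈ D, ∀ j, |p j - q j| ≤ (N : ℤ)) (a : (Fin d → ℤ) → ℂ) :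
    ∑ q ∈ Q4 D, (‖a q.1.1‖ * ‖a q.1.2‖ * ‖a q.2.1‖ * ‖a q.2.2‖)
        * (36 * wt ⌊Fq θ q.1.1 + Fq θ q.1.2⌋ ⌊Fq θ q.2.1 + Fq θ q.2.2⌋)
      ≤ 216 * Ksup θ N * (∑ n ∈ D, ‖a n‖^2)^2 := by
  classical
  set E : Finset (Fin d → ℤ) := (D ×ˢ D).image (fun p => p.1 + p.2) with hE
  set Γ : (Fin d → ℤ) → Finset (Fin d → ℤ) := fun h => D.filter (fun n => h - n ∈ D) with hΓ
  -- reindex the quadruple sum as a sigma sum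
  set g : (Σ _ : (Fin d → ℤ), (Fin d → ℤ) × (Fin d → ℤ)) → ℝ := fun p =>
    (‖a p.2.1‖ * ‖a (p.1 - p.2.1)‖ * ‖a p.2.2‖ * ‖a (p.1 - p.2.2)‖)
      * (36 * wt ⌊Fq θ p.2.1 + Fq θ (p.1 - p.2.1)⌋ ⌊Fq θ p.2.2 + Fq θ (p.1 - p.2.2)⌋) with hg
  have hreindex : ∑ q ∈ Q4 D, (‖a q.1.1‖ * ‖a q.1.2‖ * ‖a q.2.1‖ * ‖a q.2.2‖)
        * (36 * wt ⌊Fq θ q.1.1 + Fq θ q.1.2⌋ ⌊Fq θ q.2.1 + Fq θ q.2.2⌋)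
      = ∑ h ∈ E, ∑ n ∈ Γ h, ∑ m ∈ Γ h,
          (‖a n‖ * ‖a (h - n)‖ * ‖a m‖ * ‖a (h - m)‖)
            * (36 * wt ⌊Fq θ n + Fq θ (h - n)⌋ ⌊Fq θ m + Fq θ (h - m)⌋) := by
    have step1 : ∑ q ∈ Q4 D, (‖a q.1.1‖ * ‖a q.1.2‖ * ‖a q.2.1‖ * ‖a q.2.2‖)
        * (36 * wt ⌊Fq θ q.1.1 + Fq θ q.1.2⌋ ⌊Fq θ q.2.1 + Fq θ q.2.2⌋)
        = ∑ p ∈ E.sigma (fun h => Γ h ×ˢ Γ h), g p := by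
      apply Finset.sum_nbij' (fun q => ⟨q.1.1 + q.1.2, (q.1.1, q.2.1)⟩)
        (fun p => ((p.2.1, p.1 - p.2.1), (p.2.2, p.1 - p.2.2)))
      · intro q hq
        rw [Q4, Finset.mem_filter, Finset.mem_product, Finset.mem_product, Finset.mem_product] at hq
        obtain ⟨⟨⟨h11, h12⟩, h21, h22⟩, hc⟩ := hq
        rw [Finset.mem_sigma, Finset.mem_product]
        refine ⟨Finset.mem_image.mpr ⟨(q.1.1, q.1.2), Finset.mem_product.mpr ⟨h11, h12⟩, rfl⟩, ?_, ?_⟩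
        · rw [hΓ]
          rw [Finset.mem_filter]
          exact ⟨h11, by rwa [add_sub_cancel_left]⟩
        · rw [hΓ]
          rw [Finset.mem_filter]
          refine ⟨h21, ?_⟩
          rw [hc, add_sub_cancel_left]
          exact h22
      · intro p hp
        rw [Finset.mem_sigma, Finset.mem_product] at hp
        obtain ⟨hh, hn, hm⟩ := hp
        rw [hΓ] at hn hm
        rw [Finset.mem_filter] at hn hm
        rw [Q4, Finset.mem_filter, Finset.mem_product, Finset.mem_product, Finset.mem_product]
        refine ⟨⟨⟨hn.1, hn.2⟩, hm.1, hm.2⟩, ?_⟩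
        simp only
        ring
      · intro q hq
        rw [Q4, Finset.mem_filter] at hq
        have hc := hq.2
        simp only
        rw [add_sub_cancel_left, hc, add_sub_cancel_left]
      · intro p hp
        have h1 : p.2.1 + (p.1 - p.2.1) = p.1 := by ring
        rw [h1]
      · intro q hq
        rw [Q4, Finset.mem_filter] at hq
        have hc := hq.2
        rw [hg]
        simp only
        rw [add_sub_cancel_left, hc, add_sub_cancel_left]
    rw [step1, Finset.sum_sigma]
    apply Finset.sum_congr rfl
    intro h _
    rw [Finset.sum_product]
  rw [hreindex]
  -- apply pair_schur for each h
  have hper : ∀ h ∈ E, ∑ n ∈ Γ h, ∑ m ∈ Γ h,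
      (‖a n‖ * ‖a (h - n)‖ * ‖a m‖ * ‖a (h - m)‖)
        * (36 * wt ⌊Fq θ n + Fq θ (h - n)⌋ ⌊Fq θ m + Fq θ (h - m)⌋)
      ≤ 216 * Ksup θ N * ∑ n ∈ Γ h, (‖a n‖ * ‖a (h - n)‖)^2 := by
    intro h _
    have := pair_schur (Γ h) (fun n => ⌊Fq θ n + Fq θ (h - n)⌋)
      (fun n => ‖a n‖ * ‖a (h - n)‖) (fun n => by positivity) (Ksup θ N)
      (fun k => counting θ N D HD h k)
    calc ∑ n ∈ Γ h, ∑ m ∈ Γ h,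
        (‖a n‖ * ‖a (h - n)‖ * ‖a m‖ * ‖a (h - m)‖)
          * (36 * wt ⌊Fq θ n + Fq θ (h - n)⌋ ⌊Fq θ m + Fq θ (h - m)⌋)
        = 36 * ∑ n ∈ Γ h, ∑ m ∈ Γ h,
            (‖a n‖ * ‖a (h - n)‖) * (‖a m‖ * ‖a (h - m)‖)
              * wt ⌊Fq θ n + Fq θ (h - n)⌋ ⌊Fq θ m + Fq θ (h - m)⌋ := by
          rw [Finset.mul_sum]
          apply Finset.sum_congr rfl; intro n _
          rw [Finset.mul_sum]
          apply Finset.sum_congr rfl; intro m _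
          ring
      _ ≤ 36 * (6 * Ksup θ N * ∑ n ∈ Γ h, (‖a n‖ * ‖a (h - n)‖)^2) := by
          apply mul_le_mul_of_nonneg_left this (by norm_num)
      _ = 216 * Ksup θ N * ∑ n ∈ Γ h, (‖a n‖ * ‖a (h - n)‖)^2 := by ring
  calc ∑ h ∈ E, ∑ n ∈ Γ h, ∑ m ∈ Γ h,
      (‖a n‖ * ‖a (h - n)‖ * ‖a m‖ * ‖a (h - m)‖)
        * (36 * wt ⌊Fq θ n + Fq θ (h - n)⌋ ⌊Fq θ m + Fq θ (h - m)⌋)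
      ≤ ∑ h ∈ E, 216 * Ksup θ N * ∑ n ∈ Γ h, (‖a n‖ * ‖a (h - n)‖)^2 :=
        Finset.sum_le_sum hper
    _ = 216 * Ksup θ N * ∑ h ∈ E, ∑ n ∈ Γ h, (‖a n‖ * ‖a (h - n)‖)^2 := by
        rw [Finset.mul_sum]
    _ = 216 * Ksup θ N * (∑ n ∈ D, ‖a n‖^2)^2 := by
        congr 1
        -- energy identity
        have h1 : ∑ h ∈ E, ∑ n ∈ Γ h, (‖a n‖ * ‖a (h - n)‖)^2
            = ∑ p ∈ D ×ˢ D, (‖a p.1‖ * ‖a p.2‖)^2 := by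
          have step1 : ∑ p ∈ E.sigma (fun h => Γ h),
              ((fun p : (Σ _ : (Fin d → ℤ), (Fin d → ℤ)) => (‖a p.2‖ * ‖a (p.1 - p.2)‖)^2) p)
              = ∑ p ∈ D ×ˢ D, (‖a p.1‖ * ‖a p.2‖)^2 := by
            apply Finset.sum_nbij' (fun p => (p.2, p.1 - p.2)) (fun p => ⟨p.1 + p.2, p.1⟩)
            · intro p hp
              rw [Finset.mem_sigma] at hp
              obtain ⟨hh, hn⟩ := hp
              rw [hΓ] at hn
              rw [Finset.mem_filter] at hn
              exact Finset.mem_product.mpr ⟨hn.1, hn.2⟩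
            · intro p hp
              rw [Finset.mem_product] at hp
              rw [Finset.mem_sigma]
              refine ⟨Finset.mem_image.mpr ⟨p, Finset.mem_product.mpr hp, rfl⟩, ?_⟩
              rw [hΓ]
              rw [Finset.mem_filter]
              refine ⟨hp.1, ?_⟩
              rw [add_sub_cancel_left]
              exact hp.2
            · intro p hp
              have h1 : p.2 + (p.1 - p.2) = p.1 := by ring
              rw [h1]
            · intro p _
              simp only [add_sub_cancel_left]
            · intro p _
              rfl
          rw [← step1, Finset.sum_sigma]
        rw [h1]
        have h2 : (∑ n ∈ D, ‖a n‖^2)^2 = ∑ p ∈ D ×ˢ D, (‖a p.1‖ * ‖a p.2‖)^2 := by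
          rw [sq, Finset.sum_mul_sum, ← Finset.sum_product']
          apply Finset.sum_congr rfl
          intro p _
          rw [mul_pow]
        rw [h2]


lemma norm_exp_re_zero {z : ℂ} (h : z.re = 0) : ‖Complex.exp z‖ = 1 := by
  rw [Complex.norm_exp, h, Real.exp_zero]

lemma intervalIntegral_re (f : ℝ → ℂ) (hf : IntervalIntegrable f volume 0 1) :
    (∫ t in (0:ℝ)..1, (f t).re) = (∫ t in (0:ℝ)..1, f t).re := by
  rw [intervalIntegral.integral_of_le zero_le_one, intervalIntegral.integral_of_le zero_le_one]
  have h := (intervalIntegrable_iff_integrableOn_Ioc_of_le zero_le_one).mp hf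
  simpa using integral_re h

/-- The master analytic + counting estimate, for coefficients supported in a set of
coordinate-wise diameter at most `N`. -/
lemma master (θ : Fin d → ℝ) (N : ℕ) (D : Finset (Fin d → ℤ))
    (HD : ∀ p ∈ D, ∀ q ∈ D, ∀ j, |p j - q j| ≤ (N : ℤ)) (a : (Fin d → ℤ) → ℂ) :
    (∫ t in (0:ℝ)..1, ∫ x in Set.Icc (0 : Fin d → ℝ) 1,
        ‖∑ n ∈ D, a n * ex n x * Complex.exp (-Complex.I * t * (Fq θ n : ℂ))‖ ^ 4)
      ≤ 432 * Ksup θ N * (∑ n ∈ D, ‖a n‖^2)^2 := by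
  classical
  set Aq : (((Fin d → ℤ) × (Fin d → ℤ)) × (Fin d → ℤ) × (Fin d → ℤ)) → ℂ :=
    fun q => a q.1.1 * a q.1.2 * (starRingEnd ℂ) (a q.2.1) * (starRingEnd ℂ) (a q.2.2) with hAq
  set Δq : (((Fin d → ℤ) × (Fin d → ℤ)) × (Fin d → ℤ) × (Fin d → ℤ)) → ℝ :=
    fun q => (Fq θ q.1.1 + Fq θ q.1.2) - (Fq θ q.2.1 + Fq θ q.2.2) with hΔq
  set G : ℝ → ℂ := fun t => ∑ q ∈ Q4 D, Aq q * Complex.exp (-Complex.I * (Δq q) * t) with hG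
  -- Step 1: x-integral identity
  have master_x : ∀ t : ℝ, ((∫ x in Set.Icc (0 : Fin d → ℝ) 1,
      ‖∑ n ∈ D, a n * ex n x * Complex.exp (-Complex.I * t * (Fq θ n : ℂ))‖ ^ 4 : ℝ) : ℂ) = G t := by
    intro t
    have hsum : ∀ x : Fin d → ℝ, (∑ n ∈ D, a n * ex n x * Complex.exp (-Complex.I * t * (Fq θ n : ℂ)))
        = ∑ n ∈ D, (a n * Complex.exp (-Complex.I * t * (Fq θ n : ℂ))) * ex n x := by
      intro x
      apply Finset.sum_congr rfl
      intro n _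
      ring
    simp_rw [hsum]
    rw [xquad D (fun n => a n * Complex.exp (-Complex.I * t * (Fq θ n : ℂ)))]
    rw [hG]
    apply Finset.sum_congr rfl
    intro q _
    simp only [hAq, hΔq, map_mul]
    have hconj : ∀ n : Fin d → ℤ, (starRingEnd ℂ) (Complex.exp (-Complex.I * t * (Fq θ n : ℂ)))
        = Complex.exp (Complex.I * t * (Fq θ n : ℂ)) := by
      intro n
      rw [← Complex.exp_conj]
      congr 1
      simp only [map_mul, map_neg, Complex.conj_I, Complex.conj_ofReal]
      ring
    rw [hconj, hconj]
    have hexp : Complex.exp (-Complex.I * t * (Fq θ q.1.1 : ℂ))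
          * Complex.exp (-Complex.I * t * (Fq θ q.1.2 : ℂ))
          * Complex.exp (Complex.I * t * (Fq θ q.2.1 : ℂ))
          * Complex.exp (Complex.I * t * (Fq θ q.2.2 : ℂ))
        = Complex.exp (-Complex.I * ((Fq θ q.1.1 + Fq θ q.1.2) - (Fq θ q.2.1 + Fq θ q.2.2) : ℝ) * t) := by
      rw [← Complex.exp_add, ← Complex.exp_add, ← Complex.exp_add]
      congr 1
      push_cast
      ring
    rw [← hexp]
    ring
  -- real-valued version
  set gre : ℝ → ℝ := fun t => (G t).re with hgre
  have hgre_eq : ∀ t : ℝ, (∫ x in Set.Icc (0 : Fin d → ℝ) 1,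
      ‖∑ n ∈ D, a n * ex n x * Complex.exp (-Complex.I * t * (Fq θ n : ℂ))‖ ^ 4) = gre t := by
    intro t
    have := congrArg Complex.re (master_x t)
    rwa [Complex.ofReal_re] at this
  have hgre_nonneg : ∀ t : ℝ, 0 ≤ gre t := by
    intro t
    rw [← hgre_eq t]
    apply MeasureTheory.integral_nonneg
    intro x
    positivity
  have hGcont : Continuous G := by
    apply continuous_finset_sum
    intro q _
    apply Continuous.mul continuous_const
    apply Complex.continuous_exp.comp
    exact (continuous_const.mul Complex.continuous_ofReal)
  have hgrecont : Continuous gre := Complex.continuous_re.comp hGcont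
  -- Step 2: definition of GI
  set GI : ℝ → ℂ := fun t1 => ∑ q ∈ Q4 D,
      Aq q * (Complex.exp (Complex.I * (Δq q) * ((1:ℝ)/2 : ℝ)) * Complex.exp (-Complex.I * (Δq q) * t1) * Tker (Δq q)) with hGI
  have hexp_shift : ∀ (l : ℝ) (t1 t2 : ℝ),
      Complex.exp (-Complex.I * l * ((t1 + t2 - 1/2 : ℝ) : ℂ))
        = Complex.exp (Complex.I * l * ((1:ℝ)/2 : ℝ)) * Complex.exp (-Complex.I * l * t1)
          * Complex.exp (-Complex.I * l * t2) := by
    intro l t1 t2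
    rw [← Complex.exp_add, ← Complex.exp_add]
    congr 1
    push_cast
    ring
  have hGIcont : Continuous GI := by
    apply continuous_finset_sum
    intro q _
    apply Continuous.mul continuous_const
    apply Continuous.mul (Continuous.mul continuous_const ?_) continuous_const
    apply Complex.continuous_exp.comp
    exact (continuous_const.mul Complex.continuous_ofReal)
  have hGIrecont : Continuous fun t1 => (GI t1).re := Complex.continuous_re.comp hGIcont
  -- inner time integral identity
  have inner_eq : ∀ t1 : ℝ, (∫ t2 in (0:ℝ)..1, G (t1 + t2 - 1/2)) = GI t1 := by
    intro t1
    rw [hG, hGI]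
    simp only
    rw [intervalIntegral.integral_finset_sum]
    · exact Finset.sum_congr rfl fun q _ => Tker_shift (Aq q) (Δq q) t1
    · intro q _
      exact (continuous_const.mul (cont_exp_aff (Δq q) t1 (1/2))).intervalIntegrable _ _
  -- outer time integral identity
  have outer_eq : (∫ t1 in (0:ℝ)..1, GI t1)
      = ∑ q ∈ Q4 D, Aq q * (Complex.exp (Complex.I * (Δq q) * ((1:ℝ)/2 : ℝ)) * (Tker (Δq q) * Tker (Δq q))) := by
    rw [hGI]
    rw [intervalIntegral.integral_finset_sum]
    · exact Finset.sum_congr rfl fun q _ => Tker_outer (Aq q) (Δq q)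
    · intro q _
      apply Continuous.intervalIntegrable
      exact continuous_const.mul ((continuous_const.mul (cont_exp_lin (Δq q))).mul continuous_const)
  -- covering inequality
  have window_eq : ∀ t1 : ℝ, (∫ t2 in (0:ℝ)..1, gre (t1 + t2 - 1/2))
      = ∫ s in (t1 - 1/2)..(t1 + 1/2), gre s := by
    intro t1
    have h1 : (fun t2 : ℝ => gre (t1 + t2 - 1/2)) = fun t2 : ℝ => gre ((t1 - 1/2) + t2) := by
      funext t2
      congr 1
      ring
    rw [h1, intervalIntegral.integral_comp_add_left gre (t1 - 1/2)]
    congr 1 <;> ring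
  have innerRe_eq : ∀ t1 : ℝ, (∫ t2 in (0:ℝ)..1, gre (t1 + t2 - 1/2)) = (GI t1).re := by
    intro t1
    have h1 : (fun t2 : ℝ => gre (t1 + t2 - 1/2)) = fun t2 : ℝ => (G (t1 + t2 - 1/2)).re := rfl
    rw [h1]
    rw [intervalIntegral_re (fun t2 => G (t1 + t2 - 1/2))
      (Continuous.intervalIntegrable (hGcont.comp (((continuous_const.add continuous_id).sub continuous_const))) _ _)]
    rw [inner_eq t1]
  set P : ℝ := ∫ s in (0:ℝ)..(1/2), gre s with hP
  set R : ℝ := ∫ s in (1/2:ℝ)..1, gre s with hR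
  have hPnn : 0 ≤ P := intervalIntegral.integral_nonneg (by norm_num) (fun t _ => hgre_nonneg t)
  have hRnn : 0 ≤ R := intervalIntegral.integral_nonneg (by norm_num) (fun t _ => hgre_nonneg t)
  have hwin_lb1 : ∀ t1 ∈ Set.Icc (0:ℝ) (1/2), P ≤ (GI t1).re := by
    intro t1 ht1
    rw [← innerRe_eq t1, window_eq t1]
    apply intervalIntegral.integral_mono_interval (by linarith [ht1.2]) (by norm_num) (by linarith [ht1.1])
    · exact Filter.Eventually.of_forall (fun t => hgre_nonneg t)
    · exact hgrecont.intervalIntegrable _ _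
  have hwin_lb2 : ∀ t1 ∈ Set.Icc (1/2:ℝ) 1, R ≤ (GI t1).re := by
    intro t1 ht1
    rw [← innerRe_eq t1, window_eq t1]
    apply intervalIntegral.integral_mono_interval (by linarith [ht1.2]) (by norm_num) (by linarith [ht1.1])
    · exact Filter.Eventually.of_forall (fun t => hgre_nonneg t)
    · exact hgrecont.intervalIntegrable _ _
  have cov : (∫ t in (0:ℝ)..1, gre t) ≤ 2 * ∫ t1 in (0:ℝ)..1, (GI t1).re := by
    have hsplit : (∫ t in (0:ℝ)..1, gre t) = P + R := by
      rw [hP, hR]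
      exact (intervalIntegral.integral_add_adjacent_intervals
        (hgrecont.intervalIntegrable _ _) (hgrecont.intervalIntegrable _ _)).symm
    have hsplit2 : (∫ t1 in (0:ℝ)..1, (GI t1).re)
        = (∫ t1 in (0:ℝ)..(1/2), (GI t1).re) + ∫ t1 in (1/2:ℝ)..1, (GI t1).re := by
      exact (intervalIntegral.integral_add_adjacent_intervals
        (hGIrecont.intervalIntegrable _ _) (hGIrecont.intervalIntegrable _ _)).symm
    have hb1 : P * (1/2) ≤ ∫ t1 in (0:ℝ)..(1/2), (GI t1).re := by
      have this : (∫ _t1 in (0:ℝ)..(1/2), P) ≤ ∫ t1 in (0:ℝ)..(1/2), (GI t1).re :=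
        intervalIntegral.integral_mono_on (by norm_num : (0:ℝ) ≤ 1/2)
          (continuous_const.intervalIntegrable _ _) (hGIrecont.intervalIntegrable _ _) hwin_lb1
      rw [intervalIntegral.integral_const] at this
      calc P * (1/2) = ((1:ℝ)/2 - 0) • P := by rw [smul_eq_mul]; ring
        _ ≤ _ := this
    have hb2 : R * (1/2) ≤ ∫ t1 in (1/2:ℝ)..1, (GI t1).re := by
      have this : (∫ _t1 in (1/2:ℝ)..1, R) ≤ ∫ t1 in (1/2:ℝ)..1, (GI t1).re :=
        intervalIntegral.integral_mono_on (by norm_num : (1/2:ℝ) ≤ 1)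
          (continuous_const.intervalIntegrable _ _) (hGIrecont.intervalIntegrable _ _) hwin_lb2
      rw [intervalIntegral.integral_const] at this
      calc R * (1/2) = ((1:ℝ) - 1/2) • R := by rw [smul_eq_mul]; ring
        _ ≤ _ := this
    rw [hsplit, hsplit2]
    linarith
  -- final norm estimate
  have hfinal : (∫ t1 in (0:ℝ)..1, (GI t1).re)
      ≤ ∑ q ∈ Q4 D, ‖Aq q‖ * ‖Tker (Δq q)‖^2 := by
    rw [intervalIntegral_re GI (hGIcont.intervalIntegrable _ _), outer_eq]
    calc (∑ q ∈ Q4 D, Aq q * (Complex.exp (Complex.I * (Δq q) * ((1:ℝ)/2 : ℝ)) * (Tker (Δq q) * Tker (Δq q)))).re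
        ≤ ‖∑ q ∈ Q4 D, Aq q * (Complex.exp (Complex.I * (Δq q) * ((1:ℝ)/2 : ℝ)) * (Tker (Δq q) * Tker (Δq q)))‖ :=
          Complex.re_le_norm _
      _ ≤ ∑ q ∈ Q4 D, ‖Aq q * (Complex.exp (Complex.I * (Δq q) * ((1:ℝ)/2 : ℝ)) * (Tker (Δq q) * Tker (Δq q)))‖ :=
          norm_sum_le _ _
      _ = ∑ q ∈ Q4 D, ‖Aq q‖ * ‖Tker (Δq q)‖^2 := by
          apply Finset.sum_congr rfl
          intro q _
          simp only [norm_mul]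
          rw [norm_exp_re_zero (z := Complex.I * ((Δq q : ℝ) : ℂ) * (((1:ℝ)/2 : ℝ) : ℂ))
            (by simp [Complex.mul_re])]
          rw [sq]
          ring
  -- assemble
  have hq_bound : ∑ q ∈ Q4 D, ‖Aq q‖ * ‖Tker (Δq q)‖^2
      ≤ 216 * Ksup θ N * (∑ n ∈ D, ‖a n‖^2)^2 := by
    refine le_trans ?_ (core_count θ N D HD a)
    apply Finset.sum_le_sum
    intro q _
    have hnorm : ‖Aq q‖ = ‖a q.1.1‖ * ‖a q.1.2‖ * ‖a q.2.1‖ * ‖a q.2.2‖ := by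
      rw [hAq]
      simp only [norm_mul, RCLike.norm_conj]
    rw [hnorm]
    have hTw : ‖Tker (Δq q)‖^2 ≤ 36 * wt ⌊Fq θ q.1.1 + Fq θ q.1.2⌋ ⌊Fq θ q.2.1 + Fq θ q.2.2⌋ :=
      Tker_wt _ _
    apply mul_le_mul_of_nonneg_left hTw
    positivity
  calc (∫ t in (0:ℝ)..1, ∫ x in Set.Icc (0 : Fin d → ℝ) 1,
        ‖∑ n ∈ D, a n * ex n x * Complex.exp (-Complex.I * t * (Fq θ n : ℂ))‖ ^ 4)
      = ∫ t in (0:ℝ)..1, gre t := by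
        apply intervalIntegral.integral_congr
        intro t _
        exact hgre_eq t
    _ ≤ 2 * ∫ t1 in (0:ℝ)..1, (GI t1).re := cov
    _ ≤ 2 * (216 * Ksup θ N * (∑ n ∈ D, ‖a n‖^2)^2) := by
        apply mul_le_mul_of_nonneg_left (le_trans hfinal hq_bound) (by norm_num)
    _ = 432 * Ksup θ N * (∑ n ∈ D, ‖a n‖^2)^2 := by ring


/-- Continuous real version of the space integral. -/
lemma gexists (θ : Fin d → ℝ) (D : Finset (Fin d → ℤ)) (a : (Fin d → ℤ) → ℂ) :
    ∃ g : ℝ → ℝ, Continuous g ∧ (∀ t : ℝ,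
      (∫ x in Set.Icc (0 : Fin d → ℝ) 1,
        ‖∑ n ∈ D, a n * ex n x * Complex.exp (-Complex.I * t * (Fq θ n : ℂ))‖ ^ 4) = g t) := by
  classical
  set G : ℝ → ℂ := fun t => ∑ q ∈ Q4 D,
    (fun q => a q.1.1 * a q.1.2 * (starRingEnd ℂ) (a q.2.1) * (starRingEnd ℂ) (a q.2.2)) q
      * Complex.exp (-Complex.I * ((Fq θ q.1.1 + Fq θ q.1.2) - (Fq θ q.2.1 + Fq θ q.2.2) : ℝ) * t) with hG
  refine ⟨fun t => (G t).re, ?_, ?_⟩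
  · apply Complex.continuous_re.comp
    apply continuous_finset_sum
    intro q _
    exact Continuous.mul continuous_const
      (Complex.continuous_exp.comp (continuous_const.mul Complex.continuous_ofReal))
  · intro t
    have hsum : ∀ x : Fin d → ℝ,
        (∑ n ∈ D, a n * ex n x * Complex.exp (-Complex.I * t * (Fq θ n : ℂ)))
        = ∑ n ∈ D, (a n * Complex.exp (-Complex.I * t * (Fq θ n : ℂ))) * ex n x := by
      intro x
      exact Finset.sum_congr rfl fun n _ => by ring
    have key : ((∫ x in Set.Icc (0 : Fin d → ℝ) 1,
        ‖∑ n ∈ D, a n * ex n x * Complex.exp (-Complex.I * t * (Fq θ n : ℂ))‖ ^ 4 : ℝ) : ℂ) = G t := by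
      simp_rw [hsum]
      rw [xquad D (fun n => a n * Complex.exp (-Complex.I * t * (Fq θ n : ℂ)))]
      rw [hG]
      apply Finset.sum_congr rfl
      intro q _
      simp only [map_mul]
      have hconj : ∀ n : Fin d → ℤ, (starRingEnd ℂ) (Complex.exp (-Complex.I * t * (Fq θ n : ℂ)))
          = Complex.exp (Complex.I * t * (Fq θ n : ℂ)) := by
        intro n
        rw [← Complex.exp_conj]
        congr 1
        simp only [map_mul, map_neg, Complex.conj_I, Complex.conj_ofReal]
        ring
      rw [hconj, hconj]
      have hexp : Complex.exp (-Complex.I * t * (Fq θ q.1.1 : ℂ))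
            * Complex.exp (-Complex.I * t * (Fq θ q.1.2 : ℂ))
            * Complex.exp (Complex.I * t * (Fq θ q.2.1 : ℂ))
            * Complex.exp (Complex.I * t * (Fq θ q.2.2 : ℂ))
          = Complex.exp (-Complex.I * ((Fq θ q.1.1 + Fq θ q.1.2) - (Fq θ q.2.1 + Fq θ q.2.2) : ℝ) * t) := by
        rw [← Complex.exp_add, ← Complex.exp_add, ← Complex.exp_add]
        congr 1
        push_cast
        ring
      rw [← hexp]
      ring
    have := congrArg Complex.re key
    rwa [Complex.ofReal_re] at this

lemma norm_sum_pow4 {ι : Type*} (s : Finset ι) (g : ι → ℂ) :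
    ‖∑ i ∈ s, g i‖^4 ≤ (s.card:ℝ)^3 * ∑ i ∈ s, ‖g i‖^4 := by
  have h1 : ‖∑ i ∈ s, g i‖ ≤ ∑ i ∈ s, ‖g i‖ := norm_sum_le _ _
  have h2 : ‖∑ i ∈ s, g i‖^4 ≤ (∑ i ∈ s, ‖g i‖)^4 := by
    apply pow_le_pow_left₀ (norm_nonneg _) h1
  refine h2.trans ?_
  rcases Nat.eq_zero_or_pos s.card with hcard | hcard
  · rw [Finset.card_eq_zero] at hcard
    subst hcard
    simp
  · have hc : (0:ℝ) < (s.card:ℝ)^3 := by positivity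
    have := pow_sum_div_card_le_sum_pow (s := s) (f := fun i => ‖g i‖) (n := 3)
      (fun i _ => norm_nonneg _)
    rw [div_le_iff₀ hc] at this
    calc (∑ i ∈ s, ‖g i‖)^4 ≤ (∑ i ∈ s, ‖g i‖^4) * (s.card:ℝ)^3 := by
          exact_mod_cast this
      _ = (s.card:ℝ)^3 * ∑ i ∈ s, ‖g i‖^4 := by ring

noncomputable def Dpiece (N : ℕ) (σ : Fin d → Bool) : Finset (Fin d → ℤ) :=
  Fintype.piFinset fun j => if σ j then Finset.Icc 1 (N:ℤ) else Finset.Icc (-(N:ℤ)) 0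

lemma Dpiece_diam (N : ℕ) (σ : Fin d → Bool) :
    ∀ p ∈ Dpiece N σ, ∀ q ∈ Dpiece N σ, ∀ j, |p j - q j| ≤ (N : ℤ) := by
  intro p hp q hq j
  rw [Dpiece, Fintype.mem_piFinset] at hp hq
  have h1 := hp j
  have h2 := hq j
  rw [abs_le]
  by_cases hσ : σ j
  · rw [if_pos hσ, Finset.mem_Icc] at h1 h2
    omega
  · rw [if_neg hσ, Finset.mem_Icc] at h1 h2
    omega

lemma box_eq_biUnion (d N : ℕ) (hN : 1 ≤ N) :
    box d N = Finset.univ.biUnion (Dpiece (d := d) N) := by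
  ext n
  rw [box, Fintype.mem_piFinset, Finset.mem_biUnion]
  constructor
  · intro h
    refine ⟨fun j => decide (1 ≤ n j), Finset.mem_univ _, ?_⟩
    rw [Dpiece, Fintype.mem_piFinset]
    intro j
    have := h j
    rw [Finset.mem_Icc] at this
    by_cases h1 : 1 ≤ n j
    · rw [if_pos (by simpa using h1), Finset.mem_Icc]
      omega
    · rw [if_neg (by simpa using h1), Finset.mem_Icc]
      omega
  · rintro ⟨σ, _, hσ⟩
    rw [Dpiece, Fintype.mem_piFinset] at hσ
    intro j
    have := hσ j
    rw [Finset.mem_Icc]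
    by_cases h1 : σ j
    · rw [if_pos h1, Finset.mem_Icc] at this
      omega
    · rw [if_neg h1, Finset.mem_Icc] at this
      omega

lemma Dpiece_disj (d N : ℕ) : Set.PairwiseDisjoint (↑(Finset.univ : Finset (Fin d → Bool)))
    (Dpiece (d := d) N) := by
  intro σ _ τ _ hστ
  have hj : ∃ j, σ j ≠ τ j := Function.ne_iff.mp hστ
  obtain ⟨j, hj⟩ := hj
  simp only [Function.onFun]
  rw [Finset.disjoint_left]
  intro n hn hn'
  rw [Dpiece, Fintype.mem_piFinset] at hn hn'
  have h1 := hn j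
  have h2 := hn' j
  by_cases hσ : σ j <;> by_cases hτ : τ j
  · exact hj (by rw [hσ, hτ])
  · rw [if_pos hσ, Finset.mem_Icc] at h1
    rw [if_neg hτ, Finset.mem_Icc] at h2
    omega
  · rw [if_neg hσ, Finset.mem_Icc] at h1
    rw [if_pos hτ, Finset.mem_Icc] at h2
    omega
  · exact hj (by simp [hσ, hτ])


lemma Fq_cast (θ : Fin d → ℝ) (n : Fin d → ℤ) :
    ((Fq θ n : ℝ) : ℂ) = ∑ j, (θ j : ℂ) * (n j : ℂ)^2 := by
  unfold Fq
  push_cast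
  rfl


end StrichartzAux

open StrichartzAux

/-- Lemma 1: the `L⁴` Strichartz norm is controlled by the supremum over `ℓ ∈ ℝ` of the
number of lattice points `m ∈ [-N,N]^d` with `|Q(m) - ℓ| ≤ 1` (the near-degeneracy
factor), with a constant depending only on `d`. -/
theorem strichartz_le_degeneracy_factor (d : ℕ) (hd : 1 ≤ d) :
    ∃ C : ℝ, 0 < C ∧
      ∀ (θmin θmax : ℝ), 0 < θmin → θmin ≤ θmax →
      ∀ (θ : Fin d → ℝ), (∀ j, θmin ≤ θ j ∧ θ j ≤ θmax) →
      ∀ (N : ℕ), 1 ≤ N →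
      ∀ (c : (Fin d → ℤ) → ℂ), (∀ n : Fin d → ℤ, (∃ j, (N : ℤ) < |n j|) → c n = 0) →
      (∫ t in (0:ℝ)..1, ∫ x in Set.Icc (0 : Fin d → ℝ) 1,
          ‖∑ᶠ n : Fin d → ℤ,
              c n * Complex.exp (2 * Real.pi * Complex.I * ∑ j, (n j : ℂ) * (x j : ℂ)) *
                Complex.exp (-Complex.I * (t : ℂ) * ∑ j, (θ j : ℂ) * (n j : ℂ) ^ 2)‖ ^ 4)
        ≤ C * (⨆ ℓ : ℝ, (Set.ncard {m : Fin d → ℤ |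
                (∀ j, |m j| ≤ (N : ℤ)) ∧ |(∑ j, θ j * (m j : ℝ) ^ 2) - ℓ| ≤ 1} : ℝ)) *
            (∑ᶠ n : Fin d → ℤ, ‖c n‖ ^ 2) ^ 2 := by
  classical
  refine ⟨432 * 8^d, by positivity, ?_⟩
  intro θmin θmax hθmin hθmm θ hθ N hN c hc
  set B := box d N with hB
  have hcB : ∀ n, n ∉ B → c n = 0 := by
    intro n hn
    apply hc
    by_contra h
    push_neg at h
    apply hn
    rw [hB, box, Fintype.mem_piFinset]
    intro j
    rw [Finset.mem_Icc]
    have := abs_le.mp (h j)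
    omega
  -- identify the finsum with the Finset sum
  have hu : ∀ (t : ℝ) (x : Fin d → ℝ),
      (∑ᶠ n : Fin d → ℤ, c n * Complex.exp (2 * Real.pi * Complex.I * ∑ j, (n j : ℂ) * (x j : ℂ)) *
          Complex.exp (-Complex.I * (t : ℂ) * ∑ j, (θ j : ℂ) * (n j : ℂ) ^ 2))
      = ∑ n ∈ B, c n * ex n x * Complex.exp (-Complex.I * t * (Fq θ n : ℂ)) := by
    intro t x
    rw [finsum_eq_finset_sum_of_support_subset _ (s := B) ?_]
    · apply Finset.sum_congr rfl
      intro n _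
      rw [ex_eq, Fq_cast]
    · intro n hn
      rw [Finset.mem_coe]
      by_contra hnB
      exact Function.mem_support.mp hn (by rw [hcB n hnB]; ring)
  have hSsum : (∑ᶠ n : Fin d → ℤ, ‖c n‖ ^ 2) = ∑ n ∈ B, ‖c n‖^2 := by
    apply finsum_eq_finset_sum_of_support_subset
    intro n hn
    rw [Finset.mem_coe]
    by_contra hnB
    exact Function.mem_support.mp hn (by rw [hcB n hnB]; simp)
  have hKdef : (⨆ ℓ : ℝ, (Set.ncard {m : Fin d → ℤ |
      (∀ j, |m j| ≤ (N : ℤ)) ∧ |(∑ j, θ j * (m j : ℝ) ^ 2) - ℓ| ≤ 1} : ℝ)) = Ksup θ N := rfl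
  rw [hKdef, hSsum]
  -- continuous versions of the space integrals
  obtain ⟨gB, hgBcont, hgBeq⟩ := gexists θ B c
  have Hg : ∀ σ : Fin d → Bool, ∃ g : ℝ → ℝ, Continuous g ∧ (∀ t : ℝ,
      (∫ x in Set.Icc (0 : Fin d → ℝ) 1,
        ‖∑ n ∈ Dpiece N σ, c n * ex n x * Complex.exp (-Complex.I * t * (Fq θ n : ℂ))‖ ^ 4) = g t) :=
    fun σ => gexists θ (Dpiece N σ) c
  choose g hgcont hgeq using Hg
  -- pointwise splitting bound
  have hsplit : ∀ (t : ℝ) (x : Fin d → ℝ),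
      (∑ n ∈ B, c n * ex n x * Complex.exp (-Complex.I * t * (Fq θ n : ℂ)))
      = ∑ σ : Fin d → Bool, ∑ n ∈ Dpiece N σ, c n * ex n x * Complex.exp (-Complex.I * t * (Fq θ n : ℂ)) := by
    intro t x
    rw [hB, box_eq_biUnion d N hN, Finset.sum_biUnion (Dpiece_disj d N)]
  have hcard : ((Finset.univ : Finset (Fin d → Bool)).card : ℝ)^3 ≤ (8:ℝ)^d := by
    rw [Finset.card_univ, Fintype.card_fun, Fintype.card_bool, Fintype.card_fin]
    push_cast
    rw [← pow_mul, mul_comm d 3, pow_mul]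
    norm_num
  have hpt : ∀ (t : ℝ) (x : Fin d → ℝ),
      ‖∑ n ∈ B, c n * ex n x * Complex.exp (-Complex.I * t * (Fq θ n : ℂ))‖^4
      ≤ (8:ℝ)^d * ∑ σ : Fin d → Bool,
          ‖∑ n ∈ Dpiece N σ, c n * ex n x * Complex.exp (-Complex.I * t * (Fq θ n : ℂ))‖^4 := by
    intro t x
    rw [hsplit t x]
    refine (norm_sum_pow4 Finset.univ _).trans ?_
    apply mul_le_mul_of_nonneg_right hcard
    positivity
  -- continuity in x
  have hxcont : ∀ (D : Finset (Fin d → ℤ)) (t : ℝ),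
      Continuous fun x : Fin d → ℝ =>
        ‖∑ n ∈ D, c n * ex n x * Complex.exp (-Complex.I * t * (Fq θ n : ℂ))‖^4 := by
    intro D t
    apply Continuous.pow
    apply Continuous.norm
    apply continuous_finset_sum
    intro n _
    exact (continuous_const.mul (continuous_ex n)).mul continuous_const
  -- x-integral comparison
  have hxle : ∀ t : ℝ, gB t ≤ (8:ℝ)^d * ∑ σ : Fin d → Bool, g σ t := by
    intro t
    rw [← hgBeq t]
    have h2 : (∫ x in Set.Icc (0 : Fin d → ℝ) 1,
        ‖∑ n ∈ B, c n * ex n x * Complex.exp (-Complex.I * t * (Fq θ n : ℂ))‖^4)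
        ≤ ∫ x in Set.Icc (0 : Fin d → ℝ) 1, (8:ℝ)^d * ∑ σ : Fin d → Bool,
            ‖∑ n ∈ Dpiece N σ, c n * ex n x * Complex.exp (-Complex.I * t * (Fq θ n : ℂ))‖^4 := by
      apply MeasureTheory.setIntegral_mono_on
      · exact (hxcont B t).continuousOn.integrableOn_compact isCompact_Icc
      · exact (continuous_const.mul (continuous_finset_sum _
          fun σ _ => hxcont (Dpiece N σ) t)).continuousOn.integrableOn_compact isCompact_Icc
      · exact measurableSet_Icc
      · intro x _
        exact hpt t x
    refine h2.trans ?_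
    rw [MeasureTheory.integral_const_mul]
    apply mul_le_mul_of_nonneg_left ?_ (by positivity)
    rw [MeasureTheory.integral_finset_sum]
    · apply Finset.sum_le_sum
      intro σ _
      rw [hgeq σ t]
    · intro σ _
      exact (hxcont (Dpiece N σ) t).continuousOn.integrableOn_compact isCompact_Icc
  -- main chain
  calc (∫ t in (0:ℝ)..1, ∫ x in Set.Icc (0 : Fin d → ℝ) 1,
          ‖∑ᶠ n : Fin d → ℤ,
              c n * Complex.exp (2 * Real.pi * Complex.I * ∑ j, (n j : ℂ) * (x j : ℂ)) *
                Complex.exp (-Complex.I * (t : ℂ) * ∑ j, (θ j : ℂ) * (n j : ℂ) ^ 2)‖ ^ 4)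
      = ∫ t in (0:ℝ)..1, gB t := by
        apply intervalIntegral.integral_congr
        intro t _
        rw [← hgBeq t]
        apply MeasureTheory.integral_congr_ae
        apply Filter.Eventually.of_forall
        intro x
        exact congrArg (fun z : ℂ => ‖z‖^4) (hu t x)
    _ ≤ ∫ t in (0:ℝ)..1, ((8:ℝ)^d * ∑ σ : Fin d → Bool, g σ t) := by
        apply intervalIntegral.integral_mono_on zero_le_one
          (hgBcont.intervalIntegrable _ _)
          ((continuous_const.mul (continuous_finset_sum _ fun σ _ => hgcont σ)).intervalIntegrable _ _)
        intro t _
        exact hxle t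
    _ = (8:ℝ)^d * ∑ σ : Fin d → Bool, ∫ t in (0:ℝ)..1, g σ t := by
        rw [intervalIntegral.integral_const_mul]
        congr 1
        rw [intervalIntegral.integral_finset_sum]
        intro σ _
        exact (hgcont σ).intervalIntegrable _ _
    _ ≤ (8:ℝ)^d * ∑ σ : Fin d → Bool, 432 * Ksup θ N * (∑ n ∈ Dpiece N σ, ‖c n‖^2)^2 := by
        apply mul_le_mul_of_nonneg_left ?_ (by positivity)
        apply Finset.sum_le_sum
        intro σ _
        have heq : (∫ t in (0:ℝ)..1, g σ t)
            = ∫ t in (0:ℝ)..1, ∫ x in Set.Icc (0 : Fin d → ℝ) 1,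
                ‖∑ n ∈ Dpiece N σ, c n * ex n x * Complex.exp (-Complex.I * t * (Fq θ n : ℂ))‖^4 := by
          apply intervalIntegral.integral_congr
          intro t _
          exact (hgeq σ t).symm
        rw [heq]
        exact master θ N (Dpiece N σ) (Dpiece_diam N σ) c
    _ ≤ (8:ℝ)^d * (432 * Ksup θ N * (∑ n ∈ B, ‖c n‖^2)^2) := by
        apply mul_le_mul_of_nonneg_left ?_ (by positivity)
        have h1 : ∑ σ : Fin d → Bool, 432 * Ksup θ N * (∑ n ∈ Dpiece N σ, ‖c n‖^2)^2
            = 432 * Ksup θ N * ∑ σ : Fin d → Bool, (∑ n ∈ Dpiece N σ, ‖c n‖^2)^2 := by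
          rw [Finset.mul_sum]
        rw [h1]
        apply mul_le_mul_of_nonneg_left ?_ (by
          have := Ksup_nonneg θ N
          positivity)
        have h2 : ∑ σ : Fin d → Bool, (∑ n ∈ Dpiece N σ, ‖c n‖^2)^2
            ≤ (∑ σ : Fin d → Bool, ∑ n ∈ Dpiece N σ, ‖c n‖^2)^2 := by
          apply Finset.sum_sq_le_sq_sum_of_nonneg
          intro σ _
          positivity
        refine h2.trans ?_
        have h3 : ∑ σ : Fin d → Bool, ∑ n ∈ Dpiece N σ, ‖c n‖^2 = ∑ n ∈ B, ‖c n‖^2 := by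
          rw [hB, box_eq_biUnion d N hN, Finset.sum_biUnion (Dpiece_disj d N)]
        rw [h3]
    _ = 432 * 8^d * Ksup θ N * (∑ n ∈ B, ‖c n‖^2)^2 := by ring
end

section
/- (Lemma 2: almost orthogonality via Schur's test.) There exists an absolute constant C with the following property. Let H be a complex Hilbert space and let (h_k)_{k∈ℤ} be a finitely supported family of vectors of H such that for all ℓ, m ∈ ℤ one has |⟨h_ℓ, h_m⟩| ≤ ‖h_ℓ‖ · ‖h_m‖ / (1 + (ℓ − m)²). Then ‖Σ_{k∈ℤ} h_k‖² ≤ C · Σ_{k∈ℤ} ‖h_k‖². -/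
lemma aux_summable : Summable (fun n : ℤ => 1 / (1 + (n : ℝ) ^ 2)) := by
  have h2 : Summable (fun n : ℤ => 1 / (n : ℝ) ^ 2) :=
    Real.summable_one_div_int_pow.mpr one_lt_two
  have h3 : Summable (Function.update (fun n : ℤ => 1 / (n : ℝ) ^ 2) 0 1) :=
    h2.update 0 1
  refine Summable.of_nonneg_of_le (fun n => by positivity) (fun n => ?_) h3
  by_cases hn : n = 0
  · subst hn; simp [Function.update_self]
  · rw [Function.update_of_ne hn]
    apply div_le_div_of_nonneg_left one_pos.le
    · have : (n : ℝ) ≠ 0 := Int.cast_ne_zero.mpr hn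
      positivity
    · linarith [sq_nonneg (n : ℝ)]

/-- Lemma 2: almost orthogonality via Schur's test. If the pairwise inner products of a
finitely supported family `(h_k)_{k ∈ ℤ}` of vectors of a complex Hilbert space decay like
`‖h_ℓ‖ ‖h_m‖ / (1 + (ℓ - m)²)`, then `‖Σ h_k‖² ≤ C Σ ‖h_k‖²` for an absolute constant `C`. -/
theorem almost_orthogonality_schur :
    ∃ C : ℝ, 0 < C ∧
      ∀ (H : Type*) [NormedAddCommGroup H] [InnerProductSpace ℂ H] [CompleteSpace H],
      ∀ (h : ℤ → H), (Function.support h).Finite →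
      (∀ ℓ m : ℤ, ‖(inner ℂ (h ℓ) (h m) : ℂ)‖ ≤ ‖h ℓ‖ * ‖h m‖ / (1 + ((ℓ : ℝ) - (m : ℝ)) ^ 2)) →
      ‖∑ᶠ k : ℤ, h k‖ ^ 2 ≤ C * ∑ᶠ k : ℤ, ‖h k‖ ^ 2 := by
  set C₀ : ℝ := ∑' n : ℤ, 1 / (1 + (n : ℝ) ^ 2) with hC₀
  have hC₀nonneg : 0 ≤ C₀ := tsum_nonneg (fun n => by positivity)
  refine ⟨C₀ + 1, by linarith, ?_⟩
  intro H _ _ _ h hfin hb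
  set s := hfin.toFinset with hs
  have hsum1 : ∑ᶠ k : ℤ, h k = ∑ k ∈ s, h k := finsum_eq_sum h hfin
  have hsum2 : ∑ᶠ k : ℤ, ‖h k‖ ^ 2 = ∑ k ∈ s, ‖h k‖ ^ 2 := by
    apply finsum_eq_sum_of_support_subset
    intro k hk
    rw [hs, Set.Finite.coe_toFinset]
    simp only [Function.mem_support] at hk ⊢
    intro hzero
    simp [hzero] at hk
  rw [hsum1, hsum2]
  -- key Schur bound
  have key : ∀ ℓ : ℤ, ∑ m ∈ s, 1 / (1 + ((ℓ : ℝ) - (m : ℝ)) ^ 2) ≤ C₀ := by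
    intro ℓ
    have h1 : ∑ m ∈ s, 1 / (1 + ((ℓ : ℝ) - (m : ℝ)) ^ 2)
        = ∑ n ∈ s.image (fun m => ℓ - m), 1 / (1 + (n : ℝ) ^ 2) := by
      rw [Finset.sum_image (fun a _ b _ hab => by omega)]
      refine Finset.sum_congr rfl fun m _ => ?_
      push_cast; ring_nf
    rw [h1]
    exact Summable.sum_le_tsum _ (fun n _ => by positivity) aux_summable
  calc ‖∑ k ∈ s, h k‖ ^ 2
      = RCLike.re (inner ℂ (∑ k ∈ s, h k) (∑ k ∈ s, h k) : ℂ) := by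
        rw [← @inner_self_eq_norm_sq ℂ]
    _ ≤ ‖(inner ℂ (∑ k ∈ s, h k) (∑ k ∈ s, h k) : ℂ)‖ := RCLike.re_le_norm _
    _ = ‖∑ ℓ ∈ s, ∑ m ∈ s, (inner ℂ (h ℓ) (h m) : ℂ)‖ := by
        rw [sum_inner]; congr 1; exact Finset.sum_congr rfl fun ℓ _ => inner_sum _ _ _
    _ ≤ ∑ ℓ ∈ s, ∑ m ∈ s, ‖(inner ℂ (h ℓ) (h m) : ℂ)‖ := by
        refine (norm_sum_le _ _).trans ?_
        exact Finset.sum_le_sum fun ℓ _ => norm_sum_le _ _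
    _ ≤ ∑ ℓ ∈ s, ∑ m ∈ s, (‖h ℓ‖ ^ 2 + ‖h m‖ ^ 2) / 2 * (1 / (1 + ((ℓ : ℝ) - (m : ℝ)) ^ 2)) := by
        refine Finset.sum_le_sum fun ℓ _ => Finset.sum_le_sum fun m _ => ?_
        refine (hb ℓ m).trans ?_
        rw [div_eq_mul_one_div]
        have hpos : (0:ℝ) ≤ 1 / (1 + ((ℓ : ℝ) - (m : ℝ)) ^ 2) := by positivity
        refine mul_le_mul_of_nonneg_right ?_ hpos
        nlinarith [sq_nonneg (‖h ℓ‖ - ‖h m‖), norm_nonneg (h ℓ), norm_nonneg (h m)]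
    _ = ∑ ℓ ∈ s, ∑ m ∈ s, ‖h ℓ‖ ^ 2 * (1 / (1 + ((ℓ : ℝ) - (m : ℝ)) ^ 2)) := by
        have swap : ∑ ℓ ∈ s, ∑ m ∈ s, ‖h m‖ ^ 2 / 2 * (1 / (1 + ((ℓ : ℝ) - (m : ℝ)) ^ 2))
            = ∑ ℓ ∈ s, ∑ m ∈ s, ‖h ℓ‖ ^ 2 / 2 * (1 / (1 + ((ℓ : ℝ) - (m : ℝ)) ^ 2)) := by
          rw [Finset.sum_comm]
          refine Finset.sum_congr rfl fun ℓ _ => Finset.sum_congr rfl fun m _ => ?_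
          ring_nf
        have expand : ∀ ℓ ∈ s, ∀ m ∈ s,
            (‖h ℓ‖ ^ 2 + ‖h m‖ ^ 2) / 2 * (1 / (1 + ((ℓ : ℝ) - (m : ℝ)) ^ 2))
            = ‖h ℓ‖ ^ 2 / 2 * (1 / (1 + ((ℓ : ℝ) - (m : ℝ)) ^ 2))
              + ‖h m‖ ^ 2 / 2 * (1 / (1 + ((ℓ : ℝ) - (m : ℝ)) ^ 2)) := by
          intro ℓ _ m _; ring
        calc ∑ ℓ ∈ s, ∑ m ∈ s, (‖h ℓ‖ ^ 2 + ‖h m‖ ^ 2) / 2 * (1 / (1 + ((ℓ:ℝ) - (m:ℝ)) ^ 2))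
            = ∑ ℓ ∈ s, ∑ m ∈ s, (‖h ℓ‖ ^ 2 / 2 * (1 / (1 + ((ℓ:ℝ) - (m:ℝ)) ^ 2))
                + ‖h m‖ ^ 2 / 2 * (1 / (1 + ((ℓ:ℝ) - (m:ℝ)) ^ 2))) :=
              Finset.sum_congr rfl fun ℓ hℓ => Finset.sum_congr rfl fun m hm =>
                expand ℓ hℓ m hm
          _ = (∑ ℓ ∈ s, ∑ m ∈ s, ‖h ℓ‖ ^ 2 / 2 * (1 / (1 + ((ℓ:ℝ) - (m:ℝ)) ^ 2)))
                + ∑ ℓ ∈ s, ∑ m ∈ s, ‖h m‖ ^ 2 / 2 * (1 / (1 + ((ℓ:ℝ) - (m:ℝ)) ^ 2)) := by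
              simp [Finset.sum_add_distrib]
          _ = (∑ ℓ ∈ s, ∑ m ∈ s, ‖h ℓ‖ ^ 2 / 2 * (1 / (1 + ((ℓ:ℝ) - (m:ℝ)) ^ 2)))
                + ∑ ℓ ∈ s, ∑ m ∈ s, ‖h ℓ‖ ^ 2 / 2 * (1 / (1 + ((ℓ:ℝ) - (m:ℝ)) ^ 2)) := by
              rw [swap]
          _ = ∑ ℓ ∈ s, ∑ m ∈ s, ‖h ℓ‖ ^ 2 * (1 / (1 + ((ℓ:ℝ) - (m:ℝ)) ^ 2)) := by
              rw [← Finset.sum_add_distrib]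
              refine Finset.sum_congr rfl fun ℓ _ => ?_
              rw [← Finset.sum_add_distrib]
              refine Finset.sum_congr rfl fun m _ => by ring
    _ ≤ ∑ ℓ ∈ s, ‖h ℓ‖ ^ 2 * C₀ := by
        refine Finset.sum_le_sum fun ℓ _ => ?_
        rw [← Finset.mul_sum]
        exact mul_le_mul_of_nonneg_left (key ℓ) (by positivity)
    _ = C₀ * ∑ k ∈ s, ‖h k‖ ^ 2 := by rw [← Finset.sum_mul]; ring
    _ ≤ (C₀ + 1) * ∑ k ∈ s, ‖h k‖ ^ 2 := by
        refine mul_le_mul_of_nonneg_right (by linarith) ?_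
        exact Finset.sum_nonneg fun k _ => by positivity
end

section
/- (Lemma 3, odd case: lattice point count in an ellipsoidal annulus.) For every odd integer d ≥ 3 and every ε > 0 there exists a constant C, depending only on d, ε, θ_min and θ_max, such that for every real N ≥ 1 and every ℓ ∈ ℝ, the number of points m ∈ ℤ^d with |m_j| ≤ N for all j and |Q(m) − ℓ| ≤ 1 is at most C · N^{d − 2d/(d+1) + ε}. -/
open Finset intervalIntegral

/-- harmonic-type sum -/
noncomputable def Hs (n : ℕ) : ℝ := ∑ k ∈ Finset.Icc 1 n, (k : ℝ)⁻¹

lemma Hs_eq_harmonic (n : ℕ) : Hs n = (harmonic n : ℝ) := by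
  induction n with
  | zero => simp [Hs, harmonic]
  | succ m ih =>
      unfold Hs at ih ⊢
      rw [Finset.sum_Icc_succ_top (by omega : 1 ≤ m + 1), ih, harmonic_succ]
      push_cast
      ring

lemma Hs_nonneg (n : ℕ) : 0 ≤ Hs n := by
  unfold Hs; positivity

lemma Hs_mono {n m : ℕ} (h : n ≤ m) : Hs n ≤ Hs m := by
  unfold Hs
  apply Finset.sum_le_sum_of_subset_of_nonneg
  · exact Finset.Icc_subset_Icc_right h
  · intro k _ _; positivity

lemma Hs_le (n : ℕ) : Hs n ≤ 1 + Real.log n := by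
  rw [Hs_eq_harmonic]; exact harmonic_le_one_add_log n

lemma log_le_rpow {x δ : ℝ} (hx : 1 ≤ x) (hδ : 0 < δ) :
    Real.log x ≤ x ^ δ / δ := by
  have hx0 : 0 < x := lt_of_lt_of_le one_pos hx
  have h1 : Real.log (x ^ δ) ≤ x ^ δ - 1 :=
    Real.log_le_sub_one_of_pos (Real.rpow_pos_of_pos hx0 δ)
  rw [Real.log_rpow hx0] at h1
  rw [le_div_iff₀ hδ]
  nlinarith

lemma one_add_log_le {x δ : ℝ} (hx : 1 ≤ x) (hδ : 0 < δ) :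
    1 + Real.log x ≤ (1 + 1/δ) * x ^ δ := by
  have h2 : (1:ℝ) ≤ x ^ δ := Real.one_le_rpow hx hδ.le
  have h3 := log_le_rpow hx hδ
  have h4 : Real.log x ≤ x ^ δ * (1/δ) := by rw [mul_one_div]; exact h3
  nlinarith

/-- the key harmonic bound -/
lemma one_add_Hs_le {n : ℕ} {δ : ℝ} (hn : 1 ≤ n) (hδ : 0 < δ) :
    1 + Hs n ≤ (2 + 1/δ) * (n:ℝ) ^ δ := by
  have h1 : (1:ℝ) ≤ (n:ℝ) := by exact_mod_cast hn
  have h2 : (1:ℝ) ≤ (n:ℝ) ^ δ := Real.one_le_rpow h1 hδ.le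
  have h3 := Hs_le n
  have h4 := one_add_log_le h1 hδ
  nlinarith [Hs_nonneg n]

/-- A set of integers in `[-M, M]` whose pairwise differences are divisible by `s`
has at most `2M/s + 1` elements. -/
lemma card_le_of_dvd_sub (M : ℕ) (s : ℤ) (hs : 0 < s) (t : Finset ℤ)
    (ht : t ⊆ Finset.Icc (-(M:ℤ)) M)
    (hdvd : ∀ y ∈ t, ∀ y' ∈ t, s ∣ y - y') :
    (t.card : ℝ) ≤ 2 * M / s + 1 := by
  rcases t.eq_empty_or_nonempty with rfl | hne
  · simp; positivity
  · set y₀ := t.min' hne with hy₀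
    have hy₀m : y₀ ∈ t := t.min'_mem hne
    have key : t.card ≤ (Finset.Icc (0:ℤ) (2*M/s)).card := by
      apply Finset.card_le_card_of_injOn (fun y => (y - y₀) / s)
      · intro y hy
        have h1 : s ∣ y - y₀ := hdvd y hy y₀ hy₀m
        have h2 : 0 ≤ y - y₀ := by
          have := t.min'_le y hy
          omega
        have h3 : y - y₀ ≤ 2*M := by
          have hy1 := ht hy
          have hy2 := ht hy₀m
          simp only [Finset.mem_Icc] at hy1 hy2
          omega
        simp only [Finset.mem_coe, Finset.mem_Icc]
        constructor
        · exact Int.ediv_nonneg h2 hs.le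
        · exact Int.ediv_le_ediv hs h3
      · intro y hy y' hy' heq
        simp only at heq
        have h1 : s ∣ y - y₀ := hdvd y hy y₀ hy₀m
        have h2 : s ∣ y' - y₀ := hdvd y' hy' y₀ hy₀m
        have e1 : s * ((y - y₀)/s) = y - y₀ := Int.mul_ediv_cancel' h1
        have e2 : s * ((y' - y₀)/s) = y' - y₀ := Int.mul_ediv_cancel' h2
        rw [heq] at e1
        omega
    have h4 : ((Finset.Icc (0:ℤ) (2*M/s)).card : ℝ) ≤ 2*M/(s:ℝ) + 1 := by
      rw [Int.card_Icc]
      have h5 : (0:ℤ) ≤ 2*M/s := Int.ediv_nonneg (by positivity) hs.le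
      have h6 : ((2*M/s : ℤ) : ℝ) ≤ 2*(M:ℝ)/(s:ℝ) := by
        rw [le_div_iff₀ (by exact_mod_cast hs)]
        have := Int.ediv_mul_le (2*(M:ℤ)) hs.ne'
        calc ((2*M/s : ℤ) : ℝ) * (s:ℝ) = ((2*M/s * s : ℤ) : ℝ) := by push_cast; ring
          _ ≤ ((2*(M:ℤ) : ℤ) : ℝ) := by exact_mod_cast this
          _ = 2*(M:ℝ) := by push_cast; ring
      have h7 : ((2 * (M:ℤ) / s + 1 - 0).toNat : ℤ) = 2*(M:ℤ)/s + 1 := by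
        rw [Int.toNat_of_nonneg (by omega)]; ring
      have h8 : (((2 * (M:ℤ) / s + 1 - 0).toNat : ℕ) : ℝ) = ((2*(M:ℤ)/s : ℤ):ℝ) + 1 := by
        exact_mod_cast congrArg (Int.cast : ℤ → ℝ) h7
      rw [h8]
      push_cast at h6 ⊢
      linarith
    calc (t.card : ℝ) ≤ ((Finset.Icc (0:ℤ) (2*M/s)).card : ℝ) := by exact_mod_cast key
      _ ≤ 2*M/(s:ℝ) + 1 := h4

/-- number of solutions in a box to `x1 y1 + x2 y2 = w` -/
lemma count_linear (M : ℕ) (x1 x2 w : ℤ) (hx2 : x2 ≠ 0) :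
    ((((Finset.Icc (-(M:ℤ)) M) ×ˢ (Finset.Icc (-(M:ℤ)) M)).filter
      (fun p => x1 * p.1 + x2 * p.2 = w)).card : ℝ)
      ≤ 2 * M * (Int.gcd x1 x2) / |(x2:ℝ)| + 1 := by
  set sol := (((Finset.Icc (-(M:ℤ)) M) ×ˢ (Finset.Icc (-(M:ℤ)) M)).filter
      (fun p => x1 * p.1 + x2 * p.2 = w)) with hsol
  set g : ℤ := (Int.gcd x1 x2 : ℤ) with hg
  have hgpos : 0 < g := by
    have h := Int.gcd_pos_of_ne_zero_right x1 hx2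
    rw [hg]; exact_mod_cast h
  have hgdvd2 : g ∣ x2 := Int.gcd_dvd_right x1 x2
  have hgdvd1 : g ∣ x1 := Int.gcd_dvd_left x1 x2
  set b : ℤ := x2 / g with hb
  have hbx2 : b * g = x2 := Int.ediv_mul_cancel hgdvd2
  have hbne : b ≠ 0 := by
    intro h; rw [h, zero_mul] at hbx2; exact hx2 hbx2.symm
  -- first: card sol = card of image of fst
  have hinj : Set.InjOn Prod.fst (sol : Set (ℤ × ℤ)) := by
    intro p hp q hq heq
    simp only [hsol, Finset.coe_filter, Set.mem_setOf_eq] at hp hq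
    have h1 : x2 * p.2 = x2 * q.2 := by
      have := hp.2; have := hq.2
      rw [heq] at *
      omega
    have := mul_left_cancel₀ hx2 h1
    exact Prod.ext heq this
  have hcard : sol.card = (sol.image Prod.fst).card :=
    (Finset.card_image_of_injOn hinj).symm
  -- the image is an AP mod |b|
  have himsub : sol.image Prod.fst ⊆ Finset.Icc (-(M:ℤ)) M := by
    intro y hy
    rcases Finset.mem_image.1 hy with ⟨p, hp, rfl⟩
    have := Finset.mem_filter.1 hp
    exact (Finset.mem_product.1 this.1).1
  have hdvd : ∀ y ∈ sol.image Prod.fst, ∀ y' ∈ sol.image Prod.fst, |b| ∣ y - y' := by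
    intro y hy y' hy'
    rcases Finset.mem_image.1 hy with ⟨p, hp, rfl⟩
    rcases Finset.mem_image.1 hy' with ⟨q, hq, rfl⟩
    have hp2 := (Finset.mem_filter.1 hp).2
    have hq2 := (Finset.mem_filter.1 hq).2
    -- x1 (p1 - q1) = x2 (q2 - p2)
    have hkey : x1 * (p.1 - q.1) = x2 * (q.2 - p.2) := by ring_nf; omega
    set a : ℤ := x1 / g with ha
    have hax1 : a * g = x1 := Int.ediv_mul_cancel hgdvd1
    have hco : Int.gcd a b = 1 := by
      have : 0 < Int.gcd x1 x2 := Int.gcd_pos_of_ne_zero_right x1 hx2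
      exact Int.gcd_div_gcd_div_gcd this
    have hkey2 : a * (p.1 - q.1) = b * (q.2 - p.2) := by
      have : a * (p.1 - q.1) * g = b * (q.2 - p.2) * g := by
        calc a * (p.1 - q.1) * g = (a * g) * (p.1 - q.1) := by ring
          _ = x1 * (p.1 - q.1) := by rw [hax1]
          _ = x2 * (q.2 - p.2) := hkey
          _ = (b * g) * (q.2 - p.2) := by rw [hbx2]
          _ = b * (q.2 - p.2) * g := by ring
      exact mul_right_cancel₀ hgpos.ne' this
    have hbdvd : b ∣ p.1 - q.1 := by
      have h1 : b ∣ a * (p.1 - q.1) := ⟨q.2 - p.2, hkey2⟩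
      have h2 : Int.gcd b a = 1 := by rwa [Int.gcd_comm]
      have hc : IsCoprime b a := Int.isCoprime_iff_gcd_eq_one.2 h2
      exact hc.dvd_of_dvd_mul_left h1
    exact (abs_dvd b (p.1 - q.1)).2 hbdvd
  have hbabs : 0 < |b| := abs_pos.2 hbne
  have hmain := card_le_of_dvd_sub M |b| hbabs (sol.image Prod.fst) himsub hdvd
  have hx2abs : (0:ℝ) < |(x2:ℝ)| := by
    simp only [abs_pos]
    exact_mod_cast hx2
  have hbRZ : (0:ℝ) < ((|b|:ℤ):ℝ) := by exact_mod_cast hbabs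
  have habsZ : |b| * g = |x2| := by
    have h := abs_mul b g
    rw [hbx2, abs_of_pos hgpos] at h
    omega
  have habs : |(x2:ℝ)| = ((|b|:ℤ):ℝ) * ((Int.gcd x1 x2 : ℕ):ℝ) := by
    rw [hg] at habsZ
    exact_mod_cast congrArg (Int.cast : ℤ → ℝ) habsZ.symm
  have key2 : 2 * (M:ℝ) / ((|b|:ℤ):ℝ) = 2 * M * (Int.gcd x1 x2 : ℕ) / |(x2:ℝ)| := by
    rw [div_eq_div_iff hbRZ.ne' hx2abs.ne', habs]
    ring
  rw [hcard, ← key2]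
  exact hmain

lemma sum_abs_inv (M : ℕ) :
    ∑ u ∈ (Finset.Icc (-(M:ℤ)) M).filter (fun u => u ≠ 0), |(u:ℝ)|⁻¹ = 2 * Hs M := by
  induction M with
  | zero =>
      have h0 : (Finset.Icc (-((0:ℕ):ℤ)) ((0:ℕ):ℤ)).filter (fun u => u ≠ 0) = ∅ := by
        ext x
        simp only [Finset.mem_filter, Finset.mem_Icc, Finset.notMem_empty, iff_false,
          not_and, Nat.cast_zero]
        omega
      rw [h0]
      simp [Hs]
  | succ m ih =>
      have hset : (Finset.Icc (-((m+1:ℕ)):ℤ) ((m+1:ℕ))).filter (fun u => u ≠ 0)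
          = insert (-((m+1:ℕ)):ℤ) (insert (((m+1:ℕ)):ℤ)
              ((Finset.Icc (-(m:ℕ):ℤ) (m:ℕ)).filter (fun u => u ≠ 0))) := by
        ext x
        simp only [Finset.mem_filter, Finset.mem_Icc, Finset.mem_insert]
        push_cast
        omega
      have h1 : (-((m+1:ℕ)):ℤ) ∉ insert (((m+1:ℕ)):ℤ)
          ((Finset.Icc (-(m:ℕ):ℤ) (m:ℕ)).filter (fun u => u ≠ 0)) := by
        simp only [Finset.mem_insert, Finset.mem_filter, Finset.mem_Icc]
        push_cast
        omega
      have h2 : (((m+1:ℕ)):ℤ) ∉ (Finset.Icc (-(m:ℕ):ℤ) (m:ℕ)).filter (fun u => u ≠ 0) := by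
        simp only [Finset.mem_filter, Finset.mem_Icc]
        push_cast
        omega
      rw [hset, Finset.sum_insert h1, Finset.sum_insert h2, ih]
      unfold Hs
      rw [Finset.sum_Icc_succ_top (by omega : 1 ≤ m + 1)]
      have e1 : |((-((m+1:ℕ)):ℤ) : ℝ)| = (m:ℝ) + 1 := by push_cast; rw [abs_neg, abs_of_pos]; linarith [Nat.cast_nonneg (α := ℝ) m]
      have e2 : |((((m+1:ℕ)):ℤ) : ℝ)| = (m:ℝ) + 1 := by push_cast; rw [abs_of_pos]; linarith [Nat.cast_nonneg (α := ℝ) m]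
      rw [e1, e2]
      push_cast
      ring

lemma card_multiples (M k : ℕ) (hk : 1 ≤ k) :
    ((((Finset.Icc (-(M:ℤ)) M)).filter (fun x => (k:ℤ) ∣ x)).card : ℝ) ≤ 2*M/k + 1 := by
  apply card_le_of_dvd_sub M k (by exact_mod_cast hk)
  · exact Finset.filter_subset _ _
  · intro y hy y' hy'
    simp only [Finset.mem_filter] at hy hy'
    exact dvd_sub hy.2 hy'.2

lemma sum_inv_multiples (M k : ℕ) (hk : 1 ≤ k) :
    ∑ x ∈ (Finset.Icc (-(M:ℤ)) M).filter (fun x => (k:ℤ) ∣ x ∧ x ≠ 0), |(x:ℝ)|⁻¹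
      ≤ 2 * Hs M / k := by
  set s := (Finset.Icc (-(M:ℤ)) M).filter (fun x => (k:ℤ) ∣ x ∧ x ≠ 0) with hs
  set t := (Finset.Icc (-(M:ℤ)) M).filter (fun u => u ≠ 0) with ht
  have hkR : (0:ℝ) < k := by exact_mod_cast hk
  -- each x in s: 1/|x| = (1/k) * 1/|x/k|
  have key : ∀ x ∈ s, |(x:ℝ)|⁻¹ = (fun u : ℤ => (k:ℝ)⁻¹ * |(u:ℝ)|⁻¹) (x / k) := by
    intro x hx
    simp only [hs, Finset.mem_filter] at hx
    obtain ⟨hx1, hdvd, hne⟩ := hx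
    have hxk : (k:ℤ) * (x / k) = x := Int.mul_ediv_cancel' hdvd
    have : |(x:ℝ)| = (k:ℝ) * |((x/k : ℤ):ℝ)| := by
      calc |(x:ℝ)| = |(((k:ℤ) * (x/k) : ℤ) : ℝ)| := by rw [hxk]
        _ = |(k:ℝ)| * |((x/k : ℤ):ℝ)| := by push_cast; rw [abs_mul]
        _ = (k:ℝ) * |((x/k : ℤ):ℝ)| := by rw [abs_of_pos hkR]
    rw [this, mul_inv]
  rw [Finset.sum_congr rfl key]
  have hinjstep : ∀ x ∈ s, ∀ y ∈ s, x / (k:ℤ) = y / (k:ℤ) → x = y := by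
    intro x hx y hy hxy
    simp only [hs, Finset.mem_filter] at hx hy
    have hx2 : (k:ℤ) * (x / k) = x := Int.mul_ediv_cancel' hx.2.1
    have hy2 : (k:ℤ) * (y / k) = y := Int.mul_ediv_cancel' hy.2.1
    rw [← hx2, ← hy2, hxy]
  have himg : ∑ x ∈ s, ((k:ℝ)⁻¹ * |(((x/(k:ℤ)) : ℤ):ℝ)|⁻¹)
      = ∑ u ∈ s.image (fun x : ℤ => x / (k:ℤ)), ((k:ℝ)⁻¹ * |(u:ℝ)|⁻¹) :=
    (Finset.sum_image (f := fun u : ℤ => (k:ℝ)⁻¹ * |(u:ℝ)|⁻¹) hinjstep).symm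
  rw [himg]
  have hsub : s.image (fun x : ℤ => x / k) ⊆ t := by
    intro u hu
    rcases Finset.mem_image.1 hu with ⟨x, hx, rfl⟩
    simp only [hs, Finset.mem_filter, Finset.mem_Icc] at hx
    obtain ⟨⟨hxl, hxr⟩, hdvd, hne⟩ := hx
    have hxk : (k:ℤ) * (x / k) = x := Int.mul_ediv_cancel' hdvd
    simp only [ht, Finset.mem_filter, Finset.mem_Icc]
    have hkZ : (1:ℤ) ≤ k := by exact_mod_cast hk
    constructor
    · constructor <;> nlinarith [sq_nonneg ((x/k) - 1), sq_nonneg ((x/k) + 1)]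
    · intro h; rw [h, mul_zero] at hxk; exact hne hxk.symm
  calc ∑ u ∈ s.image (fun x : ℤ => x / k), (k:ℝ)⁻¹ * |(u:ℝ)|⁻¹
      ≤ ∑ u ∈ t, (k:ℝ)⁻¹ * |(u:ℝ)|⁻¹ := by
        apply Finset.sum_le_sum_of_subset_of_nonneg hsub
        intro u _ _; positivity
    _ = (k:ℝ)⁻¹ * ∑ u ∈ t, |(u:ℝ)|⁻¹ := by rw [Finset.mul_sum]
    _ = (k:ℝ)⁻¹ * (2 * Hs M) := by rw [ht, sum_abs_inv]
    _ = 2 * Hs M / k := by field_simp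

lemma gcd_sum (M : ℕ) (hM : 1 ≤ M) :
    ∑ x1 ∈ Finset.Icc (-(M:ℤ)) M, ∑ x2 ∈ Finset.Icc (-(M:ℤ)) M,
      (if x2 = 0 then (0:ℝ) else (Int.gcd x1 x2 : ℝ) / |(x2:ℝ)|)
    ≤ 6 * M * (1 + Hs M)^2 := by
  classical
  set I := Finset.Icc (-(M:ℤ)) M with hI
  set F : ℕ → ℤ → ℤ → ℝ := fun k x1 x2 =>
    (if (k:ℤ) ∣ x1 then (1:ℝ) else 0) *
    (if ((k:ℤ) ∣ x2 ∧ x2 ≠ 0) then (k:ℝ) * |(x2:ℝ)|⁻¹ else 0) with hF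
  -- pointwise bound
  have step1 : ∀ x1 ∈ I, ∀ x2 ∈ I,
      (if x2 = 0 then (0:ℝ) else (Int.gcd x1 x2 : ℝ) / |(x2:ℝ)|)
        ≤ ∑ k ∈ Finset.Icc 1 M, F k x1 x2 := by
    intro x1 _ x2 hx2
    have hnn : ∀ k ∈ Finset.Icc 1 M, 0 ≤ F k x1 x2 := by
      intro k _
      simp only [hF]
      apply mul_nonneg <;> split <;> positivity
    by_cases h0 : x2 = 0
    · rw [if_pos h0]
      exact Finset.sum_nonneg hnn
    · rw [if_neg h0]
      set k0 := Int.gcd x1 x2 with hk0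
      have hk0pos : 0 < k0 := Int.gcd_pos_of_ne_zero_right x1 h0
      have hk0le : k0 ≤ M := by
        have h1 : (k0:ℤ) ∣ x2 := Int.gcd_dvd_right x1 x2
        have h2 : (k0:ℤ) ≤ |x2| := Int.le_of_dvd (abs_pos.2 h0) ((dvd_abs _ _).2 h1)
        have h3 : |x2| ≤ M := by
          simp only [hI, Finset.mem_Icc] at hx2
          rw [abs_le]; omega
        omega
      have hmem : k0 ∈ Finset.Icc 1 M := Finset.mem_Icc.2 ⟨hk0pos, hk0le⟩
      have hval : F k0 x1 x2 = (Int.gcd x1 x2 : ℝ) / |(x2:ℝ)| := by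
        simp only [hF]
        rw [if_pos (Int.gcd_dvd_left x1 x2 : (k0:ℤ) ∣ x1), if_pos ⟨(Int.gcd_dvd_right x1 x2 : (k0:ℤ) ∣ x2), h0⟩]
        rw [div_eq_mul_inv]
        ring
      calc (Int.gcd x1 x2 : ℝ) / |(x2:ℝ)| = F k0 x1 x2 := hval.symm
        _ ≤ ∑ k ∈ Finset.Icc 1 M, F k x1 x2 := Finset.single_le_sum hnn hmem
  have step2 : ∑ x1 ∈ I, ∑ x2 ∈ I,
      (if x2 = 0 then (0:ℝ) else (Int.gcd x1 x2 : ℝ) / |(x2:ℝ)|)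
      ≤ ∑ k ∈ Finset.Icc 1 M, (∑ x1 ∈ I, ∑ x2 ∈ I, F k x1 x2) := by
    rw [Finset.sum_comm (s := Finset.Icc 1 M)]
    apply Finset.sum_le_sum
    intro x1 hx1
    rw [Finset.sum_comm (s := Finset.Icc 1 M)]
    apply Finset.sum_le_sum
    intro x2 hx2
    exact step1 x1 hx1 x2 hx2
  -- factor for fixed k
  have step3 : ∀ k ∈ Finset.Icc 1 M,
      (∑ x1 ∈ I, ∑ x2 ∈ I, F k x1 x2) ≤ (3*M/k) * (2 * Hs M) := by
    intro k hk
    rcases Finset.mem_Icc.1 hk with ⟨hk1, hkM⟩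
    have hkR : (0:ℝ) < k := by exact_mod_cast hk1
    have hfac : (∑ x1 ∈ I, ∑ x2 ∈ I, F k x1 x2)
        = (∑ x1 ∈ I, if (k:ℤ) ∣ x1 then (1:ℝ) else 0) *
          (∑ x2 ∈ I, if ((k:ℤ) ∣ x2 ∧ x2 ≠ 0) then (k:ℝ) * |(x2:ℝ)|⁻¹ else 0) := by
      rw [Finset.sum_mul_sum]
    rw [hfac]
    have hb1 : (∑ x1 ∈ I, if (k:ℤ) ∣ x1 then (1:ℝ) else 0) ≤ 3*M/k := by
      rw [Finset.sum_boole]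
      have := card_multiples M k hk1
      have hMk : (k:ℝ) ≤ M := by exact_mod_cast hkM
      have h1 : 2*(M:ℝ)/k + 1 ≤ 3*M/k := by
        rw [div_add' _ _ _ hkR.ne', div_le_div_iff₀ hkR hkR]
        nlinarith
      calc ((I.filter (fun x => (k:ℤ) ∣ x)).card : ℝ) ≤ 2*M/k + 1 := this
        _ ≤ 3*M/k := h1
    have hb2 : (∑ x2 ∈ I, if ((k:ℤ) ∣ x2 ∧ x2 ≠ 0) then (k:ℝ) * |(x2:ℝ)|⁻¹ else 0)
        ≤ 2 * Hs M := by
      rw [← Finset.sum_filter]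
      rw [← Finset.mul_sum]
      have := sum_inv_multiples M k hk1
      calc (k:ℝ) * ∑ x ∈ I.filter (fun x => (k:ℤ) ∣ x ∧ x ≠ 0), |(x:ℝ)|⁻¹
          ≤ (k:ℝ) * (2 * Hs M / k) := by
            apply mul_le_mul_of_nonneg_left this hkR.le
        _ = 2 * Hs M := by field_simp
    have hpos2 : (0:ℝ) ≤ 2 * Hs M := by
      have := Hs_nonneg M; linarith
    have hpos3 : (0:ℝ) ≤ (∑ x2 ∈ I, if ((k:ℤ) ∣ x2 ∧ x2 ≠ 0) then (k:ℝ) * |(x2:ℝ)|⁻¹ else 0) := by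
      apply Finset.sum_nonneg; intro i _
      split
      · positivity
      · exact le_refl 0
    have hMk0 : (0:ℝ) ≤ 3*(M:ℝ)/k := by positivity
    exact mul_le_mul hb1 hb2 hpos3 hMk0
  -- sum over k
  have step4 : ∑ k ∈ Finset.Icc 1 M, (3*(M:ℝ)/k) * (2 * Hs M) ≤ 6 * M * (1 + Hs M)^2 := by
    have : ∑ k ∈ Finset.Icc 1 M, (3*(M:ℝ)/k) * (2 * Hs M)
        = 6 * M * Hs M * ∑ k ∈ Finset.Icc 1 M, (k:ℝ)⁻¹ := by
      rw [Finset.mul_sum]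
      apply Finset.sum_congr rfl
      intro k _
      field_simp
      ring
    rw [this]
    have h1 : ∑ k ∈ Finset.Icc 1 M, (k:ℝ)⁻¹ = Hs M := rfl
    rw [h1]
    have h2 := Hs_nonneg M
    have hMR : (0:ℝ) ≤ M := Nat.cast_nonneg M
    nlinarith
  calc ∑ x1 ∈ I, ∑ x2 ∈ I, (if x2 = 0 then (0:ℝ) else (Int.gcd x1 x2 : ℝ) / |(x2:ℝ)|)
      ≤ ∑ k ∈ Finset.Icc 1 M, (∑ x1 ∈ I, ∑ x2 ∈ I, F k x1 x2) := step2
    _ ≤ ∑ k ∈ Finset.Icc 1 M, (3*(M:ℝ)/k) * (2 * Hs M) := Finset.sum_le_sum step3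
    _ ≤ 6 * M * (1 + Hs M)^2 := step4

section quad
variable (M : ℕ)

/-- the box of pairs -/
noncomputable def B2 (M : ℕ) : Finset (ℤ × ℤ) := (Finset.Icc (-(M:ℤ)) M) ×ˢ (Finset.Icc (-(M:ℤ)) M)

noncomputable def QQ (M : ℕ) : Finset ((ℤ × ℤ) × (ℤ × ℤ)) := B2 M ×ˢ B2 M

def phi (q : (ℤ × ℤ) × (ℤ × ℤ)) : ℤ := q.1.1 * q.1.2 + q.2.1 * q.2.2

/-- uniform fiber bound -/
lemma nu_bound (hM : 1 ≤ M) (w : ℤ) :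
    (((QQ M).filter (fun q => phi q = w)).card : ℝ) ≤ 36 * M^2 * (1 + Hs M)^2 := by
  classical
  set I := Finset.Icc (-(M:ℤ)) M with hI
  -- fiberwise over (x1, x2)
  have hmaps : ∀ q ∈ (QQ M).filter (fun q => phi q = w), (q.1.1, q.2.1) ∈ B2 M := by
    intro q hq
    have h1 := (Finset.mem_filter.1 hq).1
    simp only [QQ, B2, Finset.mem_product] at h1 ⊢
    exact ⟨h1.1.1, h1.2.1⟩
  have hcard := Finset.card_eq_sum_card_fiberwise hmaps
  -- bound each fiber
  have hfiber : ∀ x ∈ B2 M,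
      ((((QQ M).filter (fun q => phi q = w)).filter
          (fun q => (q.1.1, q.2.1) = x)).card : ℝ)
      ≤ (if x.2 ≠ 0 then 2 * M * (Int.gcd x.1 x.2) / |(x.2:ℝ)| + 1
         else if x.1 ≠ 0 then (2*(M:ℝ)+1)
         else (2*(M:ℝ)+1)^2) := by
    intro x hx
    set fib := (((QQ M).filter (fun q => phi q = w)).filter (fun q => (q.1.1, q.2.1) = x))
      with hfib
    have hmem : ∀ q ∈ fib, q.1.1 = x.1 ∧ q.2.1 = x.2 ∧ q.1.2 ∈ I ∧ q.2.2 ∈ I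
        ∧ x.1 * q.1.2 + x.2 * q.2.2 = w := by
      intro q hq
      simp only [hfib, Finset.mem_filter] at hq
      simp only [QQ, B2, Finset.mem_product, phi] at hq
      obtain ⟨⟨⟨⟨_, h12⟩, ⟨_, h22⟩⟩, hphi⟩, hx12⟩ := hq
      have e1 : q.1.1 = x.1 := by rw [← hx12]
      have e2 : q.2.1 = x.2 := by rw [← hx12]
      refine ⟨e1, e2, h12, h22, ?_⟩
      rw [← e1, ← e2]; exact hphi
    by_cases h2 : x.2 ≠ 0
    · rw [if_pos h2]
      have hinj : ∀ q ∈ fib, ∀ q' ∈ fib,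
          ((q.1.2, q.2.2) : ℤ × ℤ) = (q'.1.2, q'.2.2) → q = q' := by
        intro q hq q' hq' he
        obtain ⟨a1, a2, _, _, _⟩ := hmem q hq
        obtain ⟨b1, b2, _, _, _⟩ := hmem q' hq'
        injection he with h1 h3
        ext
        · rw [a1, b1]
        · exact h1
        · rw [a2, b2]
        · exact h3
      have hsub : fib.image (fun q => (q.1.2, q.2.2))
          ⊆ (I ×ˢ I).filter (fun p => x.1 * p.1 + x.2 * p.2 = w) := by
        intro p hp
        rcases Finset.mem_image.1 hp with ⟨q, hq, rfl⟩
        obtain ⟨_, _, hy1, hy2, heq⟩ := hmem q hq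
        simp only [Finset.mem_filter, Finset.mem_product]
        exact ⟨⟨hy1, hy2⟩, heq⟩
      calc (fib.card : ℝ) = ((fib.image (fun q => (q.1.2, q.2.2))).card : ℝ) := by
            rw [Finset.card_image_of_injOn (fun q hq q' hq' => hinj q hq q' hq')]
        _ ≤ (((I ×ˢ I).filter (fun p => x.1 * p.1 + x.2 * p.2 = w)).card : ℝ) := by
            exact_mod_cast Finset.card_le_card hsub
        _ ≤ 2 * M * (Int.gcd x.1 x.2) / |(x.2:ℝ)| + 1 := count_linear M x.1 x.2 w h2
    · push_neg at h2
      rw [if_neg (by simp [h2])]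
      by_cases h1 : x.1 ≠ 0
      · rw [if_pos h1]
        -- y1 determined, y2 free: inject into I
        have hinj : ∀ q ∈ fib, ∀ q' ∈ fib, q.2.2 = q'.2.2 → q = q' := by
          intro q hq q' hq' he
          obtain ⟨a1, a2, _, _, ha⟩ := hmem q hq
          obtain ⟨b1, b2, _, _, hb⟩ := hmem q' hq'
          rw [h2, zero_mul, add_zero] at ha hb
          have : q.1.2 = q'.1.2 := by
            have : x.1 * q.1.2 = x.1 * q'.1.2 := by rw [ha, hb]
            exact mul_left_cancel₀ h1 this
          ext
          · rw [a1, b1]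
          · exact this
          · rw [a2, b2]
          · exact he
        have hsub : fib.image (fun q => q.2.2) ⊆ I := by
          intro y hy
          rcases Finset.mem_image.1 hy with ⟨q, hq, rfl⟩
          exact (hmem q hq).2.2.2.1
        calc (fib.card : ℝ) = ((fib.image (fun q => q.2.2)).card : ℝ) := by
              rw [Finset.card_image_of_injOn (fun q hq q' hq' => hinj q hq q' hq')]
          _ ≤ (I.card : ℝ) := by exact_mod_cast Finset.card_le_card hsub
          _ ≤ 2*(M:ℝ)+1 := by
              rw [hI, Int.card_Icc]
              have e : ((M:ℤ) + 1 - -(M:ℤ)).toNat = 2*M+1 := by omega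
              rw [e]; push_cast; linarith
      · push_neg at h1
        rw [if_neg (by simp [h1])]
        have hsub2 : fib ⊆ QQ M := by
          intro q hq
          exact (Finset.mem_filter.1 (Finset.mem_filter.1 hq).1).1
        have hqq : ((QQ M).card : ℝ) ≤ ((2*(M:ℝ)+1)^2)^2 := by
          have hIcard : I.card = 2*M+1 := by
            rw [hI, Int.card_Icc]; omega
          have : (QQ M).card = (2*M+1)^4 := by
            simp only [QQ, B2, Finset.card_product, ← hI, hIcard]; ring
          rw [this]; push_cast; nlinarith [Nat.cast_nonneg (α := ℝ) M]
        -- crude: fib ≤ card of pairs (y1,y2) = (2M+1)^2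
        have hinj : ∀ q ∈ fib, ∀ q' ∈ fib,
            ((q.1.2, q.2.2) : ℤ × ℤ) = (q'.1.2, q'.2.2) → q = q' := by
          intro q hq q' hq' he
          obtain ⟨a1, a2, _, _, _⟩ := hmem q hq
          obtain ⟨b1, b2, _, _, _⟩ := hmem q' hq'
          injection he with h1 h3
          ext
          · rw [a1, b1]
          · exact h1
          · rw [a2, b2]
          · exact h3
        have hsub : fib.image (fun q => (q.1.2, q.2.2)) ⊆ I ×ˢ I := by
          intro p hp
          rcases Finset.mem_image.1 hp with ⟨q, hq, rfl⟩
          obtain ⟨_, _, hy1, hy2, _⟩ := hmem q hq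
          exact Finset.mem_product.2 ⟨hy1, hy2⟩
        calc (fib.card : ℝ) = ((fib.image (fun q => (q.1.2, q.2.2))).card : ℝ) := by
              rw [Finset.card_image_of_injOn (fun q hq q' hq' => hinj q hq q' hq')]
          _ ≤ ((I ×ˢ I).card : ℝ) := by exact_mod_cast Finset.card_le_card hsub
          _ ≤ (2*(M:ℝ)+1)^2 := by
              rw [Finset.card_product]
              have hIcard : I.card = 2*M+1 := by rw [hI, Int.card_Icc]; omega
              rw [hIcard]; push_cast; nlinarith [Nat.cast_nonneg (α := ℝ) M]
  -- now sum the fiber bounds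
  have hMR : (1:ℝ) ≤ (M:ℝ) := by exact_mod_cast hM
  have hptwise : ∀ x ∈ B2 M,
      (if x.2 ≠ 0 then 2 * (M:ℝ) * (Int.gcd x.1 x.2) / |(x.2:ℝ)| + 1
         else if x.1 ≠ 0 then (2*(M:ℝ)+1)
         else (2*(M:ℝ)+1)^2)
      ≤ 2*(M:ℝ) * (if x.2 = 0 then (0:ℝ) else (Int.gcd x.1 x.2 : ℝ) / |(x.2:ℝ)|) + 1
        + (if x.2 = 0 then 2*(M:ℝ) else 0)
        + (if x = ((0:ℤ),(0:ℤ)) then (2*(M:ℝ)+1)^2 else 0) := by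
    intro x _
    by_cases h2 : x.2 = 0
    · simp only [h2, if_pos, ne_eq, not_true_eq_false, if_false, if_true, not_false_eq_true]
      by_cases h1 : x.1 = 0
      · have : x = ((0:ℤ),(0:ℤ)) := Prod.ext h1 h2
        rw [if_pos this, if_neg (by simp [h1]), mul_zero]
        linarith
      · rw [if_pos h1, if_neg (by
          intro hc
          apply h1
          exact congrArg Prod.fst hc), mul_zero]
        linarith
    · rw [if_pos h2, if_neg h2, if_neg h2, if_neg (by
        intro hc
        apply h2
        exact congrArg Prod.snd hc)]
      have : (0:ℝ) ≤ 2*(M:ℝ) * ((Int.gcd x.1 x.2 : ℝ) / |(x.2:ℝ)|) := by positivity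
      rw [mul_div_assoc]
      linarith
  have hsum1 : ∑ x ∈ B2 M, (if x.2 = 0 then (0:ℝ) else (Int.gcd x.1 x.2 : ℝ) / |(x.2:ℝ)|)
      ≤ 6 * M * (1 + Hs M)^2 := by
    rw [B2, Finset.sum_product]
    exact gcd_sum M hM
  have hsum3 : ∑ x ∈ B2 M, (if x.2 = 0 then 2*(M:ℝ) else 0) = (2*(M:ℝ)+1) * (2*(M:ℝ)) := by
    rw [B2, Finset.sum_product]
    have hinner : ∀ x1 : ℤ, ∑ x2 ∈ I, (if ((x1, x2) : ℤ × ℤ).2 = 0 then 2*(M:ℝ) else 0)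
        = 2*(M:ℝ) := by
      intro x1
      simp only
      rw [Finset.sum_ite_eq' I (0:ℤ) (fun _ => 2*(M:ℝ))]
      rw [if_pos (by simp only [hI, Finset.mem_Icc]; omega)]
    rw [Finset.sum_congr rfl (fun x1 _ => hinner x1), Finset.sum_const]
    have hIcard : I.card = 2*M+1 := by rw [hI, Int.card_Icc]; omega
    rw [hIcard]
    push_cast
    ring
  have hsum4 : ∑ x ∈ B2 M, (if x = ((0:ℤ),(0:ℤ)) then (2*(M:ℝ)+1)^2 else 0)
      = (2*(M:ℝ)+1)^2 := by
    rw [Finset.sum_ite_eq' (B2 M) ((0:ℤ),(0:ℤ)) (fun _ => (2*(M:ℝ)+1)^2)]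
    rw [if_pos (by simp only [B2, Finset.mem_product, hI, Finset.mem_Icc]; omega)]
  have hsum2 : ∑ x ∈ B2 M, (1:ℝ) = (2*(M:ℝ)+1)^2 := by
    rw [Finset.sum_const]
    have : (B2 M).card = (2*M+1)^2 := by
      rw [B2, Finset.card_product]
      have hIcard : I.card = 2*M+1 := by rw [hI, Int.card_Icc]; omega
      rw [hIcard]; ring
    rw [this]; push_cast; ring
  have hmain : (((QQ M).filter (fun q => phi q = w)).card : ℝ)
      ≤ ∑ x ∈ B2 M,
        (2*(M:ℝ) * (if x.2 = 0 then (0:ℝ) else (Int.gcd x.1 x.2 : ℝ) / |(x.2:ℝ)|) + 1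
        + (if x.2 = 0 then 2*(M:ℝ) else 0)
        + (if x = ((0:ℤ),(0:ℤ)) then (2*(M:ℝ)+1)^2 else 0)) := by
    calc (((QQ M).filter (fun q => phi q = w)).card : ℝ)
        = ∑ x ∈ B2 M, ((((QQ M).filter (fun q => phi q = w)).filter
            (fun q => (q.1.1, q.2.1) = x)).card : ℝ) := by
          rw [hcard]; push_cast; rfl
      _ ≤ ∑ x ∈ B2 M,
          (if x.2 ≠ 0 then 2 * (M:ℝ) * (Int.gcd x.1 x.2) / |(x.2:ℝ)| + 1
           else if x.1 ≠ 0 then (2*(M:ℝ)+1)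
           else (2*(M:ℝ)+1)^2) := Finset.sum_le_sum hfiber
      _ ≤ _ := Finset.sum_le_sum hptwise
  rw [Finset.sum_add_distrib, Finset.sum_add_distrib, Finset.sum_add_distrib,
    ← Finset.mul_sum] at hmain
  rw [hsum3, hsum4, hsum2] at hmain
  have hHs : (0:ℝ) ≤ Hs M := Hs_nonneg M
  have hgs : 2*(M:ℝ) * (∑ x ∈ B2 M, (if x.2 = 0 then (0:ℝ)
               else (Int.gcd x.1 x.2 : ℝ) / |(x.2:ℝ)|))
      ≤ 2*(M:ℝ) * (6 * M * (1 + Hs M)^2) := by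
    apply mul_le_mul_of_nonneg_left hsum1 (by positivity)
  have h1 : (1:ℝ) ≤ (1+Hs M)^2 := by nlinarith
  have h2 : (M:ℝ) ≤ (M:ℝ)^2 := by nlinarith
  have h3 : 24*(M:ℝ)^2 ≤ 24*(M:ℝ)^2*(1+Hs M)^2 := by nlinarith
  nlinarith

/-- sum of 1/(1+|w|) -/
lemma sum_inv_one_add_abs (W : ℕ) :
    ∑ w ∈ Finset.Icc (-(W:ℤ)) W, (1+|(w:ℝ)|)⁻¹ ≤ 1 + 2 * Hs W := by
  induction W with
  | zero =>
      have h0 : Finset.Icc (-((0:ℕ):ℤ)) ((0:ℕ):ℤ) = {0} := by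
        ext x; simp only [Finset.mem_Icc, Finset.mem_singleton, Nat.cast_zero]; omega
      rw [h0]
      simp [Hs]
  | succ m ih =>
      have hset : Finset.Icc (-((m+1:ℕ)):ℤ) ((m+1:ℕ))
          = insert (-((m+1:ℕ)):ℤ) (insert (((m+1:ℕ)):ℤ) (Finset.Icc (-(m:ℕ):ℤ) (m:ℕ))) := by
        ext x
        simp only [Finset.mem_Icc, Finset.mem_insert]
        push_cast
        omega
      have h1 : (-((m+1:ℕ)):ℤ) ∉ insert (((m+1:ℕ)):ℤ) (Finset.Icc (-(m:ℕ):ℤ) (m:ℕ)) := by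
        simp only [Finset.mem_insert, Finset.mem_Icc]
        push_cast
        omega
      have h2 : (((m+1:ℕ)):ℤ) ∉ Finset.Icc (-(m:ℕ):ℤ) (m:ℕ) := by
        simp only [Finset.mem_Icc]
        push_cast
        omega
      rw [hset, Finset.sum_insert h1, Finset.sum_insert h2]
      unfold Hs
      rw [Finset.sum_Icc_succ_top (by omega : 1 ≤ m + 1)]
      have e1 : |((-((m+1:ℕ)):ℤ) : ℝ)| = (m:ℝ) + 1 := by
        push_cast
        rw [abs_neg, abs_of_pos]
        linarith [Nat.cast_nonneg (α := ℝ) m]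
      have e2 : |((((m+1:ℕ)):ℤ) : ℝ)| = (m:ℝ) + 1 := by
        push_cast
        rw [abs_of_pos]
        linarith [Nat.cast_nonneg (α := ℝ) m]
      rw [e1, e2]
      unfold Hs at ih
      have hm1 : (0:ℝ) < (m:ℝ) + 1 := by positivity
      have : (1 + ((m:ℝ)+1))⁻¹ ≤ ((m:ℝ)+1)⁻¹ := by
        apply inv_anti₀ hm1
        linarith
      push_cast
      linarith

lemma phi_mem_Icc : ∀ q ∈ QQ M, phi q ∈ Finset.Icc (-(2*M^2:ℕ):ℤ) ((2*M^2:ℕ):ℤ) := by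
  intro q hq
  simp only [QQ, B2, Finset.mem_product, Finset.mem_Icc] at hq
  obtain ⟨⟨⟨h1, h2⟩, h3⟩, ⟨h4, h5⟩⟩ := hq
  simp only [Finset.mem_Icc, phi]
  push_cast
  constructor <;> nlinarith [abs_nonneg q.1.1]

lemma T_bound (hM : 1 ≤ M) :
    ∑ q ∈ QQ M, (1 + |((phi q : ℤ):ℝ)|)⁻¹
      ≤ 36 * M^2 * (1 + Hs M)^2 * (1 + 2 * Hs (2*M^2)) := by
  classical
  have hcomp := Finset.sum_comp (s := QQ M) (fun w : ℤ => (1 + |((w : ℤ):ℝ)|)⁻¹) phi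
  rw [hcomp]
  have hstep : ∀ w ∈ (QQ M).image phi,
      (((QQ M).filter (fun q => phi q = w)).card) • (1 + |((w : ℤ):ℝ)|)⁻¹
      ≤ 36 * M^2 * (1 + Hs M)^2 * (1 + |((w : ℤ):ℝ)|)⁻¹ := by
    intro w _
    rw [nsmul_eq_mul]
    apply mul_le_mul_of_nonneg_right (nu_bound M hM w) (by positivity)
  calc ∑ w ∈ (QQ M).image phi,
        (((QQ M).filter (fun q => phi q = w)).card) • (1 + |((w : ℤ):ℝ)|)⁻¹
      ≤ ∑ w ∈ (QQ M).image phi, 36 * M^2 * (1 + Hs M)^2 * (1 + |((w : ℤ):ℝ)|)⁻¹ :=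
        Finset.sum_le_sum hstep
    _ = 36 * M^2 * (1 + Hs M)^2 * ∑ w ∈ (QQ M).image phi, (1 + |((w : ℤ):ℝ)|)⁻¹ := by
        rw [Finset.mul_sum]
    _ ≤ 36 * M^2 * (1 + Hs M)^2 * (1 + 2 * Hs (2*M^2)) := by
        apply mul_le_mul_of_nonneg_left _ (by positivity)
        calc ∑ w ∈ (QQ M).image phi, (1 + |((w : ℤ):ℝ)|)⁻¹
            ≤ ∑ w ∈ Finset.Icc (-(2*M^2:ℕ):ℤ) ((2*M^2:ℕ):ℤ), (1 + |((w : ℤ):ℝ)|)⁻¹ := by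
              apply Finset.sum_le_sum_of_subset_of_nonneg
              · intro w hw
                rcases Finset.mem_image.1 hw with ⟨q, hq, rfl⟩
                exact phi_mem_Icc M q hq
              · intro w _ _; positivity
          _ ≤ 1 + 2 * Hs (2*M^2) := sum_inv_one_add_abs (2*M^2)
end quad

/-- the main quadruple-sum bound -/
lemma W_bound (K : ℕ) (hK : 1 ≤ K) :
    ∑ p ∈ (((Finset.Icc (-(K:ℤ)) K) ×ˢ (Finset.Icc (-(K:ℤ)) K)) ×ˢ
           ((Finset.Icc (-(K:ℤ)) K) ×ˢ (Finset.Icc (-(K:ℤ)) K))),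
      (1 + |((p.1.1^2 + p.1.2^2 - p.2.1^2 - p.2.2^2 : ℤ):ℝ)|)⁻¹
    ≤ 36 * (2*K:ℕ)^2 * (1 + Hs (2*K))^2 * (1 + 2 * Hs (2*(2*K)^2)) := by
  classical
  set J := Finset.Icc (-(K:ℤ)) K with hJ
  set ψ : (ℤ × ℤ) × (ℤ × ℤ) → (ℤ × ℤ) × (ℤ × ℤ) :=
    fun p => ((p.1.1 - p.2.1, p.1.1 + p.2.1), (p.1.2 - p.2.2, p.1.2 + p.2.2)) with hψ
  have hinj : ∀ p ∈ (J ×ˢ J) ×ˢ (J ×ˢ J), ∀ p' ∈ (J ×ˢ J) ×ˢ (J ×ˢ J),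
      ψ p = ψ p' → p = p' := by
    intro p _ p' _ he
    simp only [hψ, Prod.mk.injEq] at he
    obtain ⟨⟨e1, e2⟩, e3, e4⟩ := he
    have : p.1.1 = p'.1.1 := by omega
    have : p.2.1 = p'.2.1 := by omega
    have : p.1.2 = p'.1.2 := by omega
    have : p.2.2 = p'.2.2 := by omega
    ext <;> assumption
  have hval : ∀ p : (ℤ × ℤ) × (ℤ × ℤ),
      (1 + |((p.1.1^2 + p.1.2^2 - p.2.1^2 - p.2.2^2 : ℤ):ℝ)|)⁻¹
      = (1 + |((phi (ψ p) : ℤ):ℝ)|)⁻¹ := by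
    intro p
    have : phi (ψ p) = p.1.1^2 + p.1.2^2 - p.2.1^2 - p.2.2^2 := by
      simp only [phi, hψ]
      ring
    rw [this]
  have hsub : ((J ×ˢ J) ×ˢ (J ×ˢ J)).image ψ ⊆ QQ (2*K) := by
    intro q hq
    rcases Finset.mem_image.1 hq with ⟨p, hp, rfl⟩
    simp only [Finset.mem_product, hJ, Finset.mem_Icc] at hp
    obtain ⟨⟨⟨a1,a2⟩,⟨b1,b2⟩⟩,⟨⟨c1,c2⟩,⟨d1,d2⟩⟩⟩ := hp
    simp only [QQ, B2, hψ, Finset.mem_product, Finset.mem_Icc]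
    push_cast
    omega
  calc ∑ p ∈ (J ×ˢ J) ×ˢ (J ×ˢ J),
        (1 + |((p.1.1^2 + p.1.2^2 - p.2.1^2 - p.2.2^2 : ℤ):ℝ)|)⁻¹
      = ∑ p ∈ (J ×ˢ J) ×ˢ (J ×ˢ J), (1 + |((phi (ψ p) : ℤ):ℝ)|)⁻¹ :=
        Finset.sum_congr rfl (fun p _ => hval p)
    _ = ∑ q ∈ ((J ×ˢ J) ×ˢ (J ×ˢ J)).image ψ, (1 + |((phi q : ℤ):ℝ)|)⁻¹ :=
        (Finset.sum_image (f := fun q => (1 + |((phi q : ℤ):ℝ)|)⁻¹) hinj).symm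
    _ ≤ ∑ q ∈ QQ (2*K), (1 + |((phi q : ℤ):ℝ)|)⁻¹ := by
        apply Finset.sum_le_sum_of_subset_of_nonneg hsub
        intro q _ _; positivity
    _ ≤ 36 * (2*K:ℕ)^2 * (1 + Hs (2*K))^2 * (1 + 2 * Hs (2*(2*K)^2)) :=
        T_bound (2*K) (by omega)

/-- e^{ir} -/
noncomputable def ce (r : ℝ) : ℂ := Complex.exp (r * Complex.I)

lemma ce_norm (r : ℝ) : ‖ce r‖ = 1 := by
  rw [ce]
  exact Complex.norm_exp_ofReal_mul_I r

lemma ce_add (a b : ℝ) : ce (a + b) = ce a * ce b := by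
  rw [ce, ce, ce, ← Complex.exp_add]
  push_cast
  ring_nf

lemma ce_re (r : ℝ) : (ce r).re = Real.cos r := Complex.exp_ofReal_mul_I_re r

lemma ce_conj (r : ℝ) : (starRingEnd ℂ) (ce r) = ce (-r) := by
  rw [ce, ce, ← Complex.exp_conj]
  congr 1
  simp [Complex.conj_I]

lemma ce_continuous : Continuous ce := by
  unfold ce
  fun_prop

/-- bound for ∫ cos(ux) on [0,1] -/
lemma int_cos_bound (u : ℝ) :
    |∫ x in (0:ℝ)..1, Real.cos (u*x)| ≤ 3 * (1+|u|)⁻¹ := by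
  by_cases h : |u| ≤ 2
  · have h1 : |∫ x in (0:ℝ)..1, Real.cos (u*x)| ≤ 1 := by
      have := intervalIntegral.norm_integral_le_of_norm_le_const
        (C := 1) (f := fun x : ℝ => Real.cos (u*x)) (a := 0) (b := 1) ?_
      · simpa using this
      · intro x _
        simp only [Real.norm_eq_abs]
        exact Real.abs_cos_le_one _
    have h2 : (1:ℝ) ≤ 3 * (1+|u|)⁻¹ := by
      rw [le_mul_inv_iff₀ (by positivity)]
      linarith
    linarith
  · push_neg at h
    have hu : u ≠ 0 := by
      intro h0; rw [h0] at h; simp at h; linarith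
    have hF : ∀ x ∈ Set.uIcc (0:ℝ) 1,
        HasDerivAt (fun y => Real.sin (u*y) / u) (Real.cos (u*x)) x := by
      intro x _
      have h1 : HasDerivAt (fun y : ℝ => u*y) u x := by
        simpa using (hasDerivAt_id x).const_mul u
      have h2 : HasDerivAt (fun y => Real.sin (u*y)) (Real.cos (u*x) * u) x :=
        (Real.hasDerivAt_sin (u*x)).comp x h1
      have h3 := h2.div_const u
      simpa [mul_div_assoc, mul_div_cancel_right₀ _ hu] using h3
    have hint : ∫ x in (0:ℝ)..1, Real.cos (u*x) = Real.sin u / u := by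
      rw [intervalIntegral.integral_eq_sub_of_hasDerivAt hF
        (by apply Continuous.intervalIntegrable; fun_prop)]
      simp
    rw [hint]
    rw [abs_div]
    have h4 : |Real.sin u| ≤ 1 := Real.abs_sin_le_one u
    have h5 : (0:ℝ) < |u| := abs_pos.2 hu
    calc |Real.sin u| / |u| ≤ 1 / |u| := by gcongr
      _ ≤ 3 * (1+|u|)⁻¹ := by
          rw [div_le_iff₀ h5, mul_assoc, inv_mul_eq_div, mul_div_assoc']
          rw [le_div_iff₀ (by positivity)]
          nlinarith

/-- the Fejér-type weight -/
noncomputable def wker (t : ℝ) : ℝ := 2 * ∫ x in (0:ℝ)..1, (1-x) * Real.cos (t*x)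

lemma wker_integrand_integrable (t : ℝ) :
    IntervalIntegrable (fun x => (1-x) * Real.cos (t*x)) MeasureTheory.volume 0 1 := by
  apply Continuous.intervalIntegrable
  fun_prop

lemma wker_eval {t : ℝ} (ht : t ≠ 0) :
    wker t = 2 * ((1 - Real.cos t) / t^2) := by
  have hF : ∀ x ∈ Set.uIcc (0:ℝ) 1,
      HasDerivAt (fun y => (1-y) * Real.sin (t*y) / t - Real.cos (t*y) / t^2)
        ((1-x) * Real.cos (t*x)) x := by
    intro x _
    have h1 : HasDerivAt (fun y : ℝ => t*y) t x := by
      simpa using (hasDerivAt_id x).const_mul t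
    have hsin : HasDerivAt (fun y => Real.sin (t*y)) (Real.cos (t*x) * t) x :=
      (Real.hasDerivAt_sin (t*x)).comp x h1
    have hcos : HasDerivAt (fun y => Real.cos (t*y)) (-Real.sin (t*x) * t) x :=
      (Real.hasDerivAt_cos (t*x)).comp x h1
    have hlin : HasDerivAt (fun y : ℝ => 1 - y) (-1) x := by
      simpa using (hasDerivAt_id x).const_sub 1
    have hprod := (hlin.mul hsin).div_const t
    have hG2 := hcos.div_const (t^2)
    have := hprod.sub hG2
    refine this.congr_deriv ?_
    field_simp
    ring
  rw [wker, intervalIntegral.integral_eq_sub_of_hasDerivAt hF (wker_integrand_integrable t)]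
  simp [Real.sin_zero, Real.cos_zero]
  field_simp
  ring

lemma wker_nonneg (t : ℝ) : 0 ≤ wker t := by
  by_cases ht : t = 0
  · subst ht
    rw [wker]
    have : ∀ x ∈ Set.uIcc (0:ℝ) 1, HasDerivAt (fun y : ℝ => y - y^2/2) ((1-x) * Real.cos (0*x)) x := by
      intro x _
      simp only [zero_mul, Real.cos_zero, mul_one]
      have h1 : HasDerivAt (fun y : ℝ => y) 1 x := hasDerivAt_id x
      have h2 : HasDerivAt (fun y : ℝ => y^2) (2*x) x := by
        simpa [two_mul] using (hasDerivAt_pow 2 x)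
      have := h1.sub (h2.div_const 2)
      refine this.congr_deriv ?_
      ring
    rw [intervalIntegral.integral_eq_sub_of_hasDerivAt this (wker_integrand_integrable 0)]
    norm_num
  · rw [wker_eval ht]
    have h1 : Real.cos t ≤ 1 := Real.cos_le_one t
    have h2 : (0:ℝ) < t^2 := by positivity
    have h3 : (0:ℝ) ≤ 1 - Real.cos t := by linarith
    have := div_nonneg h3 h2.le
    linarith

lemma wker_ge {t : ℝ} (ht : |t| ≤ 1) : Real.cos 1 ≤ wker t := by
  have hmono : ∫ x in (0:ℝ)..1, (1-x) * Real.cos 1 ≤ ∫ x in (0:ℝ)..1, (1-x) * Real.cos (t*x) := by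
    apply intervalIntegral.integral_mono_on (by norm_num)
      (by apply Continuous.intervalIntegrable; fun_prop)
      (wker_integrand_integrable t)
    intro x hx
    rcases hx with ⟨hx0, hx1⟩
    have habs : |t*x| ≤ 1 := by
      rw [abs_mul]
      have hxabs : |x| ≤ 1 := by rw [abs_of_nonneg hx0]; exact hx1
      calc |t| * |x| ≤ 1 * 1 := mul_le_mul ht hxabs (abs_nonneg x) zero_le_one
        _ = 1 := by norm_num
    have hcos : Real.cos 1 ≤ Real.cos (t*x) := by
      rw [← Real.cos_abs (t*x)]
      apply Real.cos_le_cos_of_nonneg_of_le_pi (abs_nonneg _) _ habs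
      linarith [Real.pi_gt_three]
    apply mul_le_mul_of_nonneg_left hcos (by linarith)
  have heval : ∫ x in (0:ℝ)..1, (1-x) * Real.cos 1 = Real.cos 1 / 2 := by
    rw [intervalIntegral.integral_mul_const]
    have : ∫ x in (0:ℝ)..1, (1-x) = 1/2 := by
      rw [intervalIntegral.integral_sub intervalIntegrable_const
        (by apply Continuous.intervalIntegrable; fun_prop)]
      simp [integral_id]
      norm_num
    rw [this]
    ring
  rw [wker]
  rw [heval] at hmono
  linarith

lemma cos_one_pos : (0:ℝ) < Real.cos 1 := by
  apply Real.cos_pos_of_mem_Ioo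
  constructor
  · linarith [Real.pi_gt_three]
  · linarith [Real.pi_gt_three]

noncomputable def Sθ (θ : ℝ) (K : ℕ) (x : ℝ) : ℂ :=
  ∑ n ∈ Finset.Icc (-(K:ℤ)) K, ce (θ * (n:ℝ)^2 * x)

lemma S_continuous (θ : ℝ) (K : ℕ) : Continuous (Sθ θ K) := by
  apply continuous_finset_sum
  intro n _
  exact ce_continuous.comp (by fun_prop)

lemma S_norm_le (θ : ℝ) (K : ℕ) (x : ℝ) : ‖Sθ θ K x‖ ≤ 2*(K:ℝ)+1 := by
  calc ‖Sθ θ K x‖ ≤ ∑ n ∈ Finset.Icc (-(K:ℤ)) K, ‖ce (θ * (n:ℝ)^2 * x)‖ :=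
        norm_sum_le _ _
    _ = ∑ n ∈ Finset.Icc (-(K:ℤ)) K, 1 := by
        apply Finset.sum_congr rfl; intro n _; exact ce_norm _
    _ = ((Finset.Icc (-(K:ℤ)) K).card : ℝ) := by rw [Finset.sum_const]; simp
    _ ≤ 2*(K:ℝ)+1 := by
        rw [Int.card_Icc]
        have e : ((K:ℤ) + 1 - -(K:ℤ)).toNat = 2*K+1 := by omega
        rw [e]; push_cast; linarith

lemma S_normsq (θ : ℝ) (K : ℕ) (x : ℝ) :
    ‖Sθ θ K x‖^2 = ∑ p ∈ (Finset.Icc (-(K:ℤ)) K) ×ˢ (Finset.Icc (-(K:ℤ)) K),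
      Real.cos (θ * ((p.1:ℝ)^2 - (p.2:ℝ)^2) * x) := by
  have h1 : (Sθ θ K x) * (starRingEnd ℂ) (Sθ θ K x)
      = ∑ p ∈ (Finset.Icc (-(K:ℤ)) K) ×ˢ (Finset.Icc (-(K:ℤ)) K),
          ce (θ * ((p.1:ℝ)^2 - (p.2:ℝ)^2) * x) := by
    rw [Sθ, map_sum, Finset.sum_mul_sum]
    rw [Finset.sum_product]
    apply Finset.sum_congr rfl
    intro a _
    apply Finset.sum_congr rfl
    intro b _
    rw [ce_conj, ← ce_add]
    congr 1
    ring
  have h2 : ‖Sθ θ K x‖^2 = ((Sθ θ K x) * (starRingEnd ℂ) (Sθ θ K x)).re := by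
    rw [Complex.mul_conj]
    rw [Complex.sq_norm]
    simp
  rw [h2, h1, Complex.re_sum]
  apply Finset.sum_congr rfl
  intro p _
  exact ce_re _

lemma cos_mul_cos (p q : ℝ) :
    Real.cos p * Real.cos q = (Real.cos (p - q) + Real.cos (p + q)) / 2 := by
  rw [Real.cos_sub, Real.cos_add]
  ring

lemma inv_theta_bound {θmin θ : ℝ} (h0 : 0 < θmin) (h1 : θmin ≤ θ) (v : ℝ) :
    (1+|θ*v|)⁻¹ ≤ max 1 θmin⁻¹ * (1+|v|)⁻¹ := by
  have hθ : 0 < θ := lt_of_lt_of_le h0 h1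
  have hm1 : (1:ℝ) ≤ max 1 θmin⁻¹ := le_max_left _ _
  have hm2 : θmin⁻¹ ≤ max 1 θmin⁻¹ := le_max_right _ _
  have habs : |θ*v| = θ * |v| := by rw [abs_mul, abs_of_pos hθ]
  have hθinv : (1:ℝ) ≤ θmin⁻¹ * θ := by
    rw [inv_mul_eq_div, le_div_iff₀ h0]
    linarith
  have key : (1+|v|) ≤ (max 1 θmin⁻¹) * (1+|θ*v|) := by
    rw [habs, mul_add, mul_one]
    have h3 : |v| ≤ max 1 θmin⁻¹ * (θ * |v|) := by
      calc |v| = 1 * |v| := (one_mul _).symm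
        _ ≤ (θmin⁻¹ * θ) * |v| := by
            apply mul_le_mul_of_nonneg_right hθinv (abs_nonneg v)
        _ ≤ (max 1 θmin⁻¹ * θ) * |v| := by
            apply mul_le_mul_of_nonneg_right _ (abs_nonneg v)
            apply mul_le_mul_of_nonneg_right hm2 hθ.le
        _ = max 1 θmin⁻¹ * (θ * |v|) := by ring
    linarith
  have hp1 : (0:ℝ) < 1+|θ*v| := by positivity
  have hp2 : (0:ℝ) < 1+|v| := by positivity
  have hmaxpos : (0:ℝ) < max 1 θmin⁻¹ := by positivity
  have hstep : (1+|v|)/(max 1 θmin⁻¹) ≤ 1+|θ*v| := by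
    rw [div_le_iff₀ hmaxpos]
    calc 1+|v| ≤ (max 1 θmin⁻¹) * (1+|θ*v|) := key
      _ = (1+|θ*v|) * (max 1 θmin⁻¹) := by ring
  calc (1+|θ*v|)⁻¹ ≤ ((1+|v|)/(max 1 θmin⁻¹))⁻¹ := by
        apply inv_anti₀ (by positivity) hstep
    _ = max 1 θmin⁻¹ * (1+|v|)⁻¹ := by
        rw [inv_div, div_eq_mul_inv]

/-- the fourth moment bound -/
lemma moment4 {θmin θ : ℝ} (K : ℕ) (hK : 1 ≤ K) (h0 : 0 < θmin) (h1 : θmin ≤ θ) :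
    ∫ x in (0:ℝ)..1, ‖Sθ θ K x‖^4
      ≤ 3 * (max 1 θmin⁻¹) *
        (36 * ((2*K:ℕ):ℝ)^2 * (1 + Hs (2*K))^2 * (1 + 2 * Hs (2*(2*K)^2))) := by
  classical
  set J := Finset.Icc (-(K:ℤ)) K with hJ
  set P := J ×ˢ J with hP
  set Z := P ×ˢ P with hZ
  set u : ℤ × ℤ → ℝ := fun p => θ * ((p.1:ℝ)^2 - (p.2:ℝ)^2) with hu
  -- pointwise expansion of |S|^4
  have hexp : ∀ x : ℝ, ‖Sθ θ K x‖^4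
      = ∑ z ∈ Z, (Real.cos ((u z.1 - u z.2) * x) + Real.cos ((u z.1 + u z.2) * x)) / 2 := by
    intro x
    have h4 : ‖Sθ θ K x‖^4 = (‖Sθ θ K x‖^2)^2 := by ring
    rw [h4, S_normsq, ← hP]
    rw [sq, Finset.sum_mul_sum, ← Finset.sum_product']
    rw [← hZ]
    apply Finset.sum_congr rfl
    intro z _
    rw [cos_mul_cos]
    congr 2
    · simp only [hu]; ring
    · simp only [hu]; ring
  -- integrability of the pieces
  have hcont : ∀ (c : ℝ), IntervalIntegrable (fun x => Real.cos (c * x))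
      MeasureTheory.volume 0 1 := by
    intro c
    apply Continuous.intervalIntegrable
    fun_prop
  have hSint : ∀ m : ℕ, IntervalIntegrable (fun x => ‖Sθ θ K x‖^m)
      MeasureTheory.volume 0 1 := by
    intro m
    apply Continuous.intervalIntegrable
    exact ((S_continuous θ K).norm).pow m
  -- swap integral and sum
  have hswap : ∫ x in (0:ℝ)..1, ‖Sθ θ K x‖^4
      = ∑ z ∈ Z, ∫ x in (0:ℝ)..1,
          (Real.cos ((u z.1 - u z.2) * x) + Real.cos ((u z.1 + u z.2) * x)) / 2 := by
    rw [← intervalIntegral.integral_finset_sum]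
    · apply intervalIntegral.integral_congr
      intro x _
      exact hexp x
    · intro z _
      apply Continuous.intervalIntegrable
      fun_prop
  rw [hswap]
  -- term bound
  set phi4 : (ℤ × ℤ) × (ℤ × ℤ) → ℤ :=
    fun p => p.1.1^2 + p.1.2^2 - p.2.1^2 - p.2.2^2 with hphi4
  set cm := max 1 θmin⁻¹ with hcm
  have hcmpos : (0:ℝ) < cm := by rw [hcm]; positivity
  have hterm : ∀ z ∈ Z,
      (∫ x in (0:ℝ)..1,
        (Real.cos ((u z.1 - u z.2) * x) + Real.cos ((u z.1 + u z.2) * x)) / 2)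
      ≤ (3*cm/2) * ((1 + |((phi4 ((z.1.1, z.2.2),(z.1.2, z.2.1)) : ℤ):ℝ)|)⁻¹
          + (1 + |((phi4 ((z.1.1, z.2.1),(z.1.2, z.2.2)) : ℤ):ℝ)|)⁻¹) := by
    intro z _
    have hsplit : (∫ x in (0:ℝ)..1,
        (Real.cos ((u z.1 - u z.2) * x) + Real.cos ((u z.1 + u z.2) * x)) / 2)
        = ((∫ x in (0:ℝ)..1, Real.cos ((u z.1 - u z.2) * x))
          + (∫ x in (0:ℝ)..1, Real.cos ((u z.1 + u z.2) * x))) / 2 := by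
      rw [← intervalIntegral.integral_add (hcont _) (hcont _)]
      rw [← intervalIntegral.integral_div]
    rw [hsplit]
    have hminus : u z.1 - u z.2 = θ * ((phi4 ((z.1.1, z.2.2),(z.1.2, z.2.1)) : ℤ):ℝ) := by
      simp only [hu, hphi4]
      push_cast
      ring
    have hplus : u z.1 + u z.2 = θ * ((phi4 ((z.1.1, z.2.1),(z.1.2, z.2.2)) : ℤ):ℝ) := by
      simp only [hu, hphi4]
      push_cast
      ring
    have hb1 : (∫ x in (0:ℝ)..1, Real.cos ((u z.1 - u z.2) * x))
        ≤ 3 * cm * (1 + |((phi4 ((z.1.1, z.2.2),(z.1.2, z.2.1)) : ℤ):ℝ)|)⁻¹ := by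
      calc (∫ x in (0:ℝ)..1, Real.cos ((u z.1 - u z.2) * x))
          ≤ |∫ x in (0:ℝ)..1, Real.cos ((u z.1 - u z.2) * x)| := le_abs_self _
        _ ≤ 3 * (1+|u z.1 - u z.2|)⁻¹ := int_cos_bound _
        _ ≤ 3 * (cm * (1 + |((phi4 ((z.1.1, z.2.2),(z.1.2, z.2.1)) : ℤ):ℝ)|)⁻¹) := by
            apply mul_le_mul_of_nonneg_left _ (by norm_num)
            rw [hminus, hcm]
            exact inv_theta_bound h0 h1 _
        _ = 3 * cm * (1 + |((phi4 ((z.1.1, z.2.2),(z.1.2, z.2.1)) : ℤ):ℝ)|)⁻¹ := by ring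
    have hb2 : (∫ x in (0:ℝ)..1, Real.cos ((u z.1 + u z.2) * x))
        ≤ 3 * cm * (1 + |((phi4 ((z.1.1, z.2.1),(z.1.2, z.2.2)) : ℤ):ℝ)|)⁻¹ := by
      calc (∫ x in (0:ℝ)..1, Real.cos ((u z.1 + u z.2) * x))
          ≤ |∫ x in (0:ℝ)..1, Real.cos ((u z.1 + u z.2) * x)| := le_abs_self _
        _ ≤ 3 * (1+|u z.1 + u z.2|)⁻¹ := int_cos_bound _
        _ ≤ 3 * (cm * (1 + |((phi4 ((z.1.1, z.2.1),(z.1.2, z.2.2)) : ℤ):ℝ)|)⁻¹) := by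
            apply mul_le_mul_of_nonneg_left _ (by norm_num)
            rw [hplus, hcm]
            exact inv_theta_bound h0 h1 _
        _ = 3 * cm * (1 + |((phi4 ((z.1.1, z.2.1),(z.1.2, z.2.2)) : ℤ):ℝ)|)⁻¹ := by ring
    linarith
  -- reindexing helper
  have reindex : ∀ (σ : (ℤ × ℤ) × (ℤ × ℤ) → (ℤ × ℤ) × (ℤ × ℤ)),
      (∀ z ∈ Z, σ z ∈ Z) → (∀ z ∈ Z, ∀ z' ∈ Z, σ z = σ z' → z = z') →
      ∑ z ∈ Z, (1 + |((phi4 (σ z) : ℤ):ℝ)|)⁻¹ ≤ ∑ p ∈ Z, (1 + |((phi4 p : ℤ):ℝ)|)⁻¹ := by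
    intro σ hmap hinj
    calc ∑ z ∈ Z, (1 + |((phi4 (σ z) : ℤ):ℝ)|)⁻¹
        = ∑ q ∈ Z.image σ, (1 + |((phi4 q : ℤ):ℝ)|)⁻¹ :=
          (Finset.sum_image (f := fun q => (1 + |((phi4 q : ℤ):ℝ)|)⁻¹) hinj).symm
      _ ≤ ∑ p ∈ Z, (1 + |((phi4 p : ℤ):ℝ)|)⁻¹ := by
          apply Finset.sum_le_sum_of_subset_of_nonneg
          · intro q hq
            rcases Finset.mem_image.1 hq with ⟨z, hz, rfl⟩
            exact hmap z hz
          · intro q _ _; positivity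
  have hmem : ∀ z : (ℤ × ℤ) × (ℤ × ℤ), z ∈ Z ↔
      (z.1.1 ∈ J ∧ z.1.2 ∈ J ∧ z.2.1 ∈ J ∧ z.2.2 ∈ J) := by
    intro z
    simp only [hZ, hP, Finset.mem_product]
    tauto
  have hre1 := reindex (fun z => ((z.1.1, z.2.2),(z.1.2, z.2.1)))
    (by intro z hz; rw [hmem] at hz ⊢; tauto)
    (by
      intro z hz z' hz' he
      simp only [Prod.mk.injEq] at he
      obtain ⟨⟨e1, e2⟩, e3, e4⟩ := he
      ext <;> assumption)
  have hre2 := reindex (fun z => ((z.1.1, z.2.1),(z.1.2, z.2.2)))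
    (by intro z hz; rw [hmem] at hz ⊢; tauto)
    (by
      intro z hz z' hz' he
      simp only [Prod.mk.injEq] at he
      obtain ⟨⟨e1, e2⟩, e3, e4⟩ := he
      ext <;> assumption)
  have hW := W_bound K hK
  have hWsum : ∑ p ∈ Z, (1 + |((phi4 p : ℤ):ℝ)|)⁻¹
      ≤ 36 * ((2*K:ℕ):ℝ)^2 * (1 + Hs (2*K))^2 * (1 + 2 * Hs (2*(2*K)^2)) := by
    calc ∑ p ∈ Z, (1 + |((phi4 p : ℤ):ℝ)|)⁻¹
        = ∑ p ∈ (J ×ˢ J) ×ˢ (J ×ˢ J),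
            (1 + |((p.1.1^2 + p.1.2^2 - p.2.1^2 - p.2.2^2 : ℤ):ℝ)|)⁻¹ := by
          rw [hZ, hP]
      _ ≤ _ := hW
  calc ∑ z ∈ Z, ∫ x in (0:ℝ)..1,
        (Real.cos ((u z.1 - u z.2) * x) + Real.cos ((u z.1 + u z.2) * x)) / 2
      ≤ ∑ z ∈ Z, (3*cm/2) * ((1 + |((phi4 ((z.1.1, z.2.2),(z.1.2, z.2.1)) : ℤ):ℝ)|)⁻¹
          + (1 + |((phi4 ((z.1.1, z.2.1),(z.1.2, z.2.2)) : ℤ):ℝ)|)⁻¹) :=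
        Finset.sum_le_sum hterm
    _ = (3*cm/2) * ((∑ z ∈ Z, (1 + |((phi4 ((z.1.1, z.2.2),(z.1.2, z.2.1)) : ℤ):ℝ)|)⁻¹)
          + ∑ z ∈ Z, (1 + |((phi4 ((z.1.1, z.2.1),(z.1.2, z.2.2)) : ℤ):ℝ)|)⁻¹) := by
        rw [← Finset.sum_add_distrib, ← Finset.mul_sum]
    _ ≤ (3*cm/2) * (2 * (36 * ((2*K:ℕ):ℝ)^2 * (1 + Hs (2*K))^2 * (1 + 2 * Hs (2*(2*K)^2)))) := by
        apply mul_le_mul_of_nonneg_left _ (by positivity)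
        have hA := le_trans hre1 hWsum
        have hB := le_trans hre2 hWsum
        linarith
    _ = 3 * cm * (36 * ((2*K:ℕ):ℝ)^2 * (1 + Hs (2*K))^2 * (1 + 2 * Hs (2*(2*K)^2))) := by
        ring

set_option maxHeartbeats 1000000 in
/-- the fourth moment in terms of N -/
lemma moment4N {θmin θ : ℝ} (K : ℕ) (hK : 1 ≤ K) (h0 : 0 < θmin) (h1 : θmin ≤ θ)
    {N ε : ℝ} (hN : 1 ≤ N) (hKN : (K:ℝ) ≤ N) (hε : 0 < ε) (hε1 : ε ≤ 1) :
    ∫ x in (0:ℝ)..1, ‖Sθ θ K x‖^4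
      ≤ (442368 * (max 1 θmin⁻¹) * (2 + 12/ε)^3) * N ^ (2 + ε/2) := by
  have hNpos : (0:ℝ) < N := by linarith
  have hKR : (1:ℝ) ≤ (K:ℝ) := by exact_mod_cast hK
  obtain ⟨δ, hδ⟩ : ∃ δ : ℝ, δ = ε/12 := ⟨_, rfl⟩
  have hδpos : 0 < δ := by rw [hδ]; positivity
  have hδ1 : δ ≤ 1 := by rw [hδ]; linarith
  obtain ⟨X, hX⟩ : ∃ X : ℕ, X = 2*(2*K)^2 := ⟨_, rfl⟩
  have hX1 : 1 ≤ X := by rw [hX]; nlinarith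
  have h2KX : 2*K ≤ X := by rw [hX]; nlinarith
  have hcm : (0:ℝ) < max 1 θmin⁻¹ := by positivity
  have hHs1 : 1 + Hs (2*K) ≤ 1 + Hs X := by linarith [Hs_mono h2KX]
  have hHsX : 1 + Hs X ≤ (2 + 1/δ) * (X:ℝ) ^ δ := one_add_Hs_le hX1 hδpos
  have hXN : ((X:ℕ):ℝ) ≤ 8 * N^2 := by
    rw [hX]
    push_cast
    nlinarith
  have hXpow : ((X:ℕ):ℝ) ^ δ ≤ 8 * N ^ (2*δ) := by
    calc ((X:ℕ):ℝ) ^ δ ≤ (8 * N^2) ^ δ := by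
          apply Real.rpow_le_rpow (by positivity) hXN hδpos.le
      _ = 8 ^ δ * (N^2) ^ δ := Real.mul_rpow (by norm_num) (by positivity)
      _ ≤ 8 * N ^ (2*δ) := by
          have h8 : (8:ℝ) ^ δ ≤ 8 := by
            calc (8:ℝ) ^ δ ≤ (8:ℝ) ^ (1:ℝ) :=
              Real.rpow_le_rpow_of_exponent_le (by norm_num) hδ1
            _ = 8 := Real.rpow_one 8
          have hN2 : ((N:ℝ)^2) ^ δ = N ^ (2*δ) := by
            rw [← Real.rpow_natCast N 2, ← Real.rpow_mul hNpos.le]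
            norm_num
          rw [hN2]
          apply mul_le_mul_of_nonneg_right h8 (by positivity)
  have hHsfinal : 1 + Hs X ≤ (2 + 1/δ) * 8 * N ^ (2*δ) := by
    calc 1 + Hs X ≤ (2 + 1/δ) * ((X:ℕ):ℝ) ^ δ := hHsX
      _ ≤ (2 + 1/δ) * (8 * N ^ (2*δ)) := by
          apply mul_le_mul_of_nonneg_left hXpow (by positivity)
      _ = (2 + 1/δ) * 8 * N ^ (2*δ) := by ring
  have hHpos : (0:ℝ) ≤ 1 + Hs X := by linarith [Hs_nonneg X]
  have hHpos2 : (0:ℝ) ≤ 1 + Hs (2*K) := by linarith [Hs_nonneg (2*K)]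
  have hcube : (1 + Hs (2*K))^2 * (1 + 2*Hs X) ≤ 2 * (1 + Hs X)^3 := by
    have e1 : 1 + 2*Hs X ≤ 2*(1 + Hs X) := by linarith [Hs_nonneg X]
    have e2 : (1 + Hs (2*K))^2 ≤ (1 + Hs X)^2 := by nlinarith
    nlinarith [sq_nonneg (1 + Hs X), Hs_nonneg X]
  have h2K : ((2*K:ℕ):ℝ)^2 ≤ 4*N^2 := by
    push_cast
    nlinarith
  have hM := moment4 K hK h0 h1
  rw [← hX] at hM
  have hterm : (1 + Hs X)^3 ≤ ((2+1/δ)*8)^3 * (N ^ (2*δ))^3 := by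
    calc (1 + Hs X)^3 ≤ ((2 + 1/δ) * 8 * N ^ (2*δ))^3 := by
          apply pow_le_pow_left₀ hHpos hHsfinal
      _ = ((2+1/δ)*8)^3 * (N ^ (2*δ))^3 := by ring
  have hNδ3 : (N ^ (2*δ))^3 = N ^ (6*δ) := by
    rw [← Real.rpow_natCast (N ^ (2*δ)) 3, ← Real.rpow_mul hNpos.le]
    norm_num
    ring_nf
  have hδe : 2 + 1/δ = 2 + 12/ε := by
    rw [hδ]
    congr 1
    rw [one_div, div_eq_mul_inv]
    rw [mul_inv, inv_inv]
    ring
  have e3 : 36 * ((2*K:ℕ):ℝ)^2 * (1 + Hs (2*K))^2 * (1 + 2 * Hs X)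
      ≤ 36 * (4*N^2) * (2 * (1 + Hs X)^3) := by
    have h4 : (0:ℝ) ≤ (1 + Hs (2*K))^2 * (1 + 2*Hs X) := by
      apply mul_nonneg (by positivity)
      linarith [Hs_nonneg X]
    calc 36 * ((2*K:ℕ):ℝ)^2 * (1 + Hs (2*K))^2 * (1 + 2 * Hs X)
        = 36 * ((2*K:ℕ):ℝ)^2 * ((1 + Hs (2*K))^2 * (1 + 2 * Hs X)) := by ring
      _ ≤ 36 * (4*N^2) * ((1 + Hs (2*K))^2 * (1 + 2 * Hs X)) := by
          apply mul_le_mul_of_nonneg_right _ h4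
          linarith [h2K]
      _ ≤ 36 * (4*N^2) * (2 * (1 + Hs X)^3) := by
          apply mul_le_mul_of_nonneg_left hcube (by positivity)
  have hterm' : (1 + Hs X)^3 ≤ ((2+12/ε)*8)^3 * N ^ (6*δ) := by
    rw [← hδe, ← hNδ3]
    exact hterm
  have e4 : 36 * (4*N^2) * (2 * (1 + Hs X)^3)
      ≤ 36 * (4*N^2) * (2 * (((2+12/ε)*8)^3 * N ^ (6*δ))) := by
    apply mul_le_mul_of_nonneg_left _ (by positivity)
    linarith
  have e6 : N^2 * N ^ (6*δ) = N ^ (2 + ε/2) := by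
    rw [← Real.rpow_natCast N 2, ← Real.rpow_add hNpos]
    congr 1
    rw [hδ]
    push_cast
    ring
  have e5 : 36 * (4*N^2) * (2 * (((2+12/ε)*8)^3 * N ^ (6*δ)))
      = 147456 * (2+12/ε)^3 * (N^2 * N ^ (6*δ)) := by ring
  calc ∫ x in (0:ℝ)..1, ‖Sθ θ K x‖^4
      ≤ 3 * (max 1 θmin⁻¹) *
        (36 * ((2*K:ℕ):ℝ)^2 * (1 + Hs (2*K))^2 * (1 + 2 * Hs X)) := hM
    _ ≤ 3 * (max 1 θmin⁻¹) * (36 * (4*N^2) * (2 * (((2+12/ε)*8)^3 * N ^ (6*δ)))) := by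
        apply mul_le_mul_of_nonneg_left (le_trans e3 e4) (by positivity)
    _ = 3 * (max 1 θmin⁻¹) * (147456 * (2+12/ε)^3 * (N^2 * N ^ (6*δ))) := by rw [e5]
    _ = (442368 * (max 1 θmin⁻¹) * (2 + 12/ε)^3) * (N^2 * N ^ (6*δ)) := by ring
    _ = (442368 * (max 1 θmin⁻¹) * (2 + 12/ε)^3) * N ^ (2 + ε/2) := by rw [e6]

lemma pointwise_cube {a t : ℝ} (ha : 0 ≤ a) (ht : 0 < t) :
    a^3 ≤ a^4 / t + t^3 := by
  rcases le_or_gt a t with h | h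
  · have h1 : a^3 ≤ t^3 := by
      apply pow_le_pow_left₀ ha h
    have h2 : (0:ℝ) ≤ a^4 / t := by positivity
    linarith
  · have ha0 : 0 < a := lt_trans ht h
    have h1 : a^3 = a^4 / a := by field_simp
    have h2 : a^4 / a ≤ a^4 / t := by
      apply div_le_div_of_nonneg_left (by positivity) ht h.le
    have h3 : (0:ℝ) ≤ t^3 := by positivity
    linarith

set_option maxHeartbeats 1000000 in
/-- d-th moment bound -/
lemma moment_d {θmin θ : ℝ} (d K : ℕ) (hd3 : 3 ≤ d) (hK : 1 ≤ K)
    (h0 : 0 < θmin) (h1 : θmin ≤ θ)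
    {N ε : ℝ} (hN : 1 ≤ N) (hKN : (K:ℝ) ≤ N) (hε : 0 < ε) (hε1 : ε ≤ 1) :
    ∫ x in (0:ℝ)..1, ‖Sθ θ K x‖^d
      ≤ (3:ℝ)^d * ((442368 * (max 1 θmin⁻¹) * (2 + 12/ε)^3) + 1)
          * N ^ ((d:ℝ) - 2*d/(d+1) + ε) := by
  have hNpos : (0:ℝ) < N := by linarith
  have hC4pos : (0:ℝ) < 442368 * (max 1 θmin⁻¹) * (2 + 12/ε)^3 := by positivity
  obtain ⟨C4, hC4⟩ : ∃ C4 : ℝ, C4 = 442368 * (max 1 θmin⁻¹) * (2 + 12/ε)^3 := ⟨_, rfl⟩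
  have hC4p : 0 < C4 := by rw [hC4]; exact hC4pos
  rw [← hC4]
  have hM4 : ∫ x in (0:ℝ)..1, ‖Sθ θ K x‖^4 ≤ C4 * N ^ (2 + ε/2) := by
    rw [hC4]; exact moment4N K hK h0 h1 hN hKN hε hε1
  have h3d : (1:ℝ) ≤ (3:ℝ)^d := one_le_pow₀ (by norm_num)
  have hSint : ∀ m : ℕ, IntervalIntegrable (fun x => ‖Sθ θ K x‖^m)
      MeasureTheory.volume 0 1 := by
    intro m
    apply Continuous.intervalIntegrable
    exact ((S_continuous θ K).norm).pow m
  have hEexp : (d:ℝ) - 2*d/(d+1) + ε = ((d:ℝ) - 2) + (2/(d+1) + ε) := by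
    have hd1 : (0:ℝ) < (d:ℝ) + 1 := by positivity
    field_simp
    ring
  rcases Nat.lt_or_ge d 4 with hd4 | hd4
  · -- d = 3
    have hd : d = 3 := by omega
    subst hd
    obtain ⟨t, htdef⟩ : ∃ t : ℝ, t = N ^ ((1:ℝ)/2) := ⟨_, rfl⟩
    have htpos : 0 < t := by rw [htdef]; positivity
    have ht1 : 1 ≤ t := by rw [htdef]; exact Real.one_le_rpow hN (by norm_num)
    have hpt : ∀ x ∈ Set.Icc (0:ℝ) 1, ‖Sθ θ K x‖^3 ≤ ‖Sθ θ K x‖^4 / t + t^3 :=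
      fun x _ => pointwise_cube (norm_nonneg _) htpos
    have hint : ∫ x in (0:ℝ)..1, ‖Sθ θ K x‖^3
        ≤ ∫ x in (0:ℝ)..1, (‖Sθ θ K x‖^4 / t + t^3) := by
      apply intervalIntegral.integral_mono_on (by norm_num) (hSint 3) _ hpt
      apply IntervalIntegrable.add ((hSint 4).div_const t) intervalIntegrable_const
    have hint2 : ∫ x in (0:ℝ)..1, (‖Sθ θ K x‖^4 / t + t^3)
        = (∫ x in (0:ℝ)..1, ‖Sθ θ K x‖^4) / t + t^3 := by
      rw [intervalIntegral.integral_add ((hSint 4).div_const t) intervalIntegrable_const]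
      rw [intervalIntegral.integral_div, intervalIntegral.integral_const]
      simp
    have hdiv : C4 * N ^ (2 + ε/2) / t = C4 * N ^ ((3:ℝ)/2 + ε/2) := by
      rw [htdef, mul_div_assoc, ← Real.rpow_sub hNpos]
      congr 2
      ring
    have ht3 : t^3 = N ^ ((3:ℝ)/2) := by
      rw [htdef, ← Real.rpow_natCast (N ^ ((1:ℝ)/2)) 3, ← Real.rpow_mul hNpos.le]
      norm_num
    have e1 : (∫ x in (0:ℝ)..1, ‖Sθ θ K x‖^4) / t ≤ C4 * N ^ ((3:ℝ)/2 + ε/2) := by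
      rw [← hdiv]
      gcongr
    have e2 : N ^ ((3:ℝ)/2) ≤ N ^ ((3:ℝ)/2 + ε/2) := by
      apply Real.rpow_le_rpow_of_exponent_le hN
      linarith
    have e3 : N ^ ((3:ℝ)/2 + ε/2) ≤ N ^ ((3:ℝ) - 2*3/(3+1) + ε) := by
      apply Real.rpow_le_rpow_of_exponent_le hN
      norm_num
      linarith
    have hfin : (∫ x in (0:ℝ)..1, ‖Sθ θ K x‖^3)
        ≤ (C4 + 1) * N ^ ((3:ℝ) - 2*3/(3+1) + ε) := by
      have hNE : (0:ℝ) ≤ N ^ ((3:ℝ)/2 + ε/2) := by positivity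
      calc (∫ x in (0:ℝ)..1, ‖Sθ θ K x‖^3)
          ≤ (∫ x in (0:ℝ)..1, ‖Sθ θ K x‖^4) / t + t^3 := by rw [← hint2]; exact hint
        _ ≤ C4 * N ^ ((3:ℝ)/2 + ε/2) + N ^ ((3:ℝ)/2) := by
            rw [ht3]; linarith
        _ ≤ (C4 + 1) * N ^ ((3:ℝ)/2 + ε/2) := by nlinarith
        _ ≤ (C4 + 1) * N ^ ((3:ℝ) - 2*3/(3+1) + ε) := by
            apply mul_le_mul_of_nonneg_left e3 (by positivity)
    calc (∫ x in (0:ℝ)..1, ‖Sθ θ K x‖^3)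
        ≤ (C4 + 1) * N ^ ((3:ℝ) - 2*3/(3+1) + ε) := hfin
      _ ≤ (3:ℝ)^3 * (C4 + 1) * N ^ ((3:ℝ) - 2*3/(3+1) + ε) := by
          have hNE : (0:ℝ) ≤ N ^ ((3:ℝ) - 2*3/(3+1) + ε) := by positivity
          nlinarith
      _ = (3:ℝ)^3 * (C4 + 1) * N ^ (((3:ℕ):ℝ) - 2*((3:ℕ):ℝ)/(((3:ℕ):ℝ)+1) + ε) := by
          norm_num
  · -- d ≥ 4
    have hKN3 : 2*(K:ℝ)+1 ≤ 3*N := by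
      have : (K:ℝ) ≤ N := hKN
      linarith
    have h3N : (0:ℝ) ≤ 3*N := by linarith
    have hpt : ∀ x ∈ Set.Icc (0:ℝ) 1,
        ‖Sθ θ K x‖^d ≤ (3*N)^(d-4) * ‖Sθ θ K x‖^4 := by
      intro x _
      have hd : d = (d-4) + 4 := by omega
      calc ‖Sθ θ K x‖^d = ‖Sθ θ K x‖^(d-4) * ‖Sθ θ K x‖^4 := by
            rw [← pow_add, ← hd]
        _ ≤ (3*N)^(d-4) * ‖Sθ θ K x‖^4 := by
            apply mul_le_mul_of_nonneg_right _ (by positivity)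
            apply pow_le_pow_left₀ (norm_nonneg _)
            exact le_trans (S_norm_le θ K x) hKN3
    have hint : ∫ x in (0:ℝ)..1, ‖Sθ θ K x‖^d
        ≤ (3*N)^(d-4) * ∫ x in (0:ℝ)..1, ‖Sθ θ K x‖^4 := by
      rw [← intervalIntegral.integral_const_mul]
      apply intervalIntegral.integral_mono_on (by norm_num) (hSint d) _ hpt
      exact (hSint 4).const_mul _
    have hM4' : (3*N)^(d-4) * (∫ x in (0:ℝ)..1, ‖Sθ θ K x‖^4)
        ≤ (3*N)^(d-4) * (C4 * N ^ (2 + ε/2)) := by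
      apply mul_le_mul_of_nonneg_left hM4 (by positivity)
    have hsplit : ((3:ℝ)*N)^(d-4) = 3^(d-4) * N^(d-4) := mul_pow 3 N (d-4)
    have hNd4 : (N:ℝ)^(d-4) = N ^ (((d-4:ℕ)):ℝ) := (Real.rpow_natCast N (d-4)).symm
    have hcomb : N ^ (((d-4:ℕ)):ℝ) * N ^ (2 + ε/2) = N ^ (((d-4:ℕ):ℝ) + (2 + ε/2)) :=
      (Real.rpow_add hNpos _ _).symm
    have hcast : ((d-4:ℕ):ℝ) = (d:ℝ) - 4 := by
      have : (4:ℕ) ≤ d := hd4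
      push_cast [Nat.cast_sub this]
      ring
    have hexp : ((d-4:ℕ):ℝ) + (2 + ε/2) ≤ (d:ℝ) - 2*d/(d+1) + ε := by
      rw [hcast]
      have hd1 : (0:ℝ) < (d:ℝ) + 1 := by positivity
      have h2d : 2*(d:ℝ)/((d:ℝ)+1) ≤ 2 := by
        rw [div_le_iff₀ hd1]
        push_cast
        linarith
      linarith
    have hNle : N ^ (((d-4:ℕ):ℝ) + (2 + ε/2)) ≤ N ^ ((d:ℝ) - 2*d/(d+1) + ε) :=
      Real.rpow_le_rpow_of_exponent_le hN hexp
    have h3le : (3:ℝ)^(d-4) ≤ 3^d := by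
      apply pow_le_pow_right₀ (by norm_num) (by omega)
    have hIpos : (0:ℝ) ≤ ∫ x in (0:ℝ)..1, ‖Sθ θ K x‖^4 := by
      apply intervalIntegral.integral_nonneg (by norm_num)
      intro x _; positivity
    calc ∫ x in (0:ℝ)..1, ‖Sθ θ K x‖^d
        ≤ (3*N)^(d-4) * (C4 * N ^ (2 + ε/2)) := le_trans hint hM4'
      _ = 3^(d-4) * C4 * (N ^ (((d-4:ℕ):ℝ) + (2 + ε/2))) := by
          rw [hsplit, hNd4, ← hcomb]; ring
      _ ≤ 3^(d-4) * C4 * (N ^ ((d:ℝ) - 2*d/(d+1) + ε)) := by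
          apply mul_le_mul_of_nonneg_left hNle (by positivity)
      _ ≤ (3:ℝ)^d * ((C4) + 1) * N ^ ((d:ℝ) - 2*d/(d+1) + ε) := by
          have hNE : (0:ℝ) ≤ N ^ ((d:ℝ) - 2*d/(d+1) + ε) := by positivity
          have h34 : (0:ℝ) ≤ (3:ℝ)^(d-4) := by positivity
          have hC41 : C4 ≤ C4 + 1 := by linarith
          have : (3:ℝ)^(d-4) * C4 ≤ 3^d * (C4+1) := by
            apply mul_le_mul h3le hC41 hC4p.le (by positivity)
          apply mul_le_mul_of_nonneg_right this hNE

lemma ce_sum {ι : Type*} (s : Finset ι) (f : ι → ℝ) :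
    ce (∑ j ∈ s, f j) = ∏ j ∈ s, ce (f j) := by
  unfold ce
  rw [Complex.ofReal_sum, Finset.sum_mul, Complex.exp_sum]

lemma prod_le_sum_pow {d : ℕ} (hd : 1 ≤ d) (f : Fin d → ℝ) (hf : ∀ j, 0 ≤ f j) :
    ∏ j, f j ≤ ∑ j, (f j)^d := by
  have hne : (Finset.univ : Finset (Fin d)).Nonempty := by
    refine ⟨⟨0, by omega⟩, Finset.mem_univ _⟩
  obtain ⟨j0, _, hj0⟩ := Finset.exists_max_image Finset.univ f hne
  calc ∏ j, f j ≤ ∏ _j : Fin d, f j0 := by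
        apply Finset.prod_le_prod (fun j _ => hf j) (fun j _ => hj0 j (Finset.mem_univ j))
    _ = f j0 ^ d := by rw [Finset.prod_const, Finset.card_univ, Fintype.card_fin]
    _ ≤ ∑ j, (f j)^d := by
        apply Finset.single_le_sum (fun j _ => pow_nonneg (hf j) d) (Finset.mem_univ j0)

/-- Lemma 3, odd case: the number of lattice points `m ∈ [-N, N]^d` with `|Q(m) - ℓ| ≤ 1`,
where `Q(m) = Σ θ_j m_j²`, is at most `C N^{d - 2d/(d+1) + ε}` for odd `d ≥ 3`. -/
theorem lattice_count_annulus_odd (d : ℕ) (hd3 : 3 ≤ d) (hodd : Odd d) (ε : ℝ) (hε : 0 < ε)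
    (θmin θmax : ℝ) (hθmin : 0 < θmin) (hminmax : θmin ≤ θmax) :
    ∃ C : ℝ, 0 < C ∧
      ∀ (θ : Fin d → ℝ), (∀ j, θmin ≤ θ j ∧ θ j ≤ θmax) →
      ∀ (N : ℝ), 1 ≤ N → ∀ (ℓ : ℝ),
      (Set.ncard {m : Fin d → ℤ |
          (∀ j, |(m j : ℝ)| ≤ N) ∧ |(∑ j, θ j * (m j : ℝ) ^ 2) - ℓ| ≤ 1} : ℝ)
        ≤ C * N ^ ((d : ℝ) - 2 * d / (d + 1) + ε) := by
  classical
  obtain ⟨ε', hε'⟩ : ∃ ε' : ℝ, ε' = min ε 1 := ⟨_, rfl⟩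
  have hε'pos : 0 < ε' := by rw [hε']; exact lt_min hε one_pos
  have hε'1 : ε' ≤ 1 := by rw [hε']; exact min_le_right _ _
  have hε'le : ε' ≤ ε := by rw [hε']; exact min_le_left _ _
  obtain ⟨Cd, hCd⟩ : ∃ Cd : ℝ,
      Cd = (3:ℝ)^d * ((442368 * (max 1 θmin⁻¹) * (2 + 12/ε')^3) + 1) := ⟨_, rfl⟩
  have hCdpos : 0 < Cd := by rw [hCd]; positivity
  refine ⟨2 * d * Cd / Real.cos 1 + 1, ?_, ?_⟩
  · have : (0:ℝ) < 2 * d * Cd / Real.cos 1 := by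
      apply div_pos _ cos_one_pos
      have : (3:ℝ) ≤ (d:ℝ) := by exact_mod_cast hd3
      positivity
    linarith
  intro θ hθ N hN ℓ
  have hNpos : (0:ℝ) < N := by linarith
  -- the box radius
  obtain ⟨K, hK⟩ : ∃ K : ℕ, K = (⌊N⌋).toNat := ⟨_, rfl⟩
  have hfl1 : (1:ℤ) ≤ ⌊N⌋ := by
    rw [Int.le_floor]; exact_mod_cast hN
  have hKZ : (K:ℤ) = ⌊N⌋ := by rw [hK]; exact Int.toNat_of_nonneg (by omega)
  have hK1 : 1 ≤ K := by omega
  have hKN : (K:ℝ) ≤ N := by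
    have h1 : ((K:ℤ):ℝ) ≤ N := by rw [hKZ]; exact Int.floor_le N
    exact_mod_cast h1
  have hKup : ∀ z : ℤ, |(z:ℝ)| ≤ N ↔ (-(K:ℤ) ≤ z ∧ z ≤ K) := by
    intro z
    rw [abs_le]
    constructor
    · rintro ⟨h1, h2⟩
      constructor
      · have : -z ≤ ⌊N⌋ := Int.le_floor.2 (by push_cast; linarith)
        omega
      · have : z ≤ ⌊N⌋ := Int.le_floor.2 h2
        omega
    · rintro ⟨h1, h2⟩
      have e1 : ((-(K:ℤ) : ℤ):ℝ) ≤ (z:ℝ) := by exact_mod_cast h1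
      have e2 : ((z:ℤ):ℝ) ≤ ((K:ℤ):ℝ) := by exact_mod_cast h2
      constructor
      · have : -(K:ℝ) ≥ -N := by linarith
        push_cast at e1
        linarith
      · calc (z:ℝ) ≤ ((K:ℤ):ℝ) := e2
          _ ≤ N := by push_cast; exact hKN
  -- the finite box and filtered set
  obtain ⟨B, hB⟩ : ∃ B : Finset (Fin d → ℤ),
      B = Fintype.piFinset (fun _ : Fin d => Finset.Icc (-(K:ℤ)) K) := ⟨_, rfl⟩
  obtain ⟨F, hF⟩ : ∃ F : Finset (Fin d → ℤ),
      F = B.filter (fun m => |(∑ j, θ j * (m j : ℝ) ^ 2) - ℓ| ≤ 1) := ⟨_, rfl⟩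
  have hset : {m : Fin d → ℤ |
      (∀ j, |(m j : ℝ)| ≤ N) ∧ |(∑ j, θ j * (m j : ℝ) ^ 2) - ℓ| ≤ 1} = ↑F := by
    ext m
    simp only [Set.mem_setOf_eq, hF, hB, Finset.coe_filter, Fintype.mem_piFinset,
      Finset.mem_Icc, Set.mem_setOf_eq]
    constructor
    · rintro ⟨h1, h2⟩
      exact ⟨fun j => (hKup (m j)).1 (h1 j), h2⟩
    · rintro ⟨h1, h2⟩
      exact ⟨fun j => (hKup (m j)).2 (h1 j), h2⟩
  rw [hset, Set.ncard_coe_finset]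
  -- lower bound for the weighted sum
  have hQ : ∀ m ∈ F, Real.cos 1 ≤ wker ((∑ j, θ j * (m j : ℝ) ^ 2) - ℓ) := by
    intro m hm
    rw [hF, Finset.mem_filter] at hm
    exact wker_ge hm.2
  have hlow : Real.cos 1 * (F.card : ℝ) ≤ ∑ m ∈ F, wker ((∑ j, θ j * (m j : ℝ) ^ 2) - ℓ) := by
    calc Real.cos 1 * (F.card : ℝ) = ∑ _m ∈ F, Real.cos 1 := by
          rw [Finset.sum_const, nsmul_eq_mul]; ring
      _ ≤ _ := Finset.sum_le_sum hQ
  have hFB : F ⊆ B := by rw [hF]; exact Finset.filter_subset _ _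
  have hmono1 : ∑ m ∈ F, wker ((∑ j, θ j * (m j : ℝ) ^ 2) - ℓ)
      ≤ ∑ m ∈ B, wker ((∑ j, θ j * (m j : ℝ) ^ 2) - ℓ) :=
    Finset.sum_le_sum_of_subset_of_nonneg hFB (fun m _ _ => wker_nonneg _)
  -- swap sum and integral
  have hswap : ∑ m ∈ B, wker ((∑ j, θ j * (m j : ℝ) ^ 2) - ℓ)
      = 2 * ∫ x in (0:ℝ)..1,
          ∑ m ∈ B, (1-x) * Real.cos (((∑ j, θ j * (m j : ℝ) ^ 2) - ℓ)*x) := by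
    unfold wker
    rw [← Finset.mul_sum]
    congr 1
    rw [← intervalIntegral.integral_finset_sum]
    intro m _
    apply Continuous.intervalIntegrable
    fun_prop
  -- pointwise bound by the product of theta sums
  have hpoint : ∀ x ∈ Set.Icc (0:ℝ) 1,
      ∑ m ∈ B, (1-x) * Real.cos (((∑ j, θ j * (m j : ℝ) ^ 2) - ℓ)*x)
      ≤ ∏ j, ‖Sθ (θ j) K x‖ := by
    intro x hx
    rcases hx with ⟨hx0, hx1⟩
    have hprod : (∑ m ∈ B, ce ((((∑ j, θ j * (m j : ℝ) ^ 2) - ℓ))*x))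
        = ce (-ℓ*x) * ∏ j, Sθ (θ j) K x := by
      have hterm : ∀ m : Fin d → ℤ, ce ((((∑ j, θ j * (m j : ℝ) ^ 2) - ℓ))*x)
          = ce (-ℓ*x) * ∏ j, ce (θ j * ((m j : ℝ))^2 * x) := by
        intro m
        have e1 : (((∑ j, θ j * (m j : ℝ) ^ 2) - ℓ))*x
            = (-ℓ*x) + ∑ j, (θ j * ((m j : ℝ))^2 * x) := by
          rw [← Finset.sum_mul]
          ring
        rw [e1, ce_add, ce_sum]
      rw [Finset.sum_congr rfl (fun m _ => hterm m), ← Finset.mul_sum]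
      congr 1
      rw [hB]
      simp only [Sθ]
      exact (Finset.prod_univ_sum (fun _ : Fin d => Finset.Icc (-(K:ℤ)) K)
        (fun j n => ce (θ j * (n:ℝ)^2 * x))).symm
    have hre : ∑ m ∈ B, (1-x) * Real.cos (((∑ j, θ j * (m j : ℝ) ^ 2) - ℓ)*x)
        = (1-x) * (∑ m ∈ B, ce ((((∑ j, θ j * (m j : ℝ) ^ 2) - ℓ))*x)).re := by
      rw [Complex.re_sum, Finset.mul_sum]
      apply Finset.sum_congr rfl
      intro m _
      rw [ce_re]
    rw [hre, hprod]
    have hnorm : ‖ce (-ℓ*x) * ∏ j, Sθ (θ j) K x‖ = ∏ j, ‖Sθ (θ j) K x‖ := by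
      rw [norm_mul, ce_norm, one_mul, norm_prod]
    have hrele : (ce (-ℓ*x) * ∏ j, Sθ (θ j) K x).re ≤ ∏ j, ‖Sθ (θ j) K x‖ := by
      rw [← hnorm]
      exact Complex.re_le_norm _
    have hprodnn : (0:ℝ) ≤ ∏ j, ‖Sθ (θ j) K x‖ :=
      Finset.prod_nonneg (fun j _ => norm_nonneg _)
    calc (1-x) * (ce (-ℓ*x) * ∏ j, Sθ (θ j) K x).re
        ≤ (1-x) * (∏ j, ‖Sθ (θ j) K x‖) := by
          apply mul_le_mul_of_nonneg_left hrele (by linarith)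
      _ ≤ 1 * (∏ j, ‖Sθ (θ j) K x‖) := by
          apply mul_le_mul_of_nonneg_right (by linarith) hprodnn
      _ = ∏ j, ‖Sθ (θ j) K x‖ := one_mul _
  -- integral bound
  have hSn : ∀ j : Fin d, Continuous (fun x => ‖Sθ (θ j) K x‖) :=
    fun j => (S_continuous (θ j) K).norm
  have hint1 : ∫ x in (0:ℝ)..1,
      ∑ m ∈ B, (1-x) * Real.cos (((∑ j, θ j * (m j : ℝ) ^ 2) - ℓ)*x)
      ≤ ∫ x in (0:ℝ)..1, ∏ j, ‖Sθ (θ j) K x‖ := by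
    apply intervalIntegral.integral_mono_on (by norm_num) _ _ hpoint
    · apply Continuous.intervalIntegrable
      apply continuous_finset_sum
      intro m _
      fun_prop
    · apply Continuous.intervalIntegrable
      apply continuous_finset_prod
      intro j _
      exact hSn j
  have hpoint2 : ∀ x ∈ Set.Icc (0:ℝ) 1,
      ∏ j, ‖Sθ (θ j) K x‖ ≤ ∑ j, ‖Sθ (θ j) K x‖^d := by
    intro x _
    exact prod_le_sum_pow (by omega) _ (fun j => norm_nonneg _)
  have hint2 : ∫ x in (0:ℝ)..1, ∏ j, ‖Sθ (θ j) K x‖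
      ≤ ∫ x in (0:ℝ)..1, ∑ j, ‖Sθ (θ j) K x‖^d := by
    apply intervalIntegral.integral_mono_on (by norm_num) _ _ hpoint2
    · apply Continuous.intervalIntegrable
      apply continuous_finset_prod
      intro j _
      exact hSn j
    · apply Continuous.intervalIntegrable
      apply continuous_finset_sum
      intro j _
      exact (hSn j).pow d
  have hint3 : ∫ x in (0:ℝ)..1, ∑ j, ‖Sθ (θ j) K x‖^d
      = ∑ j, ∫ x in (0:ℝ)..1, ‖Sθ (θ j) K x‖^d := by
    apply intervalIntegral.integral_finset_sum
    intro j _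
    apply Continuous.intervalIntegrable
    exact (hSn j).pow d
  have hmom : ∀ j : Fin d, ∫ x in (0:ℝ)..1, ‖Sθ (θ j) K x‖^d
      ≤ Cd * N ^ ((d:ℝ) - 2*d/(d+1) + ε') := by
    intro j
    rw [hCd]
    exact moment_d d K hd3 hK1 hθmin (hθ j).1 hN hKN hε'pos hε'1
  have hsum : ∑ j, ∫ x in (0:ℝ)..1, ‖Sθ (θ j) K x‖^d
      ≤ (d:ℝ) * (Cd * N ^ ((d:ℝ) - 2*d/(d+1) + ε')) := by
    calc ∑ j, ∫ x in (0:ℝ)..1, ‖Sθ (θ j) K x‖^d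
        ≤ ∑ _j : Fin d, Cd * N ^ ((d:ℝ) - 2*d/(d+1) + ε') :=
          Finset.sum_le_sum (fun j _ => hmom j)
      _ = (d:ℝ) * (Cd * N ^ ((d:ℝ) - 2*d/(d+1) + ε')) := by
          rw [Finset.sum_const, Finset.card_univ, Fintype.card_fin, nsmul_eq_mul]
  -- put everything together
  have hfinal : Real.cos 1 * (F.card : ℝ)
      ≤ 2 * ((d:ℝ) * (Cd * N ^ ((d:ℝ) - 2*d/(d+1) + ε'))) := by
    calc Real.cos 1 * (F.card : ℝ)
        ≤ ∑ m ∈ B, wker ((∑ j, θ j * (m j : ℝ) ^ 2) - ℓ) := le_trans hlow hmono1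
      _ = 2 * ∫ x in (0:ℝ)..1,
            ∑ m ∈ B, (1-x) * Real.cos (((∑ j, θ j * (m j : ℝ) ^ 2) - ℓ)*x) := hswap
      _ ≤ 2 * ((d:ℝ) * (Cd * N ^ ((d:ℝ) - 2*d/(d+1) + ε'))) := by
          have := le_trans hint1 (le_trans hint2 (le_of_eq hint3))
          have h2 := le_trans this hsum
          linarith
  have hrpow_le : N ^ ((d:ℝ) - 2*d/(d+1) + ε') ≤ N ^ ((d:ℝ) - 2*d/(d+1) + ε) :=
    Real.rpow_le_rpow_of_exponent_le hN (by linarith)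
  have hcard : (F.card : ℝ) ≤ (2 * d * Cd / Real.cos 1) * N ^ ((d:ℝ) - 2*d/(d+1) + ε) := by
    rw [div_mul_eq_mul_div, le_div_iff₀ cos_one_pos]
    have hNE' : (0:ℝ) ≤ N ^ ((d:ℝ) - 2*d/(d+1) + ε') := by positivity
    calc (F.card : ℝ) * Real.cos 1 = Real.cos 1 * (F.card : ℝ) := by ring
      _ ≤ 2 * ((d:ℝ) * (Cd * N ^ ((d:ℝ) - 2*d/(d+1) + ε'))) := hfinal
      _ ≤ 2 * ((d:ℝ) * (Cd * N ^ ((d:ℝ) - 2*d/(d+1) + ε))) := by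
          have hd0 : (0:ℝ) ≤ (d:ℝ) := Nat.cast_nonneg d
          have := mul_le_mul_of_nonneg_left hrpow_le hCdpos.le
          nlinarith
      _ = 2 * d * Cd * N ^ ((d:ℝ) - 2*d/(d+1) + ε) := by ring
  have hNF : (0:ℝ) ≤ N ^ ((d:ℝ) - 2*d/(d+1) + ε) := by positivity
  calc (F.card : ℝ) ≤ (2 * d * Cd / Real.cos 1) * N ^ ((d:ℝ) - 2*d/(d+1) + ε) := hcard
    _ ≤ (2 * d * Cd / Real.cos 1 + 1) * N ^ ((d:ℝ) - 2*d/(d+1) + ε) := by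
        apply mul_le_mul_of_nonneg_right _ hNF
        linarith
end
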